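/- arXiv:2104.14620 — 6 statements merged into one kernel-verified Lean document; each statement's English description precedes it below -/
import Mathlib

section
/- Fix (r₁, r₂) ∈ ℝ². For any pair of real-valued random variables (θ¹, θ²) and an i.i.d. sample (θ¹ᵢ, θ²ᵢ), i = 1,…,n, from it, the difference √n · D_c^{(n)}(r₁, r₂) − n^{−1/2} Σ_{i=1}^{n} { cos(r₁θ¹ᵢ + r₂θ²ᵢ) − J_{1c}(r₁)J_{2c}(r₂) + J_{1s}(r₁)J_{2s}(r₂) − J_{2c}(r₂)(cos(r₁θ¹ᵢ) − J_{1c}(r₁)) − J_{1c}(r₁)(cos(r₂θ²ᵢ) − J_{2c}(r₂)) + J_{2s}(r₂)(sin(r₁θ¹ᵢ) − J_{1s}(r₁)) + J_{1s}(r₁)(sin(r₂θ²ᵢ) − J_{2s}(r₂)) } converges to 0 in probability as n → ∞. -/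
open MeasureTheory ProbabilityTheory Filter Real
open scoped NNReal BigOperators Topology

section Aux
variable {Ω : Type*} [MeasurableSpace Ω] {μ : Measure Ω} [IsProbabilityMeasure μ]


lemma integrable_of_bdd {f : Ω → ℝ} {C : ℝ} (hf : Measurable f) (hC : ∀ ω, |f ω| ≤ C) :
    Integrable f μ :=
  (integrable_const C).mono' hf.aestronglyMeasurable
    (Filter.Eventually.of_forall fun ω => by simpa [Real.norm_eq_abs] using hC ω)

lemma abs_integral_le_one {f : Ω → ℝ} (hf : Measurable f) (hC : ∀ ω, |f ω| ≤ 1) :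
    |∫ ω, f ω ∂μ| ≤ 1 := by
  calc |∫ ω, f ω ∂μ| ≤ ∫ ω, |f ω| ∂μ := by
        simpa [Real.norm_eq_abs] using norm_integral_le_integral_norm f (μ := μ)
    _ ≤ ∫ _ω, (1:ℝ) ∂μ := integral_mono ((integrable_of_bdd hf hC).abs)
        (integrable_const 1) (fun ω => hC ω)
    _ = 1 := by simp

lemma moment_bound (X : ℕ → Ω → ℝ) (hmeas : ∀ i, Measurable (X i))
    (hb : ∀ i ω, |X i ω| ≤ 1)
    (hindep : ∀ i j, i ≠ j → IndepFun (X i) (X j) μ)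
    (m : ℝ) (hm : ∀ i, ∫ ω, X i ω ∂μ = m)
    (n : ℕ) (hn : 1 ≤ n) :
    ∫ ω, ((n:ℝ)⁻¹ * ∑ i ∈ Finset.range n, X i ω - m)^2 ∂μ ≤ 4 / n := by
  have hN : (0:ℝ) < n := by exact_mod_cast hn
  have hm1 : |m| ≤ 1 := by rw [← hm 0]; exact abs_integral_le_one (hmeas 0) (hb 0)
  set Y : ℕ → Ω → ℝ := fun i ω => X i ω - m with hY
  have hYmeas : ∀ i, Measurable (Y i) := fun i => (hmeas i).sub measurable_const
  have hYb : ∀ i ω, |Y i ω| ≤ 2 := fun i ω => by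
    have := hb i ω
    calc |X i ω - m| ≤ |X i ω| + |m| := abs_sub _ _
      _ ≤ 2 := by linarith
  have hYint : ∀ i, Integrable (Y i) μ := fun i => integrable_of_bdd (hYmeas i) (hYb i)
  have hYmean : ∀ i, ∫ ω, Y i ω ∂μ = 0 := fun i => by
    rw [hY]
    simp only
    rw [integral_sub (integrable_of_bdd (hmeas i) (hb i)) (integrable_const m)]
    simp [hm i]
  have hprodint : ∀ i j, Integrable (fun ω => Y i ω * Y j ω) μ := fun i j =>
    integrable_of_bdd ((hYmeas i).mul (hYmeas j)) (fun ω => by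
      rw [abs_mul]
      calc |Y i ω| * |Y j ω| ≤ 2 * 2 :=
        mul_le_mul (hYb i ω) (hYb j ω) (abs_nonneg _) (by norm_num)
        _ = 4 := by norm_num)
  have hprod : ∀ i j, i ≠ j → ∫ ω, Y i ω * Y j ω ∂μ = 0 := fun i j hij => by
    have hind : IndepFun (Y i) (Y j) μ :=
      (hindep i j hij).comp (measurable_id.sub_const m) (measurable_id.sub_const m)
    have := hind.integral_mul_eq_mul_integral (hYmeas i).aestronglyMeasurable (hYmeas j).aestronglyMeasurable
    simp only [Pi.mul_apply] at this ⊢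
    rw [show (fun ω => Y i ω * Y j ω) = fun ω => (Y i * Y j) ω from rfl]
    simp only [Pi.mul_apply]
    rw [this,
      hYmean i, hYmean j, mul_zero]
  have hsq : ∀ i, ∫ ω, Y i ω * Y i ω ∂μ ≤ 4 := fun i => by
    calc ∫ ω, Y i ω * Y i ω ∂μ ≤ ∫ _ω, (4:ℝ) ∂μ := integral_mono (hprodint i i)
          (integrable_const 4) (fun ω => by nlinarith [hYb i ω, abs_nonneg (Y i ω), sq_abs (Y i ω)])
      _ = 4 := by simp
  have key : ∀ ω, ((n:ℝ)⁻¹ * ∑ i ∈ Finset.range n, X i ω - m)^2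
      = ((n:ℝ)⁻¹)^2 * (∑ i ∈ Finset.range n, Y i ω)^2 := fun ω => by
    have hsum : ∑ i ∈ Finset.range n, Y i ω
        = (∑ i ∈ Finset.range n, X i ω) - n * m := by
      simp [hY, Finset.sum_sub_distrib, Finset.card_range]
    rw [hsum]
    field_simp
  have hexp : ∫ ω, (∑ i ∈ Finset.range n, Y i ω)^2 ∂μ ≤ 4 * n := by
    have hptw : ∀ ω, (∑ i ∈ Finset.range n, Y i ω)^2
        = ∑ i ∈ Finset.range n, ∑ j ∈ Finset.range n, Y i ω * Y j ω := fun ω => by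
      rw [sq, Finset.sum_mul_sum]
    calc ∫ ω, (∑ i ∈ Finset.range n, Y i ω)^2 ∂μ
        = ∫ ω, ∑ i ∈ Finset.range n, ∑ j ∈ Finset.range n, Y i ω * Y j ω ∂μ := by
          exact integral_congr_ae (Filter.Eventually.of_forall hptw)
      _ = ∑ i ∈ Finset.range n, ∑ j ∈ Finset.range n, ∫ ω, Y i ω * Y j ω ∂μ := by
          rw [integral_finset_sum _ (fun i _ => integrable_finset_sum _ (fun j _ => hprodint i j))]
          exact Finset.sum_congr rfl fun i _ =>
            integral_finset_sum _ (fun j _ => hprodint i j)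
      _ = ∑ i ∈ Finset.range n, ∫ ω, Y i ω * Y i ω ∂μ := by
          refine Finset.sum_congr rfl fun i hi => ?_
          exact Finset.sum_eq_single_of_mem i hi (fun j _ hj => hprod i j (Ne.symm hj))
      _ ≤ ∑ _i ∈ Finset.range n, (4:ℝ) := Finset.sum_le_sum fun i _ => hsq i
      _ = 4 * n := by simp [mul_comm]
  calc ∫ ω, ((n:ℝ)⁻¹ * ∑ i ∈ Finset.range n, X i ω - m)^2 ∂μ
      = ((n:ℝ)⁻¹)^2 * ∫ ω, (∑ i ∈ Finset.range n, Y i ω)^2 ∂μ := by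
        rw [← integral_const_mul]
        exact integral_congr_ae (Filter.Eventually.of_forall key)
    _ ≤ ((n:ℝ)⁻¹)^2 * (4 * n) := by
        apply mul_le_mul_of_nonneg_left hexp (by positivity)
    _ = 4 / n := by field_simp



lemma avg_sub_abs_le (X : ℕ → Ω → ℝ) (hb : ∀ i ω, |X i ω| ≤ 1) {m : ℝ} (hm : |m| ≤ 1)
    (n : ℕ) (ω : Ω) : |(n:ℝ)⁻¹ * ∑ i ∈ Finset.range n, X i ω - m| ≤ 2 := by
  have h1 : |(n:ℝ)⁻¹ * ∑ i ∈ Finset.range n, X i ω| ≤ 1 := by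
    rw [abs_mul, abs_inv, Nat.abs_cast]
    have hsum : |∑ i ∈ Finset.range n, X i ω| ≤ n := by
      calc |∑ i ∈ Finset.range n, X i ω| ≤ ∑ i ∈ Finset.range n, |X i ω| :=
            Finset.abs_sum_le_sum_abs _ _
        _ ≤ ∑ _i ∈ Finset.range n, (1:ℝ) := Finset.sum_le_sum fun i _ => hb i ω
        _ = n := by simp
    rcases Nat.eq_zero_or_pos n with h | h
    · simp [h]
    · have hN : (0:ℝ) < n := by exact_mod_cast h
      calc (n:ℝ)⁻¹ * |∑ i ∈ Finset.range n, X i ω| ≤ (n:ℝ)⁻¹ * n := by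
            apply mul_le_mul_of_nonneg_left hsum (by positivity)
        _ = 1 := by field_simp
  calc |(n:ℝ)⁻¹ * ∑ i ∈ Finset.range n, X i ω - m|
      ≤ |(n:ℝ)⁻¹ * ∑ i ∈ Finset.range n, X i ω| + |m| := abs_sub _ _
    _ ≤ 2 := by linarith

lemma abs_mul_le_half_sq (p q : ℝ) : |p * q| ≤ (p^2 + q^2)/2 := by
  rw [abs_mul]
  nlinarith [sq_nonneg (|p| - |q|), sq_abs p, sq_abs q]

lemma sq_le_four {p : ℝ} (h : |p| ≤ 2) : p^2 ≤ 4 := by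
  nlinarith [abs_nonneg p, sq_abs p]



lemma lin_term_tendsto (XA XB XS XT : ℕ → Ω → ℝ)
    (hmA : ∀ i, Measurable (XA i)) (hmB : ∀ i, Measurable (XB i))
    (hmS : ∀ i, Measurable (XS i)) (hmT : ∀ i, Measurable (XT i))
    (hbA : ∀ i ω, |XA i ω| ≤ 1) (hbB : ∀ i ω, |XB i ω| ≤ 1)
    (hbS : ∀ i ω, |XS i ω| ≤ 1) (hbT : ∀ i ω, |XT i ω| ≤ 1)
    (hiA : ∀ i j, i ≠ j → IndepFun (XA i) (XA j) μ)
    (hiB : ∀ i j, i ≠ j → IndepFun (XB i) (XB j) μ)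
    (hiS : ∀ i j, i ≠ j → IndepFun (XS i) (XS j) μ)
    (hiT : ∀ i j, i ≠ j → IndepFun (XT i) (XT j) μ)
    (cA cB sA sB : ℝ)
    (hcA : ∀ i, ∫ ω, XA i ω ∂μ = cA) (hcB : ∀ i, ∫ ω, XB i ω ∂μ = cB)
    (hsA : ∀ i, ∫ ω, XS i ω ∂μ = sA) (hsB : ∀ i, ∫ ω, XT i ω ∂μ = sB) :
    TendstoInMeasure μ
      (fun (n : ℕ) ω => Real.sqrt n *
        (-(((n:ℝ)⁻¹ * ∑ i ∈ Finset.range n, XA i ω - cA)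
            * ((n:ℝ)⁻¹ * ∑ i ∈ Finset.range n, XB i ω - cB))
          + ((n:ℝ)⁻¹ * ∑ i ∈ Finset.range n, XS i ω - sA)
            * ((n:ℝ)⁻¹ * ∑ i ∈ Finset.range n, XT i ω - sB)))
      atTop (fun _ => (0 : ℝ)) := by
  have hcA1 : |cA| ≤ 1 := by rw [← hcA 0]; exact abs_integral_le_one (hmA 0) (hbA 0)
  have hcB1 : |cB| ≤ 1 := by rw [← hcB 0]; exact abs_integral_le_one (hmB 0) (hbB 0)
  have hsA1 : |sA| ≤ 1 := by rw [← hsA 0]; exact abs_integral_le_one (hmS 0) (hbS 0)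
  have hsB1 : |sB| ≤ 1 := by rw [← hsB 0]; exact abs_integral_le_one (hmT 0) (hbT 0)
  set P : ℕ → Ω → ℝ := fun n ω => (n:ℝ)⁻¹ * ∑ i ∈ Finset.range n, XA i ω - cA with hPdef
  set Q : ℕ → Ω → ℝ := fun n ω => (n:ℝ)⁻¹ * ∑ i ∈ Finset.range n, XB i ω - cB with hQdef
  set U : ℕ → Ω → ℝ := fun n ω => (n:ℝ)⁻¹ * ∑ i ∈ Finset.range n, XS i ω - sA with hUdef
  set V : ℕ → Ω → ℝ := fun n ω => (n:ℝ)⁻¹ * ∑ i ∈ Finset.range n, XT i ω - sB with hVdef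
  have hPm : ∀ n, Measurable (P n) := fun n =>
    ((Finset.measurable_sum _ fun i _ => hmA i).const_mul _).sub_const _
  have hQm : ∀ n, Measurable (Q n) := fun n =>
    ((Finset.measurable_sum _ fun i _ => hmB i).const_mul _).sub_const _
  have hUm : ∀ n, Measurable (U n) := fun n =>
    ((Finset.measurable_sum _ fun i _ => hmS i).const_mul _).sub_const _
  have hVm : ∀ n, Measurable (V n) := fun n =>
    ((Finset.measurable_sum _ fun i _ => hmT i).const_mul _).sub_const _
  have hPb : ∀ n ω, |P n ω| ≤ 2 := fun n ω => avg_sub_abs_le XA hbA hcA1 n ω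
  have hQb : ∀ n ω, |Q n ω| ≤ 2 := fun n ω => avg_sub_abs_le XB hbB hcB1 n ω
  have hUb : ∀ n ω, |U n ω| ≤ 2 := fun n ω => avg_sub_abs_le XS hbS hsA1 n ω
  have hVb : ∀ n ω, |V n ω| ≤ 2 := fun n ω => avg_sub_abs_le XT hbT hsB1 n ω
  have hgm : ∀ n : ℕ, Measurable (fun ω =>
      Real.sqrt n * (-(P n ω * Q n ω) + U n ω * V n ω)) := fun n =>
    ((((hPm n).mul (hQm n)).neg.add ((hUm n).mul (hVm n))).const_mul _)
  -- squares are integrable with integral ≤ 4 / n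
  have hsqint : ∀ (W : ℕ → Ω → ℝ), (∀ n, Measurable (W n)) → (∀ n ω, |W n ω| ≤ 2) →
      ∀ n, Integrable (fun ω => W n ω ^ 2) μ := fun W hWm hWb n =>
    integrable_of_bdd (C := 4) ((hWm n).pow_const 2) (fun ω => by
      rw [abs_of_nonneg (sq_nonneg _)]
      exact sq_le_four (hWb n ω))
  have hP2 : ∀ n, 1 ≤ n → ∫ ω, P n ω ^ 2 ∂μ ≤ 4 / n := fun n hn =>
    moment_bound XA hmA hbA hiA cA hcA n hn
  have hQ2 : ∀ n, 1 ≤ n → ∫ ω, Q n ω ^ 2 ∂μ ≤ 4 / n := fun n hn =>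
    moment_bound XB hmB hbB hiB cB hcB n hn
  have hU2 : ∀ n, 1 ≤ n → ∫ ω, U n ω ^ 2 ∂μ ≤ 4 / n := fun n hn =>
    moment_bound XS hmS hbS hiS sA hsA n hn
  have hV2 : ∀ n, 1 ≤ n → ∫ ω, V n ω ^ 2 ∂μ ≤ 4 / n := fun n hn =>
    moment_bound XT hmT hbT hiT sB hsB n hn
  -- the eLpNorm bound
  have hbound : ∀ n : ℕ, 1 ≤ n →
      eLpNorm (fun ω => Real.sqrt n * (-(P n ω * Q n ω) + U n ω * V n ω)) 1 μ
        ≤ ENNReal.ofReal (8 / Real.sqrt n) := by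
    intro n hn
    have hN : (0:ℝ) < n := by exact_mod_cast hn
    have hs : Real.sqrt n * Real.sqrt n = (n:ℝ) := Real.mul_self_sqrt (by positivity)
    have hs0 : (0:ℝ) < Real.sqrt n := Real.sqrt_pos.mpr hN
    set H : Ω → ℝ := fun ω =>
      Real.sqrt n / 2 * (P n ω ^ 2 + Q n ω ^ 2 + U n ω ^ 2 + V n ω ^ 2) with hHdef
    have hHm : Measurable H := by
      apply Measurable.const_mul
      exact ((((hPm n).pow_const 2).add ((hQm n).pow_const 2)).add
        ((hUm n).pow_const 2)).add ((hVm n).pow_const 2)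
    have hHb : ∀ ω, |H ω| ≤ Real.sqrt n / 2 * 16 := fun ω => by
      simp only [hHdef]
      rw [abs_mul, abs_of_nonneg (by positivity : (0:ℝ) ≤ Real.sqrt n / 2)]
      apply mul_le_mul_of_nonneg_left _ (by positivity)
      rw [abs_of_nonneg (by positivity)]
      linarith [sq_le_four (hPb n ω), sq_le_four (hQb n ω), sq_le_four (hUb n ω),
        sq_le_four (hVb n ω)]
    have hHint : Integrable H μ := integrable_of_bdd hHm hHb
    have hHnn : ∀ ω, 0 ≤ H ω := fun ω => by simp only [hHdef]; positivity
    have habs : ∀ ω, |Real.sqrt n * (-(P n ω * Q n ω) + U n ω * V n ω)| ≤ H ω := fun ω => by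
      rw [abs_mul, abs_of_nonneg (Real.sqrt_nonneg _)]
      have h1 : |(-(P n ω * Q n ω) + U n ω * V n ω)|
          ≤ (P n ω ^ 2 + Q n ω ^ 2) / 2 + (U n ω ^ 2 + V n ω ^ 2) / 2 := by
        calc |(-(P n ω * Q n ω) + U n ω * V n ω)|
            ≤ |(-(P n ω * Q n ω))| + |U n ω * V n ω| := abs_add_le _ _
          _ = |P n ω * Q n ω| + |U n ω * V n ω| := by rw [abs_neg]
          _ ≤ (P n ω ^ 2 + Q n ω ^ 2) / 2 + (U n ω ^ 2 + V n ω ^ 2) / 2 := by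
              exact add_le_add (abs_mul_le_half_sq _ _) (abs_mul_le_half_sq _ _)
      calc Real.sqrt n * |(-(P n ω * Q n ω) + U n ω * V n ω)|
          ≤ Real.sqrt n * ((P n ω ^ 2 + Q n ω ^ 2) / 2 + (U n ω ^ 2 + V n ω ^ 2) / 2) :=
            mul_le_mul_of_nonneg_left h1 (Real.sqrt_nonneg _)
        _ = H ω := by simp only [hHdef]; ring
    have hIH : ∫ ω, H ω ∂μ ≤ 8 / Real.sqrt n := by
      have hsum : ∫ ω, (P n ω ^ 2 + Q n ω ^ 2 + U n ω ^ 2 + V n ω ^ 2) ∂μ ≤ 16 / n := by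
        have iP := hsqint P hPm hPb n
        have iQ := hsqint Q hQm hQb n
        have iU := hsqint U hUm hUb n
        have iV := hsqint V hVm hVb n
        have iPQ : Integrable (fun ω => P n ω ^ 2 + Q n ω ^ 2) μ := iP.add iQ
        have iPQU : Integrable (fun ω => P n ω ^ 2 + Q n ω ^ 2 + U n ω ^ 2) μ := iPQ.add iU
        rw [integral_add iPQU iV, integral_add iPQ iU, integral_add iP iQ]
        have := hP2 n hn; have := hQ2 n hn; have := hU2 n hn; have := hV2 n hn
        have h16 : (16:ℝ) / n = 4/n + 4/n + 4/n + 4/n := by ring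
        linarith
      have heq : Real.sqrt n / 2 * (16 / n) = 8 / Real.sqrt n := by
        field_simp
        nlinarith [hs]
      calc ∫ ω, H ω ∂μ
          = Real.sqrt n / 2 * ∫ ω, (P n ω ^ 2 + Q n ω ^ 2 + U n ω ^ 2 + V n ω ^ 2) ∂μ := by
            rw [← integral_const_mul]
        _ ≤ Real.sqrt n / 2 * (16 / n) := mul_le_mul_of_nonneg_left hsum (by positivity)
        _ = 8 / Real.sqrt n := heq
    calc eLpNorm (fun ω => Real.sqrt n * (-(P n ω * Q n ω) + U n ω * V n ω)) 1 μ
        = ∫⁻ ω, ‖Real.sqrt n * (-(P n ω * Q n ω) + U n ω * V n ω)‖ₑ ∂μ :=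
          eLpNorm_one_eq_lintegral_enorm
      _ ≤ ∫⁻ ω, ENNReal.ofReal (H ω) ∂μ := lintegral_mono fun ω => by
          rw [← ofReal_norm]
          exact ENNReal.ofReal_le_ofReal (by rw [Real.norm_eq_abs]; exact habs ω)
      _ = ENNReal.ofReal (∫ ω, H ω ∂μ) :=
          (ofReal_integral_eq_lintegral_ofReal hHint
            (Filter.Eventually.of_forall hHnn)).symm
      _ ≤ ENNReal.ofReal (8 / Real.sqrt n) := ENNReal.ofReal_le_ofReal hIH
  -- sqrt tends to atTop
  have hsqrt_atTop : Tendsto (fun n : ℕ => Real.sqrt n) atTop atTop := by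
    apply tendsto_atTop_atTop.mpr
    intro b
    refine ⟨⌈b^2⌉₊, fun n hn => ?_⟩
    have h1 : (b^2 : ℝ) ≤ n := le_trans (Nat.le_ceil _) (by exact_mod_cast hn)
    calc b ≤ |b| := le_abs_self b
      _ = Real.sqrt (b^2) := (Real.sqrt_sq_eq_abs b).symm
      _ ≤ Real.sqrt n := Real.sqrt_le_sqrt h1
  have hup : Tendsto (fun n : ℕ => ENNReal.ofReal (8 / Real.sqrt n)) atTop (𝓝 0) := by
    rw [← ENNReal.ofReal_zero]
    exact ENNReal.tendsto_ofReal (Tendsto.div_atTop tendsto_const_nhds hsqrt_atTop)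
  apply tendstoInMeasure_of_tendsto_eLpNorm (p := 1) one_ne_zero
    (fun n => (hgm n).aestronglyMeasurable) aestronglyMeasurable_const
  have heq : (fun n : ℕ => eLpNorm
      ((fun ω => Real.sqrt n * (-(P n ω * Q n ω) + U n ω * V n ω)) - fun _ => (0:ℝ)) 1 μ)
      = fun n : ℕ => eLpNorm (fun ω => Real.sqrt n * (-(P n ω * Q n ω) + U n ω * V n ω)) 1 μ := by
    funext n
    congr 1
    funext ω
    simp
  rw [heq]
  refine tendsto_of_tendsto_of_tendsto_of_le_of_le' tendsto_const_nhds hup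
    (Filter.Eventually.of_forall fun n => zero_le) ?_
  exact Filter.eventually_atTop.mpr ⟨1, hbound⟩

end Aux

/-- The cosine statistic `D_c^{(n)}(r₁,r₂)` computed from the sample `(a i, b i)`, `i < n`. -/
noncomputable def Dc (r1 r2 : ℝ) (n : ℕ) (a b : ℕ → ℝ) : ℝ :=
  (n : ℝ)⁻¹ * ∑ i ∈ Finset.range n, Real.cos (r1 * a i + r2 * b i)
    - ((n : ℝ)⁻¹ * ∑ i ∈ Finset.range n, Real.cos (r1 * a i))
        * ((n : ℝ)⁻¹ * ∑ i ∈ Finset.range n, Real.cos (r2 * b i))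
    + ((n : ℝ)⁻¹ * ∑ i ∈ Finset.range n, Real.sin (r1 * a i))
        * ((n : ℝ)⁻¹ * ∑ i ∈ Finset.range n, Real.sin (r2 * b i))

/-- Asymptotic linearisation of `√n · D_c^{(n)}(r₁,r₂)`: its difference with the normalized
sum of centred influence functions tends to `0` in probability. -/
theorem Dc_asymptotic_linearisation
    {Ω : Type*} [MeasurableSpace Ω] (μ : Measure Ω) [IsProbabilityMeasure μ]
    (θ1 θ2 : Ω → ℝ) (hθ1 : Measurable θ1) (hθ2 : Measurable θ2)
    (Θ : ℕ → Ω → ℝ × ℝ) (hΘmeas : ∀ i, Measurable (Θ i))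
    (hiid : iIndepFun Θ μ)
    (hident : ∀ i, IdentDistrib (Θ i) (fun ω => (θ1 ω, θ2 ω)) μ μ)
    (r1 r2 : ℝ) :
    TendstoInMeasure μ
      (fun (n : ℕ) ω =>
        Real.sqrt n * Dc r1 r2 n (fun i => (Θ i ω).1) (fun i => (Θ i ω).2)
          - (Real.sqrt n)⁻¹ * ∑ i ∈ Finset.range n,
              (Real.cos (r1 * (Θ i ω).1 + r2 * (Θ i ω).2)
                - (∫ ω', Real.cos (r1 * θ1 ω') ∂μ) * (∫ ω', Real.cos (r2 * θ2 ω') ∂μ)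
                + (∫ ω', Real.sin (r1 * θ1 ω') ∂μ) * (∫ ω', Real.sin (r2 * θ2 ω') ∂μ)
                - (∫ ω', Real.cos (r2 * θ2 ω') ∂μ)
                    * (Real.cos (r1 * (Θ i ω).1) - ∫ ω', Real.cos (r1 * θ1 ω') ∂μ)
                - (∫ ω', Real.cos (r1 * θ1 ω') ∂μ)
                    * (Real.cos (r2 * (Θ i ω).2) - ∫ ω', Real.cos (r2 * θ2 ω') ∂μ)
                + (∫ ω', Real.sin (r2 * θ2 ω') ∂μ)
                    * (Real.sin (r1 * (Θ i ω).1) - ∫ ω', Real.sin (r1 * θ1 ω') ∂μ)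
                + (∫ ω', Real.sin (r1 * θ1 ω') ∂μ)
                    * (Real.sin (r2 * (Θ i ω).2) - ∫ ω', Real.sin (r2 * θ2 ω') ∂μ)))
      atTop (fun _ => (0 : ℝ)) := by
  set cA := ∫ ω', Real.cos (r1 * θ1 ω') ∂μ with hcAdef
  set cB := ∫ ω', Real.cos (r2 * θ2 ω') ∂μ with hcBdef
  set sA := ∫ ω', Real.sin (r1 * θ1 ω') ∂μ with hsAdef
  set sB := ∫ ω', Real.sin (r2 * θ2 ω') ∂μ with hsBdef
  have hφA : Measurable (fun p : ℝ × ℝ => Real.cos (r1 * p.1)) :=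
    Real.measurable_cos.comp (measurable_const.mul measurable_fst)
  have hφB : Measurable (fun p : ℝ × ℝ => Real.cos (r2 * p.2)) :=
    Real.measurable_cos.comp (measurable_const.mul measurable_snd)
  have hφS : Measurable (fun p : ℝ × ℝ => Real.sin (r1 * p.1)) :=
    Real.measurable_sin.comp (measurable_const.mul measurable_fst)
  have hφT : Measurable (fun p : ℝ × ℝ => Real.sin (r2 * p.2)) :=
    Real.measurable_sin.comp (measurable_const.mul measurable_snd)
  have hcA : ∀ i, ∫ ω, Real.cos (r1 * (Θ i ω).1) ∂μ = cA := fun i => by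
    rw [hcAdef]
    simpa [Function.comp] using ((hident i).comp hφA).integral_eq
  have hcB : ∀ i, ∫ ω, Real.cos (r2 * (Θ i ω).2) ∂μ = cB := fun i => by
    rw [hcBdef]
    simpa [Function.comp] using ((hident i).comp hφB).integral_eq
  have hsA' : ∀ i, ∫ ω, Real.sin (r1 * (Θ i ω).1) ∂μ = sA := fun i => by
    rw [hsAdef]
    simpa [Function.comp] using ((hident i).comp hφS).integral_eq
  have hsB' : ∀ i, ∫ ω, Real.sin (r2 * (Θ i ω).2) ∂μ = sB := fun i => by
    rw [hsBdef]
    simpa [Function.comp] using ((hident i).comp hφT).integral_eq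
  have hlin := lin_term_tendsto (μ := μ)
    (fun i ω => Real.cos (r1 * (Θ i ω).1)) (fun i ω => Real.cos (r2 * (Θ i ω).2))
    (fun i ω => Real.sin (r1 * (Θ i ω).1)) (fun i ω => Real.sin (r2 * (Θ i ω).2))
    (fun i => hφA.comp (hΘmeas i)) (fun i => hφB.comp (hΘmeas i))
    (fun i => hφS.comp (hΘmeas i)) (fun i => hφT.comp (hΘmeas i))
    (fun i ω => Real.abs_cos_le_one _) (fun i ω => Real.abs_cos_le_one _)
    (fun i ω => Real.abs_sin_le_one _) (fun i ω => Real.abs_sin_le_one _)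
    (fun i j hij => (hiid.indepFun hij).comp hφA hφA)
    (fun i j hij => (hiid.indepFun hij).comp hφB hφB)
    (fun i j hij => (hiid.indepFun hij).comp hφS hφS)
    (fun i j hij => (hiid.indepFun hij).comp hφT hφT)
    cA cB sA sB hcA hcB hsA' hsB'
  have hfg : ∀ (n : ℕ) (ω : Ω),
      Real.sqrt n * (-(((n:ℝ)⁻¹ * ∑ i ∈ Finset.range n, Real.cos (r1 * (Θ i ω).1) - cA)
          * ((n:ℝ)⁻¹ * ∑ i ∈ Finset.range n, Real.cos (r2 * (Θ i ω).2) - cB))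
        + ((n:ℝ)⁻¹ * ∑ i ∈ Finset.range n, Real.sin (r1 * (Θ i ω).1) - sA)
          * ((n:ℝ)⁻¹ * ∑ i ∈ Finset.range n, Real.sin (r2 * (Θ i ω).2) - sB))
      = Real.sqrt n * Dc r1 r2 n (fun i => (Θ i ω).1) (fun i => (Θ i ω).2)
          - (Real.sqrt n)⁻¹ * ∑ i ∈ Finset.range n,
              (Real.cos (r1 * (Θ i ω).1 + r2 * (Θ i ω).2)
                - cA * cB + sA * sB
                - cB * (Real.cos (r1 * (Θ i ω).1) - cA)
                - cA * (Real.cos (r2 * (Θ i ω).2) - cB)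
                + sB * (Real.sin (r1 * (Θ i ω).1) - sA)
                + sA * (Real.sin (r2 * (Θ i ω).2) - sB)) := by
    intro n ω
    simp only [Dc]
    rcases Nat.eq_zero_or_pos n with h | h
    · subst h; simp
    · have hN : (0:ℝ) < n := by exact_mod_cast h
      have hs : Real.sqrt n * Real.sqrt n = (n:ℝ) := Real.mul_self_sqrt (by positivity)
      have hs0 : Real.sqrt (n:ℝ) ≠ 0 := (Real.sqrt_pos.mpr hN).ne'
      have hsummand : ∀ i : ℕ,
          (Real.cos (r1 * (Θ i ω).1 + r2 * (Θ i ω).2)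
            - cA * cB + sA * sB
            - cB * (Real.cos (r1 * (Θ i ω).1) - cA)
            - cA * (Real.cos (r2 * (Θ i ω).2) - cB)
            + sB * (Real.sin (r1 * (Θ i ω).1) - sA)
            + sA * (Real.sin (r2 * (Θ i ω).2) - sB))
          = Real.cos (r1 * (Θ i ω).1 + r2 * (Θ i ω).2)
            - cB * Real.cos (r1 * (Θ i ω).1) - cA * Real.cos (r2 * (Θ i ω).2)
            + sB * Real.sin (r1 * (Θ i ω).1) + sA * Real.sin (r2 * (Θ i ω).2)
            + (cA * cB - sA * sB) := fun i => by ring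
      rw [Finset.sum_congr rfl (fun i _ => hsummand i)]
      simp only [Finset.sum_add_distrib, Finset.sum_sub_distrib, ← Finset.mul_sum,
        Finset.sum_const, Finset.card_range, nsmul_eq_mul]
      set s := Real.sqrt (n:ℝ) with hsdef
      rw [show ((n:ℕ):ℝ) = s * s from hs.symm]
      field_simp
      ring
  exact TendstoInMeasure.congr_left
    (fun n => Filter.Eventually.of_forall fun ω => hfg n ω) hlin
end

section
/- Suppose θ¹ and θ² are independent and E[sin(zθ¹)] = 0 and E[sin(zθ²)] = 0 for every integer z (reflectively symmetric marginals). Define the efficient central sequence Δ_eff^{(n)} := n^{−1/2} Σ_{i=1}^{n} { cos(θ¹ᵢ − θ²ᵢ) − J_{1c}(1)J_{2c}(1) − J_{2c}(1)(cos(θ¹ᵢ) − J_{1c}(1)) − J_{1c}(1)(cos(θ²ᵢ) − J_{2c}(1)) }. Then √n · D_c^{(n)}(1, −1) − Δ_eff^{(n)} converges to 0 in probability as n → ∞. -/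
open MeasureTheory ProbabilityTheory Filter Real
open scoped NNReal BigOperators Topology

lemma Dc_identity (n : ℕ) (hn : 0 < n) (a b : ℕ → ℝ) (p q : ℝ) :
    Real.sqrt n * Dc 1 (-1) n a b
      - (Real.sqrt n)⁻¹ * ∑ i ∈ Finset.range n,
          (Real.cos (a i - b i) - p * q - q * (Real.cos (a i) - p)
            - p * (Real.cos (b i) - q))
    = -(Real.sqrt n * (((n : ℝ)⁻¹ * (∑ i ∈ Finset.range n, Real.cos (a i)) - p)
            * ((n : ℝ)⁻¹ * (∑ i ∈ Finset.range n, Real.cos (b i)) - q))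
        + Real.sqrt n * (((n : ℝ)⁻¹ * (∑ i ∈ Finset.range n, Real.sin (a i)))
            * ((n : ℝ)⁻¹ * (∑ i ∈ Finset.range n, Real.sin (b i))))) := by
  have hnR : (0:ℝ) < n := by exact_mod_cast hn
  have hs0 : (0:ℝ) < Real.sqrt n := Real.sqrt_pos.mpr hnR
  have hss : Real.sqrt n * Real.sqrt n = n := Real.mul_self_sqrt (le_of_lt hnR)
  have hsinv : (Real.sqrt n)⁻¹ = Real.sqrt n * (n:ℝ)⁻¹ := by
    rw [← hss]
    field_simp
    rw [Real.sqrt_sq hs0.le]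
  have hsum : ∑ i ∈ Finset.range n,
      (Real.cos (a i - b i) - p * q - q * (Real.cos (a i) - p)
        - p * (Real.cos (b i) - q))
      = (∑ i ∈ Finset.range n, Real.cos (a i - b i))
        + (-q) * (∑ i ∈ Finset.range n, Real.cos (a i))
        + ((-p) * (∑ i ∈ Finset.range n, Real.cos (b i)) + (n : ℝ) * (p * q)) := by
    have h : ∀ i ∈ Finset.range n,
        Real.cos (a i - b i) - p * q - q * (Real.cos (a i) - p)
          - p * (Real.cos (b i) - q)
        = Real.cos (a i - b i) + (-q) * Real.cos (a i)
            + ((-p) * Real.cos (b i) + p * q) := fun i _ => by ring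
    rw [Finset.sum_congr rfl h, Finset.sum_add_distrib, Finset.sum_add_distrib,
      Finset.sum_add_distrib, ← Finset.mul_sum, ← Finset.mul_sum, Finset.sum_const,
      Finset.card_range, nsmul_eq_mul]
  simp only [Dc, one_mul, neg_one_mul, ← sub_eq_add_neg, Real.cos_neg, Real.sin_neg,
    Finset.sum_neg_distrib]
  rw [hsinv, hsum]
  field_simp
  ring

lemma cheb_sum {Ω : Type*} [MeasurableSpace Ω] (μ : Measure Ω) [IsProbabilityMeasure μ]
    (W : ℕ → Ω → ℝ) (hmeas : ∀ i, Measurable (W i)) (hbdd : ∀ i ω, |W i ω| ≤ 1)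
    (hindep : iIndepFun W μ)
    (m : ℝ) (hm : ∀ i, ∫ ω, W i ω ∂μ = m)
    {n : ℕ} (hn : 0 < n) {t : ℝ} (ht : 0 < t) :
    μ {ω | t ≤ |(n : ℝ)⁻¹ * (∑ i ∈ Finset.range n, W i ω) - m|}
      ≤ ENNReal.ofReal (1 / (n * t ^ 2)) := by
  have hWm : ∀ i, MemLp (W i) 2 μ := fun i =>
    MemLp.of_bound (hmeas i).aestronglyMeasurable 1
      (Filter.Eventually.of_forall fun ω => by
        rw [Real.norm_eq_abs]; exact hbdd i ω)
  have hnR : (0:ℝ) < n := by exact_mod_cast hn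
  have hSm : MemLp (∑ i ∈ Finset.range n, W i) 2 μ :=
    memLp_finsetSum' _ fun i _ => hWm i
  have hmean : μ[∑ i ∈ Finset.range n, W i] = n * m := by
    have h1 : μ[∑ i ∈ Finset.range n, W i]
        = ∑ i ∈ Finset.range n, ∫ ω, W i ω ∂μ := by
      simp only [Finset.sum_apply]
      exact integral_finset_sum _ fun i _ => (hWm i).integrable one_le_two
    rw [h1]
    simp [hm, Finset.sum_const, Finset.card_range]
  have hvar : variance (∑ i ∈ Finset.range n, W i) μ ≤ n := by
    rw [IndepFun.variance_sum (fun i _ => hWm i)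
        (fun i _ j _ hij => hindep.indepFun hij)]
    calc ∑ i ∈ Finset.range n, variance (W i) μ
        ≤ ∑ i ∈ Finset.range n, 1 := Finset.sum_le_sum fun i _ => by
          have h1 := variance_le_sq_of_bounded (μ := μ) (a := -1) (b := 1)
            (ae_of_all μ fun ω => abs_le.mp (hbdd i ω)) (hmeas i).aemeasurable
          norm_num at h1
          exact h1
      _ = n := by simp
  have hset : {ω | t ≤ |(n : ℝ)⁻¹ * (∑ i ∈ Finset.range n, W i ω) - m|}
      = {ω | (n:ℝ) * t ≤ |(∑ i ∈ Finset.range n, W i) ω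
          - μ[∑ i ∈ Finset.range n, W i]|} := by
    have hmean' : ∫ x, ∑ i ∈ Finset.range n, W i x ∂μ = (n:ℝ) * m := by
      simpa [Finset.sum_apply] using hmean
    ext ω
    simp only [Set.mem_setOf_eq, Finset.sum_apply, hmean']
    have key : (n : ℝ)⁻¹ * (∑ i ∈ Finset.range n, W i ω) - m
        = (n:ℝ)⁻¹ * ((∑ i ∈ Finset.range n, W i ω) - (n:ℝ) * m) := by
      field_simp
    rw [key, abs_mul, abs_of_pos (inv_pos.mpr hnR), inv_mul_eq_div, le_div_iff₀ hnR,
      mul_comm]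
  rw [hset]
  refine (meas_ge_le_variance_div_sq hSm (by positivity)).trans ?_
  apply ENNReal.ofReal_le_ofReal
  calc variance (∑ i ∈ Finset.range n, W i) μ / ((n:ℝ) * t) ^ 2
      ≤ (n : ℝ) / ((n:ℝ) * t) ^ 2 := by gcongr
    _ = 1 / ((n:ℝ) * t ^ 2) := by
        rw [mul_pow]
        field_simp

/-- Under independence and reflectively symmetric marginals (all integer sine moments
vanish), `√n · D_c^{(n)}(1,−1)` is asymptotically equivalent, in probability, to the
efficient central sequence `Δ_eff^{(n)}`. -/
theorem Dc_asymptotically_equals_efficient_central_sequence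
    {Ω : Type*} [MeasurableSpace Ω] (μ : Measure Ω) [IsProbabilityMeasure μ]
    (θ1 θ2 : Ω → ℝ) (hθ1 : Measurable θ1) (hθ2 : Measurable θ2)
    (hindep : IndepFun θ1 θ2 μ)
    (hsym1 : ∀ z : ℤ, (∫ ω, Real.sin ((z : ℝ) * θ1 ω) ∂μ) = 0)
    (hsym2 : ∀ z : ℤ, (∫ ω, Real.sin ((z : ℝ) * θ2 ω) ∂μ) = 0)
    (Θ : ℕ → Ω → ℝ × ℝ) (hΘmeas : ∀ i, Measurable (Θ i))
    (hiid : iIndepFun Θ μ)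
    (hident : ∀ i, IdentDistrib (Θ i) (fun ω => (θ1 ω, θ2 ω)) μ μ) :
    TendstoInMeasure μ
      (fun (n : ℕ) ω =>
        Real.sqrt n * Dc 1 (-1) n (fun i => (Θ i ω).1) (fun i => (Θ i ω).2)
          - (Real.sqrt n)⁻¹ * ∑ i ∈ Finset.range n,
              (Real.cos ((Θ i ω).1 - (Θ i ω).2)
                - (∫ ω', Real.cos (θ1 ω') ∂μ) * (∫ ω', Real.cos (θ2 ω') ∂μ)
                - (∫ ω', Real.cos (θ2 ω') ∂μ)
                    * (Real.cos ((Θ i ω).1) - ∫ ω', Real.cos (θ1 ω') ∂μ)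
                - (∫ ω', Real.cos (θ1 ω') ∂μ)
                    * (Real.cos ((Θ i ω).2) - ∫ ω', Real.cos (θ2 ω') ∂μ)))
      atTop (fun _ => (0 : ℝ)) := by
  set p : ℝ := ∫ ω', Real.cos (θ1 ω') ∂μ with hp
  set q : ℝ := ∫ ω', Real.cos (θ2 ω') ∂μ with hq
  -- the four basic families
  have mW1 : ∀ i : ℕ, Measurable fun ω => Real.cos ((Θ i ω).1) :=
    fun i => Real.measurable_cos.comp (measurable_fst.comp (hΘmeas i))
  have mW2 : ∀ i : ℕ, Measurable fun ω => Real.cos ((Θ i ω).2) :=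
    fun i => Real.measurable_cos.comp (measurable_snd.comp (hΘmeas i))
  have mW3 : ∀ i : ℕ, Measurable fun ω => Real.sin ((Θ i ω).1) :=
    fun i => Real.measurable_sin.comp (measurable_fst.comp (hΘmeas i))
  have mW4 : ∀ i : ℕ, Measurable fun ω => Real.sin ((Θ i ω).2) :=
    fun i => Real.measurable_sin.comp (measurable_snd.comp (hΘmeas i))
  have iW1 : iIndepFun (fun i ω => Real.cos ((Θ i ω).1)) μ :=
    hiid.comp (fun _ (z : ℝ × ℝ) => Real.cos z.1)
      (fun _ => Real.measurable_cos.comp measurable_fst)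
  have iW2 : iIndepFun (fun i ω => Real.cos ((Θ i ω).2)) μ :=
    hiid.comp (fun _ (z : ℝ × ℝ) => Real.cos z.2)
      (fun _ => Real.measurable_cos.comp measurable_snd)
  have iW3 : iIndepFun (fun i ω => Real.sin ((Θ i ω).1)) μ :=
    hiid.comp (fun _ (z : ℝ × ℝ) => Real.sin z.1)
      (fun _ => Real.measurable_sin.comp measurable_fst)
  have iW4 : iIndepFun (fun i ω => Real.sin ((Θ i ω).2)) μ :=
    hiid.comp (fun _ (z : ℝ × ℝ) => Real.sin z.2)
      (fun _ => Real.measurable_sin.comp measurable_snd)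
  have hsin1 : ∫ ω, Real.sin (θ1 ω) ∂μ = 0 := by
    have h := hsym1 1; simpa using h
  have hsin2 : ∫ ω, Real.sin (θ2 ω) ∂μ = 0 := by
    have h := hsym2 1; simpa using h
  have hmW1 : ∀ i, ∫ ω, Real.cos ((Θ i ω).1) ∂μ = p := fun i =>
    ((hident i).comp (Real.measurable_cos.comp measurable_fst)).integral_eq.trans hp.symm
  have hmW2 : ∀ i, ∫ ω, Real.cos ((Θ i ω).2) ∂μ = q := fun i =>
    ((hident i).comp (Real.measurable_cos.comp measurable_snd)).integral_eq.trans hq.symm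
  have hmW3 : ∀ i, ∫ ω, Real.sin ((Θ i ω).1) ∂μ = 0 := fun i =>
    ((hident i).comp (Real.measurable_sin.comp measurable_fst)).integral_eq.trans hsin1
  have hmW4 : ∀ i, ∫ ω, Real.sin ((Θ i ω).2) ∂μ = 0 := fun i =>
    ((hident i).comp (Real.measurable_sin.comp measurable_snd)).integral_eq.trans hsin2
  have bddc1 : ∀ (i : ℕ) (ω : Ω), |Real.cos ((Θ i ω).1)| ≤ 1 := fun i ω =>
    Real.abs_cos_le_one _
  have bddc2 : ∀ (i : ℕ) (ω : Ω), |Real.cos ((Θ i ω).2)| ≤ 1 := fun i ω =>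
    Real.abs_cos_le_one _
  have bdds1 : ∀ (i : ℕ) (ω : Ω), |Real.sin ((Θ i ω).1)| ≤ 1 := fun i ω =>
    Real.abs_sin_le_one _
  have bdds2 : ∀ (i : ℕ) (ω : Ω), |Real.sin ((Θ i ω).2)| ≤ 1 := fun i ω =>
    Real.abs_sin_le_one _
  rw [tendstoInMeasure_iff_dist]
  intro ε hε
  rw [ENNReal.tendsto_atTop_zero]
  intro δ hδ
  obtain ⟨r, hr0, hrδ⟩ : ∃ r : ℝ, 0 < r ∧ ENNReal.ofReal r ≤ δ := by
    rcases eq_or_ne δ ⊤ with h | h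
    · exact ⟨1, one_pos, h ▸ le_top⟩
    · exact ⟨δ.toReal, ENNReal.toReal_pos hδ.ne' h, by rw [ENNReal.ofReal_toReal h]⟩
  set M : ℝ := Real.sqrt (8 / r) with hM
  have hM0 : 0 < M := Real.sqrt_pos.mpr (div_pos (by norm_num) hr0)
  have hM2 : M ^ 2 = 8 / r := Real.sq_sqrt (div_pos (by norm_num) hr0).le
  set c : ℝ := ε / (2 * M) with hc
  have hc0 : 0 < c := div_pos hε (by linarith)
  have hMc : M * c = ε / 2 := by
    rw [hc]; field_simp
  refine ⟨⌈8 / (r * c ^ 2)⌉₊ + 1, fun n hn => ?_⟩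
  have hn1 : 0 < n := lt_of_lt_of_le (Nat.succ_pos _) hn
  have hnR : (0:ℝ) < n := by exact_mod_cast hn1
  have hs0 : (0:ℝ) < Real.sqrt n := Real.sqrt_pos.mpr hnR
  have hts : 0 < M / Real.sqrt n := div_pos hM0 hs0
  have hnc : 8 / (r * c ^ 2) ≤ (n:ℝ) := by
    refine (Nat.le_ceil _).trans ?_
    exact_mod_cast le_trans (Nat.le_succ _) hn
  have hbound2 : 1 / ((n:ℝ) * c ^ 2) ≤ r / 8 := by
    rw [div_le_div_iff₀ (mul_pos hnR (pow_pos hc0 2)) (by norm_num : (0:ℝ) < 8)]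
    have h8 : 8 ≤ (n:ℝ) * (r * c ^ 2) :=
      (div_le_iff₀ (mul_pos hr0 (pow_pos hc0 2))).mp hnc
    nlinarith
  have h1eq : 1 / ((n:ℝ) * (M / Real.sqrt n) ^ 2) = r / 8 := by
    have hsq : Real.sqrt n ^ 2 = (n:ℝ) := Real.sq_sqrt (Nat.cast_nonneg n)
    have h2 : (n:ℝ) * (M / Real.sqrt n) ^ 2 = M ^ 2 := by
      rw [div_pow, hsq]; field_simp
    rw [h2, hM2, one_div_div]
  -- the four Chebyshev bounds
  have hE1 : μ {ω | M / Real.sqrt n ≤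
      |(n : ℝ)⁻¹ * (∑ i ∈ Finset.range n, Real.cos ((Θ i ω).1)) - p|}
      ≤ ENNReal.ofReal (r / 8) := by
    have h := cheb_sum μ (fun i ω => Real.cos ((Θ i ω).1)) mW1 bddc1 iW1 p hmW1 hn1 hts
    rwa [h1eq] at h
  have hE2 : μ {ω | c ≤
      |(n : ℝ)⁻¹ * (∑ i ∈ Finset.range n, Real.cos ((Θ i ω).2)) - q|}
      ≤ ENNReal.ofReal (r / 8) := by
    have h := cheb_sum μ (fun i ω => Real.cos ((Θ i ω).2)) mW2 bddc2 iW2 q hmW2 hn1 hc0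
    exact h.trans (ENNReal.ofReal_le_ofReal hbound2)
  have hE3 : μ {ω | M / Real.sqrt n ≤
      |(n : ℝ)⁻¹ * (∑ i ∈ Finset.range n, Real.sin ((Θ i ω).1)) - 0|}
      ≤ ENNReal.ofReal (r / 8) := by
    have h := cheb_sum μ (fun i ω => Real.sin ((Θ i ω).1)) mW3 bdds1 iW3 0 hmW3 hn1 hts
    rwa [h1eq] at h
  have hE4 : μ {ω | c ≤
      |(n : ℝ)⁻¹ * (∑ i ∈ Finset.range n, Real.sin ((Θ i ω).2)) - 0|}
      ≤ ENNReal.ofReal (r / 8) := by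
    have h := cheb_sum μ (fun i ω => Real.sin ((Θ i ω).2)) mW4 bdds2 iW4 0 hmW4 hn1 hc0
    exact h.trans (ENNReal.ofReal_le_ofReal hbound2)
  -- inclusion of the deviation event in the union of the four events
  have hincl : {ω | ε ≤ dist
        (Real.sqrt n * Dc 1 (-1) n (fun i => (Θ i ω).1) (fun i => (Θ i ω).2)
          - (Real.sqrt n)⁻¹ * ∑ i ∈ Finset.range n,
              (Real.cos ((Θ i ω).1 - (Θ i ω).2) - p * q
                - q * (Real.cos ((Θ i ω).1) - p)
                - p * (Real.cos ((Θ i ω).2) - q))) 0}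
      ⊆ ({ω | M / Real.sqrt n ≤
            |(n : ℝ)⁻¹ * (∑ i ∈ Finset.range n, Real.cos ((Θ i ω).1)) - p|}
          ∪ {ω | c ≤
            |(n : ℝ)⁻¹ * (∑ i ∈ Finset.range n, Real.cos ((Θ i ω).2)) - q|})
        ∪ ({ω | M / Real.sqrt n ≤
            |(n : ℝ)⁻¹ * (∑ i ∈ Finset.range n, Real.sin ((Θ i ω).1)) - 0|}
          ∪ {ω | c ≤
            |(n : ℝ)⁻¹ * (∑ i ∈ Finset.range n, Real.sin ((Θ i ω).2)) - 0|}) := by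
    intro ω hω
    simp only [Set.mem_setOf_eq, dist_zero_right, Real.norm_eq_abs] at hω
    have hid : Real.sqrt n * Dc 1 (-1) n (fun i => (Θ i ω).1) (fun i => (Θ i ω).2)
          - (Real.sqrt n)⁻¹ * ∑ i ∈ Finset.range n,
              (Real.cos ((Θ i ω).1 - (Θ i ω).2) - p * q
                - q * (Real.cos ((Θ i ω).1) - p)
                - p * (Real.cos ((Θ i ω).2) - q))
        = -(Real.sqrt n * (((n : ℝ)⁻¹ * (∑ i ∈ Finset.range n, Real.cos ((Θ i ω).1)) - p)
              * ((n : ℝ)⁻¹ * (∑ i ∈ Finset.range n, Real.cos ((Θ i ω).2)) - q))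
            + Real.sqrt n * (((n : ℝ)⁻¹ * (∑ i ∈ Finset.range n, Real.sin ((Θ i ω).1)))
              * ((n : ℝ)⁻¹ * (∑ i ∈ Finset.range n, Real.sin ((Θ i ω).2))))) :=
      Dc_identity n hn1 (fun i => (Θ i ω).1) (fun i => (Θ i ω).2) p q
    rw [hid, abs_neg] at hω
    set A : ℝ := (n : ℝ)⁻¹ * (∑ i ∈ Finset.range n, Real.cos ((Θ i ω).1)) - p with hA
    set B : ℝ := (n : ℝ)⁻¹ * (∑ i ∈ Finset.range n, Real.cos ((Θ i ω).2)) - q with hB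
    set C : ℝ := (n : ℝ)⁻¹ * (∑ i ∈ Finset.range n, Real.sin ((Θ i ω).1)) with hC
    set D : ℝ := (n : ℝ)⁻¹ * (∑ i ∈ Finset.range n, Real.sin ((Θ i ω).2)) with hD
    have hsplit : ε / 2 ≤ |Real.sqrt n * (A * B)| ∨ ε / 2 ≤ |Real.sqrt n * (C * D)| := by
      by_contra hcon
      push_neg at hcon
      have habs := abs_add_le (Real.sqrt n * (A * B)) (Real.sqrt n * (C * D))
      linarith [hcon.1, hcon.2]
    rcases hsplit with hcase | hcase
    · left
      by_contra hno
      simp only [Set.mem_union, Set.mem_setOf_eq, not_or, not_le] at hno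
      obtain ⟨hu, hv⟩ := hno
      rw [abs_mul, abs_mul, abs_of_pos hs0] at hcase
      rw [← hA] at hu
      rw [← hB] at hv
      have k1 : |A| * Real.sqrt n < M := (lt_div_iff₀ hs0).mp hu
      have : ε / 2 < ε / 2 := by
        calc ε / 2 ≤ Real.sqrt n * (|A| * |B|) := hcase
          _ = (|A| * Real.sqrt n) * |B| := by ring
          _ ≤ M * |B| := mul_le_mul_of_nonneg_right k1.le (abs_nonneg _)
          _ < M * c := mul_lt_mul_of_pos_left hv hM0
          _ = ε / 2 := hMc
      exact lt_irrefl _ this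
    · right
      by_contra hno
      simp only [Set.mem_union, Set.mem_setOf_eq, not_or, not_le, sub_zero] at hno
      obtain ⟨hu, hv⟩ := hno
      rw [abs_mul, abs_mul, abs_of_pos hs0] at hcase
      rw [← hC] at hu
      rw [← hD] at hv
      have k1 : |C| * Real.sqrt n < M := (lt_div_iff₀ hs0).mp hu
      have : ε / 2 < ε / 2 := by
        calc ε / 2 ≤ Real.sqrt n * (|C| * |D|) := hcase
          _ = (|C| * Real.sqrt n) * |D| := by ring
          _ ≤ M * |D| := mul_le_mul_of_nonneg_right k1.le (abs_nonneg _)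
          _ < M * c := mul_lt_mul_of_pos_left hv hM0
          _ = ε / 2 := hMc
      exact lt_irrefl _ this
  have hr8 : (0:ℝ) ≤ r / 8 := by positivity
  calc μ {ω | ε ≤ dist
        (Real.sqrt n * Dc 1 (-1) n (fun i => (Θ i ω).1) (fun i => (Θ i ω).2)
          - (Real.sqrt n)⁻¹ * ∑ i ∈ Finset.range n,
              (Real.cos ((Θ i ω).1 - (Θ i ω).2) - p * q
                - q * (Real.cos ((Θ i ω).1) - p)
                - p * (Real.cos ((Θ i ω).2) - q))) 0}
      ≤ μ (({ω | M / Real.sqrt n ≤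
            |(n : ℝ)⁻¹ * (∑ i ∈ Finset.range n, Real.cos ((Θ i ω).1)) - p|}
          ∪ {ω | c ≤
            |(n : ℝ)⁻¹ * (∑ i ∈ Finset.range n, Real.cos ((Θ i ω).2)) - q|})
        ∪ ({ω | M / Real.sqrt n ≤
            |(n : ℝ)⁻¹ * (∑ i ∈ Finset.range n, Real.sin ((Θ i ω).1)) - 0|}
          ∪ {ω | c ≤
            |(n : ℝ)⁻¹ * (∑ i ∈ Finset.range n, Real.sin ((Θ i ω).2)) - 0|})) :=
        measure_mono hincl
    _ ≤ (μ {ω | M / Real.sqrt n ≤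
            |(n : ℝ)⁻¹ * (∑ i ∈ Finset.range n, Real.cos ((Θ i ω).1)) - p|}
          + μ {ω | c ≤
            |(n : ℝ)⁻¹ * (∑ i ∈ Finset.range n, Real.cos ((Θ i ω).2)) - q|})
        + (μ {ω | M / Real.sqrt n ≤
            |(n : ℝ)⁻¹ * (∑ i ∈ Finset.range n, Real.sin ((Θ i ω).1)) - 0|}
          + μ {ω | c ≤
            |(n : ℝ)⁻¹ * (∑ i ∈ Finset.range n, Real.sin ((Θ i ω).2)) - 0|}) :=
        le_trans (measure_union_le _ _)
          (add_le_add (measure_union_le _ _) (measure_union_le _ _))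
    _ ≤ (ENNReal.ofReal (r / 8) + ENNReal.ofReal (r / 8))
        + (ENNReal.ofReal (r / 8) + ENNReal.ofReal (r / 8)) :=
        add_le_add (add_le_add hE1 hE2) (add_le_add hE3 hE4)
    _ ≤ ENNReal.ofReal r := by
        rw [← ENNReal.ofReal_add hr8 hr8,
          ← ENNReal.ofReal_add (by linarith) (by linarith)]
        exact ENNReal.ofReal_le_ofReal (by linarith)
    _ ≤ δ := hrδ
end

section
/- Let (θ¹ᵢ, θ²ᵢ), i = 1,…,n, be i.i.d. with density f_{(κ₁,κ₂,0)}, i.e. independent von Mises marginals (κ₃ = 0). Let k_n = (k₁ⁿ, k₂ⁿ, k₃ⁿ)' be a bounded sequence in ℝ³ such that κ₁ + n^{−1/2}k₁ⁿ ≥ 0 and κ₂ + n^{−1/2}k₂ⁿ ≥ 0. Define the log-likelihood ratio Λ^{(n)} := Σ_{i=1}^{n} log( f_{(κ₁+n^{−1/2}k₁ⁿ, κ₂+n^{−1/2}k₂ⁿ, n^{−1/2}k₃ⁿ)}(θ¹ᵢ, θ²ᵢ) / f_{(κ₁,κ₂,0)}(θ¹ᵢ, θ²ᵢ) ). Then Λ^{(n)}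 = k_n' Δ^{(n)} − (1/2) k_n' Γ k_n + o_P(1) as n → ∞, where Δ^{(n)} = (Δ₁^{(n)}, Δ₂^{(n)}, Δ₃^{(n)})' with Δ₁^{(n)} = n^{−1/2} Σᵢ (cos(θ¹ᵢ) − J_{1c}(1)), Δ₂^{(n)} = n^{−1/2} Σᵢ (cos(θ²ᵢ) − J_{2c}(1)), Δ₃^{(n)} = n^{−1/2} Σᵢ (cos(θ¹ᵢ − θ²ᵢ) − J_{1c}(1)J_{2c}(1)), and Γ is the symmetric 3×3 matrix with diagonal entries Var[cos(θ¹)], Var[cos(θ²)], Var[cos(θ¹ − θ²)], entry (1,2) equal to 0, entry (1,3) equal to J_{2c}(1)·Var[cos(θ¹)], and entry (2,3) equal to J_{1c}(1)·Var[cos(θ²)]; here J_{1c}(1) = E[cos(θ¹)], J_{2c}(1) = E[cos(θ²)], and all expectations are under the null density f_{(κ₁,κ₂,0)}. -/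
open MeasureTheory ProbabilityTheory Filter Real
open scoped NNReal BigOperators Topology

/-- The density of the bivariate cosine von Mises model with positive interaction on
`𝕋² = [−π,π)²`, with parameters `κ₁, κ₂, κ₃`. -/
noncomputable def bcvmDensity (κ1 κ2 κ3 : ℝ) (p : ℝ × ℝ) : ℝ :=
  (∫ q in (Set.Ico (-Real.pi) Real.pi ×ˢ Set.Ico (-Real.pi) Real.pi),
      Real.exp (κ1 * Real.cos q.1 + κ2 * Real.cos q.2 + κ3 * Real.cos (q.1 - q.2)))⁻¹
    * Real.exp (κ1 * Real.cos p.1 + κ2 * Real.cos p.2 + κ3 * Real.cos (p.1 - p.2))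

/-- The central sequence `Δ^{(n)} = (Δ₁^{(n)}, Δ₂^{(n)}, Δ₃^{(n)})'`, with expectations taken
with respect to the (common) law of the observations. -/
noncomputable def centralSeq {Ω : Type*} [MeasurableSpace Ω] (μ : Measure Ω)
    (Θ : ℕ → Ω → ℝ × ℝ) (n : ℕ) (ω : Ω) : Fin 3 → ℝ :=
  ![(Real.sqrt n)⁻¹ * ∑ i ∈ Finset.range n,
      (Real.cos (Θ i ω).1 - ∫ ω', Real.cos (Θ 0 ω').1 ∂μ),
    (Real.sqrt n)⁻¹ * ∑ i ∈ Finset.range n,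
      (Real.cos (Θ i ω).2 - ∫ ω', Real.cos (Θ 0 ω').2 ∂μ),
    (Real.sqrt n)⁻¹ * ∑ i ∈ Finset.range n,
      (Real.cos ((Θ i ω).1 - (Θ i ω).2)
        - (∫ ω', Real.cos (Θ 0 ω').1 ∂μ) * ∫ ω', Real.cos (Θ 0 ω').2 ∂μ)]

/-- The Fisher-information-type matrix `Γ` of the LAN expansion, with moments taken with
respect to the law of `Θ0`. -/
noncomputable def GammaLAN {Ω : Type*} [MeasurableSpace Ω] (μ : Measure Ω)
    (Θ0 : Ω → ℝ × ℝ) : Matrix (Fin 3) (Fin 3) ℝ :=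
  !![∫ ω, (Real.cos (Θ0 ω).1 - ∫ ω', Real.cos (Θ0 ω').1 ∂μ) ^ 2 ∂μ,
      0,
      (∫ ω', Real.cos (Θ0 ω').2 ∂μ)
        * ∫ ω, (Real.cos (Θ0 ω).1 - ∫ ω', Real.cos (Θ0 ω').1 ∂μ) ^ 2 ∂μ;
    0,
      ∫ ω, (Real.cos (Θ0 ω).2 - ∫ ω', Real.cos (Θ0 ω').2 ∂μ) ^ 2 ∂μ,
      (∫ ω', Real.cos (Θ0 ω').1 ∂μ)
        * ∫ ω, (Real.cos (Θ0 ω).2 - ∫ ω', Real.cos (Θ0 ω').2 ∂μ) ^ 2 ∂μ;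
    (∫ ω', Real.cos (Θ0 ω').2 ∂μ)
        * ∫ ω, (Real.cos (Θ0 ω).1 - ∫ ω', Real.cos (Θ0 ω').1 ∂μ) ^ 2 ∂μ,
      (∫ ω', Real.cos (Θ0 ω').1 ∂μ)
        * ∫ ω, (Real.cos (Θ0 ω).2 - ∫ ω', Real.cos (Θ0 ω').2 ∂μ) ^ 2 ∂μ,
      ∫ ω, (Real.cos ((Θ0 ω).1 - (Θ0 ω).2)
          - ∫ ω', Real.cos ((Θ0 ω').1 - (Θ0 ω').2) ∂μ) ^ 2 ∂μ]

open scoped ENNReal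

namespace BcvmAux

noncomputable def vmA : Set ℝ := Set.Ico (-Real.pi) Real.pi

noncomputable def vmS : Set (ℝ × ℝ) := vmA ×ˢ vmA

noncomputable def vmE (a b c : ℝ) (p : ℝ × ℝ) : ℝ :=
  Real.exp (a * Real.cos p.1 + b * Real.cos p.2 + c * Real.cos (p.1 - p.2))

noncomputable def vmZ (a b c : ℝ) : ℝ := ∫ p in vmS, vmE a b c p

lemma bcvmDensity_eq (a b c : ℝ) (p : ℝ × ℝ) :
    bcvmDensity a b c p = (vmZ a b c)⁻¹ * vmE a b c p := rfl

lemma vmE_continuous (a b c : ℝ) : Continuous (vmE a b c) := by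
  unfold vmE; fun_prop

lemma vmE_pos (a b c : ℝ) (p : ℝ × ℝ) : 0 < vmE a b c p := Real.exp_pos _

lemma integrableOn_vmS {g : ℝ × ℝ → ℝ} (hg : Continuous g) : IntegrableOn g vmS := by
  have hK : IsCompact ((Set.Icc (-Real.pi) Real.pi) ×ˢ (Set.Icc (-Real.pi) Real.pi)) :=
    isCompact_Icc.prod isCompact_Icc
  have h1 : IntegrableOn g ((Set.Icc (-Real.pi) Real.pi) ×ˢ (Set.Icc (-Real.pi) Real.pi)) :=
    hg.continuousOn.integrableOn_compact hK
  exact h1.mono_set (Set.prod_mono Set.Ico_subset_Icc_self Set.Ico_subset_Icc_self)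

lemma volume_vmS_pos : 0 < (volume : Measure (ℝ × ℝ)) vmS := by
  rw [vmS, vmA, MeasureTheory.Measure.volume_eq_prod, Measure.prod_prod, Real.volume_Ico]
  have h : (0:ℝ) < Real.pi - -Real.pi := by
    have := Real.pi_pos; linarith
  have h2 : (0:ℝ≥0∞) < ENNReal.ofReal (Real.pi - -Real.pi) := ENNReal.ofReal_pos.mpr h
  exact ENNReal.mul_pos h2.ne' h2.ne'

lemma vmZ_pos (a b c : ℝ) : 0 < vmZ a b c := by
  rw [vmZ, setIntegral_pos_iff_support_of_nonneg_ae
    (Filter.Eventually.of_forall fun p => (vmE_pos a b c p).le)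
    (integrableOn_vmS (vmE_continuous a b c))]
  have : Function.support (vmE a b c) = Set.univ := by
    ext p; simp [Function.mem_support, (vmE_pos a b c p).ne']
  rw [this, Set.univ_inter]
  exact volume_vmS_pos

lemma vmZ_ne (a b c : ℝ) : vmZ a b c ≠ 0 := (vmZ_pos a b c).ne'

lemma bcvmDensity_pos (a b c : ℝ) (p : ℝ × ℝ) : 0 < bcvmDensity a b c p := by
  rw [bcvmDensity_eq]
  exact mul_pos (inv_pos.mpr (vmZ_pos a b c)) (vmE_pos a b c p)

/-- Fubini factorization over the square. -/
lemma fubini_vmS (f g : ℝ → ℝ) :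
    ∫ p in vmS, f p.1 * g p.2 = (∫ x in vmA, f x) * ∫ y in vmA, g y := by
  rw [vmS, MeasureTheory.Measure.volume_eq_prod, ← Measure.prod_restrict]
  exact integral_prod_mul f g

/-- The sine integral vanishes by symmetry. -/
lemma sin_integral_zero (c : ℝ) :
    ∫ x in vmA, Real.sin x * Real.exp (c * Real.cos x) = 0 := by
  have hpi : (-Real.pi) ≤ Real.pi := by linarith [Real.pi_pos]
  set f : ℝ → ℝ := fun x => Real.sin x * Real.exp (c * Real.cos x) with hf
  have h1 : ∫ x in vmA, f x = ∫ x in (-Real.pi)..Real.pi, f x := by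
    rw [vmA, intervalIntegral.integral_of_le hpi]
    exact setIntegral_congr_set MeasureTheory.Ico_ae_eq_Ioc
  have h2 : ∫ x in (-Real.pi)..Real.pi, f (-x) = ∫ x in (-Real.pi)..Real.pi, f x := by
    simpa using intervalIntegral.integral_comp_neg (a := -Real.pi) (b := Real.pi) f
  have h3 : ∀ x, f (-x) = - f x := by
    intro x; simp [hf, Real.sin_neg, Real.cos_neg]
  rw [h1]
  have h4 : ∫ x in (-Real.pi)..Real.pi, f (-x) = - ∫ x in (-Real.pi)..Real.pi, f x := by
    simp_rw [h3]; exact intervalIntegral.integral_neg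
  have := h2.symm.trans h4
  linarith [this]

end BcvmAux

namespace BcvmAux

section Expect

variable {Ω : Type*} [MeasurableSpace Ω] (μ : Measure Ω) [IsProbabilityMeasure μ]
variable (a b : ℝ) (Θ0 : Ω → ℝ × ℝ)

/-- Bridge: expectations under `μ` of functions of `Θ0` as set integrals. -/
lemma expect_eq (hmeas : Measurable Θ0)
    (hlaw : Measure.map Θ0 μ =
      (volume.restrict (Set.Ico (-Real.pi) Real.pi ×ˢ Set.Ico (-Real.pi) Real.pi)).withDensity
        (fun p => ENNReal.ofReal (bcvmDensity a b 0 p)))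
    (g : ℝ × ℝ → ℝ) (hg : Continuous g) :
    ∫ ω, g (Θ0 ω) ∂μ = (vmZ a b 0)⁻¹ * ∫ p in vmS, g p * vmE a b 0 p := by
  have hS : (Set.Ico (-Real.pi) Real.pi ×ˢ Set.Ico (-Real.pi) Real.pi) = vmS := rfl
  rw [← integral_map hmeas.aemeasurable hg.aestronglyMeasurable, hlaw, hS]
  have hd : Continuous (bcvmDensity a b 0) := by
    unfold bcvmDensity; fun_prop
  have hmeas2 : Measurable fun p => (bcvmDensity a b 0 p).toNNReal :=
    hd.measurable.real_toNNReal
  have hofReal : (fun p => ENNReal.ofReal (bcvmDensity a b 0 p)) =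
      fun p => ((fun q => (bcvmDensity a b 0 q).toNNReal) p : ℝ≥0∞) := rfl
  rw [hofReal, integral_withDensity_eq_integral_smul hmeas2 g]
  have : ∀ p, ((bcvmDensity a b 0 p).toNNReal : ℝ≥0) • g p
      = (vmZ a b 0)⁻¹ * (g p * vmE a b 0 p) := by
    intro p
    have h0 : (0:ℝ) ≤ bcvmDensity a b 0 p := (bcvmDensity_pos a b 0 p).le
    rw [NNReal.smul_def, Real.coe_toNNReal _ h0, smul_eq_mul, bcvmDensity_eq]
    ring
  simp_rw [this]
  exact MeasureTheory.integral_const_mul _ _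

variable {μ a b Θ0}

lemma vmE_zero_factor (p : ℝ × ℝ) :
    vmE a b 0 p = Real.exp (a * Real.cos p.1) * Real.exp (b * Real.cos p.2) := by
  rw [vmE, ← Real.exp_add]; ring_nf

lemma vmZ_zero_factor :
    vmZ a b 0 = (∫ x in vmA, Real.exp (a * Real.cos x)) * ∫ y in vmA, Real.exp (b * Real.cos y) := by
  rw [vmZ]
  rw [show (fun p : ℝ × ℝ => vmE a b 0 p)
      = fun p => Real.exp (a * Real.cos p.1) * Real.exp (b * Real.cos p.2) from
    funext vmE_zero_factor]
  exact fubini_vmS (fun x => Real.exp (a * Real.cos x)) (fun y => Real.exp (b * Real.cos y))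

/-- Product rule: under the null (κ₃ = 0), functions of the two coordinates are uncorrelated. -/
lemma expect_mul (hmeas : Measurable Θ0)
    (hlaw : Measure.map Θ0 μ =
      (volume.restrict (Set.Ico (-Real.pi) Real.pi ×ˢ Set.Ico (-Real.pi) Real.pi)).withDensity
        (fun p => ENNReal.ofReal (bcvmDensity a b 0 p)))
    (f g : ℝ → ℝ) (hf : Continuous f) (hg : Continuous g) :
    ∫ ω, f (Θ0 ω).1 * g (Θ0 ω).2 ∂μ
      = (∫ ω, f (Θ0 ω).1 ∂μ) * ∫ ω, g (Θ0 ω).2 ∂μ := by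
  have h1 := expect_eq μ a b Θ0 hmeas hlaw (fun p => f p.1 * g p.2) (by fun_prop)
  have h2 := expect_eq μ a b Θ0 hmeas hlaw (fun p => f p.1) (by fun_prop)
  have h3 := expect_eq μ a b Θ0 hmeas hlaw (fun p => g p.2) (by fun_prop)
  have e1 : ∫ p in vmS, f p.1 * g p.2 * vmE a b 0 p
      = (∫ x in vmA, f x * Real.exp (a * Real.cos x)) * ∫ y in vmA, g y * Real.exp (b * Real.cos y) := by
    rw [show (fun p : ℝ × ℝ => f p.1 * g p.2 * vmE a b 0 p)
        = fun p => (f p.1 * Real.exp (a * Real.cos p.1)) * (g p.2 * Real.exp (b * Real.cos p.2)) from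
      funext fun p => by rw [vmE_zero_factor]; ring]
    exact fubini_vmS (fun x => f x * Real.exp (a * Real.cos x)) (fun y => g y * Real.exp (b * Real.cos y))
  have e2 : ∫ p in vmS, f p.1 * vmE a b 0 p
      = (∫ x in vmA, f x * Real.exp (a * Real.cos x)) * ∫ y in vmA, Real.exp (b * Real.cos y) := by
    rw [show (fun p : ℝ × ℝ => f p.1 * vmE a b 0 p)
        = fun p => (f p.1 * Real.exp (a * Real.cos p.1)) * (Real.exp (b * Real.cos p.2)) from
      funext fun p => by rw [vmE_zero_factor]; ring]
    exact fubini_vmS (fun x => f x * Real.exp (a * Real.cos x)) (fun y => Real.exp (b * Real.cos y))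
  have e3 : ∫ p in vmS, g p.2 * vmE a b 0 p
      = (∫ x in vmA, Real.exp (a * Real.cos x)) * ∫ y in vmA, g y * Real.exp (b * Real.cos y) := by
    rw [show (fun p : ℝ × ℝ => g p.2 * vmE a b 0 p)
        = fun p => (Real.exp (a * Real.cos p.1)) * (g p.2 * Real.exp (b * Real.cos p.2)) from
      funext fun p => by rw [vmE_zero_factor]; ring]
    exact fubini_vmS (fun x => Real.exp (a * Real.cos x)) (fun y => g y * Real.exp (b * Real.cos y))
  rw [h1, h2, h3, e1, e2, e3, vmZ_zero_factor]
  have hZa : (∫ x in vmA, Real.exp (a * Real.cos x)) ≠ 0 := by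
    have := vmZ_ne a b 0; rw [vmZ_zero_factor] at this
    exact fun h => this (by rw [h, zero_mul])
  have hZb : (∫ y in vmA, Real.exp (b * Real.cos y)) ≠ 0 := by
    have := vmZ_ne a b 0; rw [vmZ_zero_factor] at this
    exact fun h => this (by rw [h, mul_zero])
  field_simp

/-- The expectation of `sin` of the first coordinate vanishes. -/
lemma expect_sin_fst (hmeas : Measurable Θ0)
    (hlaw : Measure.map Θ0 μ =
      (volume.restrict (Set.Ico (-Real.pi) Real.pi ×ˢ Set.Ico (-Real.pi) Real.pi)).withDensity
        (fun p => ENNReal.ofReal (bcvmDensity a b 0 p))) :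
    ∫ ω, Real.sin (Θ0 ω).1 ∂μ = 0 := by
  have h := expect_eq μ a b Θ0 hmeas hlaw (fun p => Real.sin p.1) (by fun_prop)
  have e : ∫ p in vmS, Real.sin p.1 * vmE a b 0 p
      = (∫ x in vmA, Real.sin x * Real.exp (a * Real.cos x)) * ∫ y in vmA, Real.exp (b * Real.cos y) := by
    rw [show (fun p : ℝ × ℝ => Real.sin p.1 * vmE a b 0 p)
        = fun p => (Real.sin p.1 * Real.exp (a * Real.cos p.1)) * (Real.exp (b * Real.cos p.2)) from
      funext fun p => by rw [vmE_zero_factor]; ring]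
    exact fubini_vmS (fun x => Real.sin x * Real.exp (a * Real.cos x)) (fun y => Real.exp (b * Real.cos y))
  rw [h, e, sin_integral_zero, zero_mul, mul_zero]

lemma expect_sin_snd (hmeas : Measurable Θ0)
    (hlaw : Measure.map Θ0 μ =
      (volume.restrict (Set.Ico (-Real.pi) Real.pi ×ˢ Set.Ico (-Real.pi) Real.pi)).withDensity
        (fun p => ENNReal.ofReal (bcvmDensity a b 0 p))) :
    ∫ ω, Real.sin (Θ0 ω).2 ∂μ = 0 := by
  have h := expect_eq μ a b Θ0 hmeas hlaw (fun p => Real.sin p.2) (by fun_prop)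
  have e : ∫ p in vmS, Real.sin p.2 * vmE a b 0 p
      = (∫ x in vmA, Real.exp (a * Real.cos x)) * ∫ y in vmA, Real.sin y * Real.exp (b * Real.cos y) := by
    rw [show (fun p : ℝ × ℝ => Real.sin p.2 * vmE a b 0 p)
        = fun p => (Real.exp (a * Real.cos p.1)) * (Real.sin p.2 * Real.exp (b * Real.cos p.2)) from
      funext fun p => by rw [vmE_zero_factor]; ring]
    exact fubini_vmS (fun x => Real.exp (a * Real.cos x)) (fun y => Real.sin y * Real.exp (b * Real.cos y))
  rw [h, e, sin_integral_zero, mul_zero, mul_zero]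

end Expect

end BcvmAux

namespace BcvmAux

section Moments

variable {Ω : Type*} [MeasurableSpace Ω] {μ : Measure Ω} [IsProbabilityMeasure μ]
variable {a b : ℝ} {Θ0 : Ω → ℝ × ℝ}

lemma intgr (hmeas : Measurable Θ0) {g : ℝ × ℝ → ℝ} (hg : Measurable g) {C : ℝ}
    (hC : ∀ p, |g p| ≤ C) : Integrable (fun ω => g (Θ0 ω)) μ :=
  ⟨(hg.comp hmeas).aestronglyMeasurable,
   HasFiniteIntegral.of_bounded (C := C)
     (Filter.Eventually.of_forall fun ω => by simpa [Real.norm_eq_abs] using hC (Θ0 ω))⟩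

lemma ebound {g : ℝ × ℝ → ℝ} {C : ℝ} (hC : ∀ p, |g p| ≤ C) :
    |∫ ω, g (Θ0 ω) ∂μ| ≤ C := by
  have h := norm_integral_le_of_norm_le_const (μ := μ) (f := fun ω => g (Θ0 ω)) (C := C)
    (Filter.Eventually.of_forall fun ω => by simpa [Real.norm_eq_abs] using hC (Θ0 ω))
  simpa [Real.norm_eq_abs, measure_univ] using h

lemma abs_cos_mul_cos_le (x y : ℝ) : |Real.cos x * Real.cos y| ≤ 1 := by
  rw [abs_mul]
  exact mul_le_one₀ (Real.abs_cos_le_one x) (abs_nonneg _) (Real.abs_cos_le_one y)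

/-- identity (i): `E[cos(X − Y)] = E[cos X]·E[cos Y]`. -/
lemma expect_cos_sub (hmeas : Measurable Θ0)
    (hlaw : Measure.map Θ0 μ =
      (volume.restrict (Set.Ico (-Real.pi) Real.pi ×ˢ Set.Ico (-Real.pi) Real.pi)).withDensity
        (fun p => ENNReal.ofReal (bcvmDensity a b 0 p))) :
    ∫ ω, Real.cos ((Θ0 ω).1 - (Θ0 ω).2) ∂μ
      = (∫ ω, Real.cos (Θ0 ω).1 ∂μ) * ∫ ω, Real.cos (Θ0 ω).2 ∂μ := by
  have h1 : (fun ω => Real.cos ((Θ0 ω).1 - (Θ0 ω).2))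
      = fun ω => Real.cos (Θ0 ω).1 * Real.cos (Θ0 ω).2
          + Real.sin (Θ0 ω).1 * Real.sin (Θ0 ω).2 := by
    funext ω; exact Real.cos_sub _ _
  have i1 : Integrable (fun ω => Real.cos (Θ0 ω).1 * Real.cos (Θ0 ω).2) μ :=
    intgr hmeas (g := fun p => Real.cos p.1 * Real.cos p.2) (by fun_prop)
      (fun p => abs_cos_mul_cos_le _ _)
  have i2 : Integrable (fun ω => Real.sin (Θ0 ω).1 * Real.sin (Θ0 ω).2) μ :=
    intgr hmeas (g := fun p => Real.sin p.1 * Real.sin p.2) (by fun_prop) (C := 1) (fun p => by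
      rw [abs_mul]
      exact mul_le_one₀ (Real.abs_sin_le_one _) (abs_nonneg _) (Real.abs_sin_le_one _))
  rw [h1, integral_add i1 i2,
    expect_mul hmeas hlaw Real.cos Real.cos Real.continuous_cos Real.continuous_cos,
    expect_mul hmeas hlaw Real.sin Real.sin Real.continuous_sin Real.continuous_sin,
    expect_sin_fst hmeas hlaw, zero_mul, add_zero]

/-- identity (iii): `E[cos X · cos(X − Y)] = E[cos²X]·E[cos Y]`. -/
lemma expect_cos_mul_cos_sub (hmeas : Measurable Θ0)
    (hlaw : Measure.map Θ0 μ =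
      (volume.restrict (Set.Ico (-Real.pi) Real.pi ×ˢ Set.Ico (-Real.pi) Real.pi)).withDensity
        (fun p => ENNReal.ofReal (bcvmDensity a b 0 p))) :
    ∫ ω, Real.cos (Θ0 ω).1 * Real.cos ((Θ0 ω).1 - (Θ0 ω).2) ∂μ
      = (∫ ω, Real.cos (Θ0 ω).1 ^ 2 ∂μ) * ∫ ω, Real.cos (Θ0 ω).2 ∂μ := by
  have h1 : (fun ω => Real.cos (Θ0 ω).1 * Real.cos ((Θ0 ω).1 - (Θ0 ω).2))
      = fun ω => (Real.cos (Θ0 ω).1 ^ 2) * Real.cos (Θ0 ω).2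
          + (Real.cos (Θ0 ω).1 * Real.sin (Θ0 ω).1) * Real.sin (Θ0 ω).2 := by
    funext ω; rw [Real.cos_sub]; ring
  have i1 : Integrable (fun ω => (Real.cos (Θ0 ω).1 ^ 2) * Real.cos (Θ0 ω).2) μ :=
    intgr hmeas (g := fun p => Real.cos p.1 ^ 2 * Real.cos p.2) (by fun_prop) (C := 1) (fun p => by
      rw [abs_mul, abs_pow]
      exact mul_le_one₀ (pow_le_one₀ (abs_nonneg _) (Real.abs_cos_le_one _)) (abs_nonneg _)
        (Real.abs_cos_le_one _))
  have i2 : Integrable (fun ω => (Real.cos (Θ0 ω).1 * Real.sin (Θ0 ω).1) * Real.sin (Θ0 ω).2) μ :=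
    intgr hmeas (g := fun p => (Real.cos p.1 * Real.sin p.1) * Real.sin p.2) (by fun_prop)
      (C := 1) (fun p => by
      rw [abs_mul, abs_mul]
      exact mul_le_one₀
        (mul_le_one₀ (Real.abs_cos_le_one p.1) (abs_nonneg _) (Real.abs_sin_le_one p.1))
        (abs_nonneg _) (Real.abs_sin_le_one p.2))
  rw [h1, integral_add i1 i2,
    expect_mul hmeas hlaw (fun x => Real.cos x ^ 2) Real.cos (by fun_prop) Real.continuous_cos,
    expect_mul hmeas hlaw (fun x => Real.cos x * Real.sin x) Real.sin (by fun_prop)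
      Real.continuous_sin,
    expect_sin_snd hmeas hlaw, mul_zero, add_zero]

/-- identity (iv): `E[cos Y · cos(X − Y)] = E[cos X]·E[cos²Y]`. -/
lemma expect_cos2_mul_cos_sub (hmeas : Measurable Θ0)
    (hlaw : Measure.map Θ0 μ =
      (volume.restrict (Set.Ico (-Real.pi) Real.pi ×ˢ Set.Ico (-Real.pi) Real.pi)).withDensity
        (fun p => ENNReal.ofReal (bcvmDensity a b 0 p))) :
    ∫ ω, Real.cos (Θ0 ω).2 * Real.cos ((Θ0 ω).1 - (Θ0 ω).2) ∂μ
      = (∫ ω, Real.cos (Θ0 ω).1 ∂μ) * ∫ ω, Real.cos (Θ0 ω).2 ^ 2 ∂μ := by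
  have h1 : (fun ω => Real.cos (Θ0 ω).2 * Real.cos ((Θ0 ω).1 - (Θ0 ω).2))
      = fun ω => Real.cos (Θ0 ω).1 * (Real.cos (Θ0 ω).2 ^ 2)
          + Real.sin (Θ0 ω).1 * (Real.sin (Θ0 ω).2 * Real.cos (Θ0 ω).2) := by
    funext ω; rw [Real.cos_sub]; ring
  have i1 : Integrable (fun ω => Real.cos (Θ0 ω).1 * (Real.cos (Θ0 ω).2 ^ 2)) μ :=
    intgr hmeas (g := fun p => Real.cos p.1 * (Real.cos p.2 ^ 2)) (by fun_prop) (C := 1)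
      (fun p => by
      rw [abs_mul, abs_pow]
      exact mul_le_one₀ (Real.abs_cos_le_one _) (pow_nonneg (abs_nonneg _) 2)
        (pow_le_one₀ (abs_nonneg _) (Real.abs_cos_le_one _)))
  have i2 : Integrable (fun ω => Real.sin (Θ0 ω).1 * (Real.sin (Θ0 ω).2 * Real.cos (Θ0 ω).2)) μ :=
    intgr hmeas (g := fun p => Real.sin p.1 * (Real.sin p.2 * Real.cos p.2)) (by fun_prop)
      (C := 1) (fun p => by
      rw [abs_mul, abs_mul]
      exact mul_le_one₀ (Real.abs_sin_le_one p.1) (by positivity)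
        (mul_le_one₀ (Real.abs_sin_le_one p.2) (abs_nonneg _) (Real.abs_cos_le_one p.2)))
  rw [h1, integral_add i1 i2,
    expect_mul hmeas hlaw Real.cos (fun y => Real.cos y ^ 2) Real.continuous_cos (by fun_prop),
    expect_mul hmeas hlaw Real.sin (fun y => Real.sin y * Real.cos y) Real.continuous_sin
      (by fun_prop),
    expect_sin_fst hmeas hlaw, zero_mul, add_zero]

/-- Variance expansion: `E[(g − E g)²] = E[g²] − (E g)²` for bounded measurable `g`. -/
lemma var_expand (hmeas : Measurable Θ0) {g : ℝ × ℝ → ℝ} (hg : Measurable g)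
    (hC : ∀ p, |g p| ≤ 1) :
    ∫ ω, (g (Θ0 ω) - ∫ ω', g (Θ0 ω') ∂μ) ^ 2 ∂μ
      = (∫ ω, g (Θ0 ω) ^ 2 ∂μ) - (∫ ω, g (Θ0 ω) ∂μ) ^ 2 := by
  set m := ∫ ω', g (Θ0 ω') ∂μ with hm
  have hsq : ∀ p, |g p ^ 2| ≤ 1 := fun p => by
    rw [abs_pow]; exact pow_le_one₀ (abs_nonneg _) (hC p)
  have i0 : Integrable (fun ω => g (Θ0 ω)) μ := intgr hmeas hg hC
  have i1 : Integrable (fun ω => g (Θ0 ω) ^ 2) μ := intgr hmeas (hg.pow_const 2) hsq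
  have h1 : (fun ω => (g (Θ0 ω) - m) ^ 2)
      = fun ω => g (Θ0 ω) ^ 2 - ((2 * m) * g (Θ0 ω) - m ^ 2) := by
    funext ω; ring
  have i2 : Integrable (fun ω => 2 * m * g (Θ0 ω) - m ^ 2) μ :=
    (i0.const_mul (2 * m)).sub (integrable_const _)
  rw [h1, integral_sub i1 i2,
    integral_sub (i0.const_mul (2 * m)) (integrable_const _),
    MeasureTheory.integral_const_mul, integral_const]
  simp [measure_univ, ← hm]
  ring

end Moments

end BcvmAux

namespace BcvmAux

section Quad

variable {Ω : Type*} [MeasurableSpace Ω] {μ : Measure Ω} [IsProbabilityMeasure μ]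
variable {a b : ℝ} {Θ0 : Ω → ℝ × ℝ}

lemma quad_form (hmeas : Measurable Θ0)
    (hlaw : Measure.map Θ0 μ =
      (volume.restrict (Set.Ico (-Real.pi) Real.pi ×ˢ Set.Ico (-Real.pi) Real.pi)).withDensity
        (fun p => ENNReal.ofReal (bcvmDensity a b 0 p)))
    (v : Fin 3 → ℝ) :
    ∑ j : Fin 3, ∑ l : Fin 3, v j * GammaLAN μ Θ0 j l * v l
      = (∫ ω, (v 0 * Real.cos (Θ0 ω).1 + v 1 * Real.cos (Θ0 ω).2
            + v 2 * Real.cos ((Θ0 ω).1 - (Θ0 ω).2)) ^ 2 ∂μ)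
        - (v 0 * (∫ ω, Real.cos (Θ0 ω).1 ∂μ) + v 1 * (∫ ω, Real.cos (Θ0 ω).2 ∂μ)
            + v 2 * ((∫ ω, Real.cos (Θ0 ω).1 ∂μ) * ∫ ω, Real.cos (Θ0 ω).2 ∂μ)) ^ 2 := by
  -- abbreviations
  have e1 : ∫ ω, (Real.cos (Θ0 ω).1 - ∫ ω', Real.cos (Θ0 ω').1 ∂μ) ^ 2 ∂μ
      = (∫ ω, Real.cos (Θ0 ω).1 ^ 2 ∂μ) - (∫ ω, Real.cos (Θ0 ω).1 ∂μ) ^ 2 :=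
    var_expand hmeas (g := fun p => Real.cos p.1) (by fun_prop)
      (fun p => Real.abs_cos_le_one _)
  have e2 : ∫ ω, (Real.cos (Θ0 ω).2 - ∫ ω', Real.cos (Θ0 ω').2 ∂μ) ^ 2 ∂μ
      = (∫ ω, Real.cos (Θ0 ω).2 ^ 2 ∂μ) - (∫ ω, Real.cos (Θ0 ω).2 ∂μ) ^ 2 :=
    var_expand hmeas (g := fun p => Real.cos p.2) (by fun_prop)
      (fun p => Real.abs_cos_le_one _)
  have e3 : ∫ ω, (Real.cos ((Θ0 ω).1 - (Θ0 ω).2)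
        - ∫ ω', Real.cos ((Θ0 ω').1 - (Θ0 ω').2) ∂μ) ^ 2 ∂μ
      = (∫ ω, Real.cos ((Θ0 ω).1 - (Θ0 ω).2) ^ 2 ∂μ)
        - (∫ ω, Real.cos ((Θ0 ω).1 - (Θ0 ω).2) ∂μ) ^ 2 :=
    var_expand hmeas (g := fun p => Real.cos (p.1 - p.2)) (by fun_prop)
      (fun p => Real.abs_cos_le_one _)
  have e4 : ∫ ω, Real.cos ((Θ0 ω).1 - (Θ0 ω).2) ∂μ
      = (∫ ω, Real.cos (Θ0 ω).1 ∂μ) * ∫ ω, Real.cos (Θ0 ω).2 ∂μ := expect_cos_sub hmeas hlaw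
  have e5 : ∫ ω, Real.cos (Θ0 ω).1 * Real.cos (Θ0 ω).2 ∂μ
      = (∫ ω, Real.cos (Θ0 ω).1 ∂μ) * ∫ ω, Real.cos (Θ0 ω).2 ∂μ :=
    expect_mul hmeas hlaw Real.cos Real.cos Real.continuous_cos Real.continuous_cos
  have e6 : ∫ ω, Real.cos (Θ0 ω).1 * Real.cos ((Θ0 ω).1 - (Θ0 ω).2) ∂μ
      = (∫ ω, Real.cos (Θ0 ω).1 ^ 2 ∂μ) * ∫ ω, Real.cos (Θ0 ω).2 ∂μ :=
    expect_cos_mul_cos_sub hmeas hlaw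
  have e7 : ∫ ω, Real.cos (Θ0 ω).2 * Real.cos ((Θ0 ω).1 - (Θ0 ω).2) ∂μ
      = (∫ ω, Real.cos (Θ0 ω).1 ∂μ) * ∫ ω, Real.cos (Θ0 ω).2 ^ 2 ∂μ :=
    expect_cos2_mul_cos_sub hmeas hlaw
  -- expand the square inside the integral
  have isq1 : Integrable (fun ω => Real.cos (Θ0 ω).1 ^ 2) μ :=
    intgr hmeas (g := fun p => Real.cos p.1 ^ 2) (by fun_prop)
      (fun p => by rw [abs_pow]; exact pow_le_one₀ (abs_nonneg _) (Real.abs_cos_le_one _))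
  have isq2 : Integrable (fun ω => Real.cos (Θ0 ω).2 ^ 2) μ :=
    intgr hmeas (g := fun p => Real.cos p.2 ^ 2) (by fun_prop)
      (fun p => by rw [abs_pow]; exact pow_le_one₀ (abs_nonneg _) (Real.abs_cos_le_one _))
  have isq3 : Integrable (fun ω => Real.cos ((Θ0 ω).1 - (Θ0 ω).2) ^ 2) μ :=
    intgr hmeas (g := fun p => Real.cos (p.1 - p.2) ^ 2) (by fun_prop)
      (fun p => by rw [abs_pow]; exact pow_le_one₀ (abs_nonneg _) (Real.abs_cos_le_one _))
  have ic12 : Integrable (fun ω => Real.cos (Θ0 ω).1 * Real.cos (Θ0 ω).2) μ :=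
    intgr hmeas (g := fun p => Real.cos p.1 * Real.cos p.2) (by fun_prop)
      (fun p => abs_cos_mul_cos_le _ _)
  have ic13 : Integrable (fun ω => Real.cos (Θ0 ω).1 * Real.cos ((Θ0 ω).1 - (Θ0 ω).2)) μ :=
    intgr hmeas (g := fun p => Real.cos p.1 * Real.cos (p.1 - p.2)) (by fun_prop)
      (fun p => abs_cos_mul_cos_le _ _)
  have ic23 : Integrable (fun ω => Real.cos (Θ0 ω).2 * Real.cos ((Θ0 ω).1 - (Θ0 ω).2)) μ :=
    intgr hmeas (g := fun p => Real.cos p.2 * Real.cos (p.1 - p.2)) (by fun_prop)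
      (fun p => abs_cos_mul_cos_le _ _)
  have hsq : (fun ω => (v 0 * Real.cos (Θ0 ω).1 + v 1 * Real.cos (Θ0 ω).2
        + v 2 * Real.cos ((Θ0 ω).1 - (Θ0 ω).2)) ^ 2)
      = fun ω => (v 0 ^ 2 * Real.cos (Θ0 ω).1 ^ 2 + v 1 ^ 2 * Real.cos (Θ0 ω).2 ^ 2
          + v 2 ^ 2 * Real.cos ((Θ0 ω).1 - (Θ0 ω).2) ^ 2
          + (2 * v 0 * v 1) * (Real.cos (Θ0 ω).1 * Real.cos (Θ0 ω).2)
          + (2 * v 0 * v 2) * (Real.cos (Θ0 ω).1 * Real.cos ((Θ0 ω).1 - (Θ0 ω).2)))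
          + (2 * v 1 * v 2) * (Real.cos (Θ0 ω).2 * Real.cos ((Θ0 ω).1 - (Θ0 ω).2)) := by
    funext ω; ring
  have hint : ∫ ω, (v 0 * Real.cos (Θ0 ω).1 + v 1 * Real.cos (Θ0 ω).2
        + v 2 * Real.cos ((Θ0 ω).1 - (Θ0 ω).2)) ^ 2 ∂μ
      = v 0 ^ 2 * ∫ ω, Real.cos (Θ0 ω).1 ^ 2 ∂μ
        + v 1 ^ 2 * ∫ ω, Real.cos (Θ0 ω).2 ^ 2 ∂μ
        + v 2 ^ 2 * ∫ ω, Real.cos ((Θ0 ω).1 - (Θ0 ω).2) ^ 2 ∂μ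
        + (2 * v 0 * v 1) * ∫ ω, Real.cos (Θ0 ω).1 * Real.cos (Θ0 ω).2 ∂μ
        + (2 * v 0 * v 2) * ∫ ω, Real.cos (Θ0 ω).1 * Real.cos ((Θ0 ω).1 - (Θ0 ω).2) ∂μ
        + (2 * v 1 * v 2) * ∫ ω, Real.cos (Θ0 ω).2 * Real.cos ((Θ0 ω).1 - (Θ0 ω).2) ∂μ := by
    rw [hsq]
    have j1 : Integrable (fun ω => v 0 ^ 2 * Real.cos (Θ0 ω).1 ^ 2) μ := isq1.const_mul _
    have j2 : Integrable (fun ω => v 0 ^ 2 * Real.cos (Θ0 ω).1 ^ 2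
        + v 1 ^ 2 * Real.cos (Θ0 ω).2 ^ 2) μ := j1.add (isq2.const_mul _)
    have j3 : Integrable (fun ω => v 0 ^ 2 * Real.cos (Θ0 ω).1 ^ 2
        + v 1 ^ 2 * Real.cos (Θ0 ω).2 ^ 2
        + v 2 ^ 2 * Real.cos ((Θ0 ω).1 - (Θ0 ω).2) ^ 2) μ := j2.add (isq3.const_mul _)
    have j4 : Integrable (fun ω => v 0 ^ 2 * Real.cos (Θ0 ω).1 ^ 2
        + v 1 ^ 2 * Real.cos (Θ0 ω).2 ^ 2
        + v 2 ^ 2 * Real.cos ((Θ0 ω).1 - (Θ0 ω).2) ^ 2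
        + (2 * v 0 * v 1) * (Real.cos (Θ0 ω).1 * Real.cos (Θ0 ω).2)) μ :=
      j3.add (ic12.const_mul _)
    have j5 : Integrable (fun ω => v 0 ^ 2 * Real.cos (Θ0 ω).1 ^ 2
        + v 1 ^ 2 * Real.cos (Θ0 ω).2 ^ 2
        + v 2 ^ 2 * Real.cos ((Θ0 ω).1 - (Θ0 ω).2) ^ 2
        + (2 * v 0 * v 1) * (Real.cos (Θ0 ω).1 * Real.cos (Θ0 ω).2)
        + (2 * v 0 * v 2) * (Real.cos (Θ0 ω).1 * Real.cos ((Θ0 ω).1 - (Θ0 ω).2))) μ :=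
      j4.add (ic13.const_mul _)
    rw [integral_add j5 (ic23.const_mul _), integral_add j4 (ic13.const_mul _),
      integral_add j3 (ic12.const_mul _), integral_add j2 (isq3.const_mul _),
      integral_add j1 (isq2.const_mul _)]
    simp_rw [MeasureTheory.integral_const_mul]
  -- expand the Γ quadratic form
  rw [Fin.sum_univ_three]
  simp only [Fin.sum_univ_three, GammaLAN, Matrix.cons_val', Matrix.cons_val_zero,
    Matrix.cons_val_one, Matrix.head_cons, Matrix.empty_val', Matrix.cons_val_fin_one,
    Matrix.head_fin_const, Matrix.cons_val_two, Matrix.tail_cons, Matrix.of_apply,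
    Matrix.cons_val_one, Matrix.head_cons]
  rw [hint, e1, e2, e3, e4, e5, e6, e7]
  ring

end Quad

end BcvmAux

namespace BcvmAux

section Core

variable {Ω : Type*} [MeasurableSpace Ω] {μ : Measure Ω} [IsProbabilityMeasure μ]
variable {a b : ℝ} {Θ0 : Ω → ℝ × ℝ}

set_option maxHeartbeats 1000000 in
lemma core_bound (hmeas : Measurable Θ0)
    (hlaw : Measure.map Θ0 μ =
      (volume.restrict (Set.Ico (-Real.pi) Real.pi ×ˢ Set.Ico (-Real.pi) Real.pi)).withDensity
        (fun p => ENNReal.ofReal (bcvmDensity a b 0 p)))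
    (v : Fin 3 → ℝ) {n : ℕ} (hn : 1 ≤ n)
    (hM : |v 0| + |v 1| + |v 2| ≤ Real.sqrt n * (1 / 6)) :
    |(n : ℝ) * (Real.log (vmZ a b 0)
        - Real.log (vmZ (a + (Real.sqrt n)⁻¹ * v 0) (b + (Real.sqrt n)⁻¹ * v 1)
            ((Real.sqrt n)⁻¹ * v 2)))
      + Real.sqrt n * (v 0 * (∫ ω, Real.cos (Θ0 ω).1 ∂μ) + v 1 * (∫ ω, Real.cos (Θ0 ω).2 ∂μ)
          + v 2 * ((∫ ω, Real.cos (Θ0 ω).1 ∂μ) * ∫ ω, Real.cos (Θ0 ω).2 ∂μ))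
      + (1 / 2) * ∑ j : Fin 3, ∑ l : Fin 3, v j * GammaLAN μ Θ0 j l * v l|
    ≤ 60 * (|v 0| + |v 1| + |v 2|) ^ 3 / Real.sqrt n := by
  have hn0 : (0:ℝ) < n := by exact_mod_cast hn
  set sq : ℝ := Real.sqrt n with hsqdef
  have hsq0 : 0 < sq := Real.sqrt_pos.mpr hn0
  set w : ℝ := sq⁻¹ with hwdef
  have hw0 : 0 ≤ w := inv_nonneg.mpr hsq0.le
  have hsq2 : sq * sq = (n:ℝ) := Real.mul_self_sqrt hn0.le
  have hwsq : w * sq = 1 := inv_mul_cancel₀ hsq0.ne'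
  have hwn : w * (n:ℝ) = sq := by
    rw [← hsq2, ← mul_assoc, hwsq, one_mul]
  have hwn2 : w ^ 2 * (n:ℝ) = 1 := by
    rw [← hsq2]
    calc w ^ 2 * (sq * sq) = (w * sq) * (w * sq) := by ring
      _ = 1 := by rw [hwsq]; ring
  set σ : ℝ := |v 0| + |v 1| + |v 2| with hσdef
  have hσ0 : 0 ≤ σ := by positivity
  set δ : ℝ := w * σ with hδdef
  have hδ0 : 0 ≤ δ := mul_nonneg hw0 hσ0
  have hδ6 : δ ≤ 1 / 6 := by
    have : w * σ ≤ w * (sq * (1/6)) := mul_le_mul_of_nonneg_left hM hw0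
    calc δ = w * σ := rfl
      _ ≤ w * (sq * (1/6)) := this
      _ = 1/6 := by rw [← mul_assoc, hwsq, one_mul]
  have hδ1 : δ ≤ 1 := by linarith
  -- the local log-likelihood score function
  set U : ℝ × ℝ → ℝ := fun p => (w * v 0) * Real.cos p.1 + (w * v 1) * Real.cos p.2
      + (w * v 2) * Real.cos (p.1 - p.2) with hUdef
  have hUcont : Continuous U := by rw [hUdef]; fun_prop
  have hUm : Measurable U := hUcont.measurable
  have hU : ∀ p, |U p| ≤ δ := by
    intro p
    have t1 : |(w * v 0) * Real.cos p.1| ≤ w * |v 0| := by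
      rw [abs_mul, abs_mul, abs_of_nonneg hw0, mul_assoc]
      exact mul_le_mul_of_nonneg_left
        (mul_le_of_le_one_right (abs_nonneg _) (Real.abs_cos_le_one _)) hw0
    have t2 : |(w * v 1) * Real.cos p.2| ≤ w * |v 1| := by
      rw [abs_mul, abs_mul, abs_of_nonneg hw0, mul_assoc]
      exact mul_le_mul_of_nonneg_left
        (mul_le_of_le_one_right (abs_nonneg _) (Real.abs_cos_le_one _)) hw0
    have t3 : |(w * v 2) * Real.cos (p.1 - p.2)| ≤ w * |v 2| := by
      rw [abs_mul, abs_mul, abs_of_nonneg hw0, mul_assoc]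
      exact mul_le_mul_of_nonneg_left
        (mul_le_of_le_one_right (abs_nonneg _) (Real.abs_cos_le_one _)) hw0
    calc |U p| ≤ |(w * v 0) * Real.cos p.1 + (w * v 1) * Real.cos p.2|
          + |(w * v 2) * Real.cos (p.1 - p.2)| := abs_add_le _ _
      _ ≤ (|(w * v 0) * Real.cos p.1| + |(w * v 1) * Real.cos p.2|)
          + |(w * v 2) * Real.cos (p.1 - p.2)| := by
            gcongr; exact abs_add_le _ _
      _ ≤ (w * |v 0| + w * |v 1|) + w * |v 2| := by gcongr
      _ = δ := by rw [hδdef, hσdef]; ring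
  -- expectations
  set M1 : ℝ := ∫ ω, Real.cos (Θ0 ω).1 ∂μ with hM1
  set M2 : ℝ := ∫ ω, Real.cos (Θ0 ω).2 ∂μ with hM2
  set M3 : ℝ := ∫ ω, Real.cos ((Θ0 ω).1 - (Θ0 ω).2) ∂μ with hM3def
  have hM3 : M3 = M1 * M2 := expect_cos_sub hmeas hlaw
  set P : ℝ := ∫ ω, Real.exp (U (Θ0 ω)) ∂μ with hPdef
  set α : ℝ := ∫ ω, U (Θ0 ω) ∂μ with hαdef
  set β : ℝ := ∫ ω, (U (Θ0 ω)) ^ 2 ∂μ with hβdef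
  set T : ℝ × ℝ → ℝ := fun p => v 0 * Real.cos p.1 + v 1 * Real.cos p.2
      + v 2 * Real.cos (p.1 - p.2) with hTdef
  -- basic integrabilities
  have ic1 : Integrable (fun ω => Real.cos (Θ0 ω).1) μ :=
    intgr hmeas (g := fun p => Real.cos p.1) (by fun_prop) (fun p => Real.abs_cos_le_one _)
  have ic2 : Integrable (fun ω => Real.cos (Θ0 ω).2) μ :=
    intgr hmeas (g := fun p => Real.cos p.2) (by fun_prop) (fun p => Real.abs_cos_le_one _)
  have ic3 : Integrable (fun ω => Real.cos ((Θ0 ω).1 - (Θ0 ω).2)) μ :=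
    intgr hmeas (g := fun p => Real.cos (p.1 - p.2)) (by fun_prop)
      (fun p => Real.abs_cos_le_one _)
  have iU : Integrable (fun ω => U (Θ0 ω)) μ := intgr hmeas hUm hU
  have iU2 : Integrable (fun ω => U (Θ0 ω) ^ 2) μ :=
    intgr hmeas (hUm.pow_const 2) (C := δ ^ 2)
      (fun p => by rw [abs_pow]; exact pow_le_pow_left₀ (abs_nonneg _) (hU p) 2)
  have iexp : Integrable (fun ω => Real.exp (U (Θ0 ω))) μ :=
    intgr hmeas (g := fun p => Real.exp (U p)) (Real.continuous_exp.comp hUcont).measurable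
      (C := Real.exp 1)
      (fun p => by
        rw [abs_of_pos (Real.exp_pos _)]
        exact Real.exp_le_exp.mpr (le_trans (le_abs_self _) (le_trans (hU p) (by linarith))))
  -- P = Zn / Zb
  have hP : P = vmZ (a + w * v 0) (b + w * v 1) (w * v 2) / vmZ a b 0 := by
    rw [hPdef, expect_eq μ a b Θ0 hmeas hlaw (fun p => Real.exp (U p)) (by fun_prop)]
    have hpt : (fun p : ℝ × ℝ => Real.exp (U p) * vmE a b 0 p)
        = fun p => vmE (a + w * v 0) (b + w * v 1) (w * v 2) p := by
      funext p
      rw [hUdef, vmE, vmE, ← Real.exp_add]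
      congr 1; ring
    rw [hpt]
    rw [show (∫ p in vmS, vmE (a + w * v 0) (b + w * v 1) (w * v 2) p)
        = vmZ (a + w * v 0) (b + w * v 1) (w * v 2) from rfl]
    rw [div_eq_inv_mul]
  -- α identity
  have hlin : ∫ ω, T (Θ0 ω) ∂μ = v 0 * M1 + v 1 * M2 + v 2 * M3 := by
    have j1 : Integrable (fun ω => v 0 * Real.cos (Θ0 ω).1) μ := ic1.const_mul _
    have j2 : Integrable (fun ω => v 0 * Real.cos (Θ0 ω).1 + v 1 * Real.cos (Θ0 ω).2) μ :=
      j1.add (ic2.const_mul _)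
    rw [hTdef]
    rw [show (fun ω => (fun p : ℝ × ℝ => v 0 * Real.cos p.1 + v 1 * Real.cos p.2
        + v 2 * Real.cos (p.1 - p.2)) (Θ0 ω))
      = fun ω => (v 0 * Real.cos (Θ0 ω).1 + v 1 * Real.cos (Θ0 ω).2)
        + v 2 * Real.cos ((Θ0 ω).1 - (Θ0 ω).2) from rfl]
    rw [integral_add j2 (ic3.const_mul _), integral_add j1 (ic2.const_mul _)]
    simp_rw [MeasureTheory.integral_const_mul]
    rfl
  have hα : α = w * (v 0 * M1 + v 1 * M2 + v 2 * M3) := by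
    rw [hαdef, ← hlin]
    rw [show (fun ω => U (Θ0 ω)) = fun ω => w * T (Θ0 ω) from funext fun ω => by
      rw [hUdef, hTdef]; ring]
    exact MeasureTheory.integral_const_mul w _
  have hβ : β = w ^ 2 * ∫ ω, T (Θ0 ω) ^ 2 ∂μ := by
    rw [hβdef]
    rw [show (fun ω => U (Θ0 ω) ^ 2) = fun ω => w ^ 2 * T (Θ0 ω) ^ 2 from funext fun ω => by
      rw [hUdef, hTdef]; ring]
    exact MeasureTheory.integral_const_mul _ _
  -- quadratic form identity
  have hQ : ∑ j : Fin 3, ∑ l : Fin 3, v j * GammaLAN μ Θ0 j l * v l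
      = (n : ℝ) * (β - α ^ 2) := by
    have hqf := quad_form hmeas hlaw v
    rw [hqf, hβ, hα, ← hM1, ← hM2, hM3]
    have h1 : (n:ℝ) * (w ^ 2 * ∫ ω, T (Θ0 ω) ^ 2 ∂μ) = ∫ ω, T (Θ0 ω) ^ 2 ∂μ := by
      rw [← mul_assoc, mul_comm (n:ℝ) (w^2), hwn2, one_mul]
    have h2 : (n:ℝ) * (w * (v 0 * M1 + v 1 * M2 + v 2 * (M1 * M2))) ^ 2
        = (v 0 * M1 + v 1 * M2 + v 2 * (M1 * M2)) ^ 2 := by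
      rw [mul_pow]; rw [← mul_assoc, mul_comm (n:ℝ) (w^2), hwn2, one_mul]
    rw [mul_sub, h1, h2]
  -- analytic bounds
  have bα : |α| ≤ δ := ebound (g := U) hU
  have bβ : |β| ≤ δ ^ 2 := ebound (g := fun p => U p ^ 2)
    (fun p => by rw [abs_pow]; exact pow_le_pow_left₀ (abs_nonneg _) (hU p) 2)
  -- Taylor bound for exp
  have hpt : ∀ p : ℝ × ℝ, |Real.exp (U p) - (1 + U p + U p ^ 2 / 2)| ≤ δ ^ 3 := by
    intro p
    have hx1 : |U p| ≤ 1 := le_trans (hU p) (by linarith)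
    have hb := Real.exp_bound hx1 (n := 3) (by norm_num)
    rw [Finset.sum_range_succ, Finset.sum_range_succ, Finset.sum_range_one] at hb
    norm_num [Nat.factorial] at hb
    have h3 : |U p| ^ 3 ≤ δ ^ 3 := pow_le_pow_left₀ (abs_nonneg _) (hU p) 3
    have h4 : |U p| ^ 3 * (2 / 9) ≤ δ ^ 3 * 1 := by
      apply mul_le_mul h3 (by norm_num) (by norm_num) (pow_nonneg hδ0 3)
    linarith
  have hIexp : ∫ ω, (Real.exp (U (Θ0 ω)) - (1 + U (Θ0 ω) + U (Θ0 ω) ^ 2 / 2)) ∂μ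
      = P - (1 + α + β / 2) := by
    have j1 : Integrable (fun ω => (1:ℝ) + U (Θ0 ω)) μ := (integrable_const 1).add iU
    have j2 : Integrable (fun ω => (1:ℝ) + U (Θ0 ω) + U (Θ0 ω) ^ 2 / 2) μ :=
      j1.add (iU2.div_const 2)
    rw [integral_sub iexp j2, integral_add j1 (iU2.div_const 2), integral_add (integrable_const 1) iU,
      integral_const, MeasureTheory.integral_div]
    simp [measure_univ]
    rfl
  have b3 : |P - 1 - α - β / 2| ≤ δ ^ 3 := by
    have := ebound (μ := μ) (Θ0 := Θ0) (g := fun p => Real.exp (U p) - (1 + U p + U p ^ 2 / 2))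
      (C := δ ^ 3) hpt
    rw [hIexp] at this
    convert this using 2
    ring
  -- log expansion
  set x : ℝ := P - 1 with hxdef
  have bx : |x| ≤ 3 * δ := by
    have : x = (P - 1 - α - β / 2) + α + β / 2 := by ring
    rw [this]
    calc |P - 1 - α - β / 2 + α + β / 2|
        ≤ |P - 1 - α - β / 2 + α| + |β / 2| := abs_add_le _ _
      _ ≤ |P - 1 - α - β / 2| + |α| + |β / 2| := by gcongr; exact abs_add_le _ _
      _ ≤ δ ^ 3 + δ + δ ^ 2 / 2 := by
          refine add_le_add (add_le_add b3 bα) ?_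
          rw [abs_div]
          simp only [abs_two]
          linarith [bβ]
      _ ≤ 3 * δ := by
          have e1 : δ ^ 3 ≤ δ := pow_le_of_le_one hδ0 hδ1 (by norm_num)
          have e2 : δ ^ 2 ≤ δ := pow_le_of_le_one hδ0 hδ1 (by norm_num)
          linarith
  have bx2 : |x| ≤ 1 / 2 := by linarith
  have blog : |Real.log P - (x - x ^ 2 / 2)| ≤ 2 * |x| ^ 3 := by
    set y : ℝ := 1 - P with hydef
    have hy1 : |y| < 1 := by
      have : |y| = |x| := by rw [hydef, hxdef, abs_sub_comm]
      rw [this]; linarith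
    have hlb := Real.abs_log_sub_add_sum_range_le hy1 2
    rw [Finset.sum_range_succ, Finset.sum_range_one] at hlb
    norm_num at hlb
    have h1P : (1:ℝ) - y = P := by rw [hydef]; ring
    rw [h1P] at hlb
    have hyx : y = -x := by rw [hydef, hxdef]; ring
    have habs : |y| = |x| := by rw [hyx, abs_neg]
    have lhs_eq : Real.log P - (x - x ^ 2 / 2) = y + y ^ 2 / 2 + Real.log P := by
      rw [hyx]; ring
    rw [lhs_eq]
    calc |y + y ^ 2 / 2 + Real.log P| ≤ |y| ^ 3 / (1 - |y|) := hlb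
      _ ≤ |x| ^ 3 / (1 / 2) := by
          rw [habs]
          apply div_le_div_of_nonneg_left (pow_nonneg (abs_nonneg _) 3) (by norm_num)
          · linarith
      _ = 2 * |x| ^ 3 := by ring
  -- combine
  have hxα : |x - α| ≤ δ ^ 2 / 2 + δ ^ 3 := by
    have : x - α = (P - 1 - α - β / 2) + β / 2 := by rw [hxdef]; ring
    rw [this]
    calc |P - 1 - α - β / 2 + β / 2| ≤ |P - 1 - α - β / 2| + |β / 2| := abs_add_le _ _
      _ ≤ δ ^ 3 + δ ^ 2 / 2 := by
          refine add_le_add b3 ?_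
          rw [abs_div, abs_two]; linarith [bβ]
      _ = δ ^ 2 / 2 + δ ^ 3 := by ring
  have hxpα : |x + α| ≤ 4 * δ := by
    calc |x + α| ≤ |x| + |α| := abs_add_le _ _
      _ ≤ 3 * δ + δ := add_le_add bx bα
      _ = 4 * δ := by ring
  have hsqdiff : |x ^ 2 - α ^ 2| ≤ (δ ^ 2 / 2 + δ ^ 3) * (4 * δ) := by
    have : x ^ 2 - α ^ 2 = (x - α) * (x + α) := by ring
    rw [this, abs_mul]
    exact mul_le_mul hxα hxpα (abs_nonneg _) (by positivity)
  have hr : |Real.log P - α - (β - α ^ 2) / 2| ≤ 60 * δ ^ 3 := by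
    have hdec : Real.log P - α - (β - α ^ 2) / 2
        = (Real.log P - (x - x ^ 2 / 2)) + (x - α - β / 2) + (α ^ 2 - x ^ 2) / 2 := by
      ring
    have hx3 : |x| ^ 3 ≤ (3 * δ) ^ 3 := pow_le_pow_left₀ (abs_nonneg _) bx 3
    have habs2 : |x - α - β / 2| ≤ δ ^ 3 := b3
    calc |Real.log P - α - (β - α ^ 2) / 2|
        = |(Real.log P - (x - x ^ 2 / 2)) + (x - α - β / 2) + (α ^ 2 - x ^ 2) / 2| := by
          rw [hdec]
      _ ≤ |(Real.log P - (x - x ^ 2 / 2)) + (x - α - β / 2)| + |(α ^ 2 - x ^ 2) / 2| :=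
          abs_add_le _ _
      _ ≤ |Real.log P - (x - x ^ 2 / 2)| + |x - α - β / 2| + |(α ^ 2 - x ^ 2) / 2| := by
          gcongr; exact abs_add_le _ _
      _ ≤ 2 * |x| ^ 3 + δ ^ 3 + (δ ^ 2 / 2 + δ ^ 3) * (4 * δ) / 2 := by
          refine add_le_add (add_le_add blog habs2) ?_
          rw [abs_div, abs_two, abs_sub_comm]
          linarith [hsqdiff]
      _ ≤ 60 * δ ^ 3 := by
          have hδ4 : δ ^ 4 ≤ δ ^ 3 := pow_le_pow_of_le_one hδ0 hδ1 (by norm_num)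
          have hx3' : |x| ^ 3 ≤ 27 * δ ^ 3 := by
            calc |x| ^ 3 ≤ (3 * δ) ^ 3 := hx3
              _ = 27 * δ ^ 3 := by ring
          have hexp : (δ ^ 2 / 2 + δ ^ 3) * (4 * δ) / 2 = δ ^ 3 + 2 * δ ^ 4 := by ring
          rw [hexp]
          linarith [pow_nonneg hδ0 3]
  -- final assembly
  have hlogZ : Real.log (vmZ a b 0) - Real.log (vmZ (a + w * v 0) (b + w * v 1) (w * v 2))
      = - Real.log P := by
    rw [hP, Real.log_div (vmZ_ne _ _ _) (vmZ_ne _ _ _)]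
    ring
  have hαn : (n : ℝ) * α = sq * (v 0 * M1 + v 1 * M2 + v 2 * (M1 * M2)) := by
    rw [hα, hM3, ← mul_assoc, mul_comm (n:ℝ) w, hwn]
  have htarget : (n : ℝ) * (Real.log (vmZ a b 0)
        - Real.log (vmZ (a + w * v 0) (b + w * v 1) (w * v 2)))
      + sq * (v 0 * M1 + v 1 * M2 + v 2 * (M1 * M2))
      + (1 / 2) * ∑ j : Fin 3, ∑ l : Fin 3, v j * GammaLAN μ Θ0 j l * v l
      = -((n : ℝ) * (Real.log P - α - (β - α ^ 2) / 2)) := by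
    rw [hlogZ, hQ, ← hαn]
    ring
  rw [htarget, abs_neg, abs_mul, abs_of_pos hn0]
  calc (n : ℝ) * |Real.log P - α - (β - α ^ 2) / 2| ≤ (n : ℝ) * (60 * δ ^ 3) :=
      mul_le_mul_of_nonneg_left hr hn0.le
    _ = 60 * σ ^ 3 / sq := by
        have hnw3 : (n:ℝ) * w ^ 3 = sq⁻¹ := by
          rw [← hsq2, hwdef]; field_simp
        rw [hδdef, div_eq_mul_inv, ← hnw3]
        ring
end Core

end BcvmAux


open BcvmAux

set_option maxHeartbeats 1000000 in
/-- Local asymptotic normality of the bivariate cosine von Mises model at `κ₃ = 0`: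
the log-likelihood ratio `Λ^{(n)}` admits the quadratic expansion
`Λ^{(n)} = kₙ'Δ^{(n)} − ½ kₙ'Γkₙ + o_P(1)` under the null. -/
theorem bcvm_local_asymptotic_normality
    {Ω : Type*} [MeasurableSpace Ω] (μ : Measure Ω) [IsProbabilityMeasure μ]
    (κ1 κ2 : ℝ) (hκ1 : 0 ≤ κ1) (hκ2 : 0 ≤ κ2)
    (Θ : ℕ → Ω → ℝ × ℝ) (hΘmeas : ∀ i, Measurable (Θ i))
    (hiid : iIndepFun Θ μ)
    (hlaw : ∀ i, Measure.map (Θ i) μ =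
      (volume.restrict (Set.Ico (-Real.pi) Real.pi ×ˢ Set.Ico (-Real.pi) Real.pi)).withDensity
        (fun p => ENNReal.ofReal (bcvmDensity κ1 κ2 0 p)))
    (k : ℕ → Fin 3 → ℝ) (hkbdd : ∃ M : ℝ, ∀ (n : ℕ) (j : Fin 3), |k n j| ≤ M)
    (hpos1 : ∀ n : ℕ, 0 ≤ κ1 + (Real.sqrt n)⁻¹ * k n 0)
    (hpos2 : ∀ n : ℕ, 0 ≤ κ2 + (Real.sqrt n)⁻¹ * k n 1) :
    TendstoInMeasure μ
      (fun (n : ℕ) ω =>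
        (∑ i ∈ Finset.range n,
            Real.log
              (bcvmDensity (κ1 + (Real.sqrt n)⁻¹ * k n 0) (κ2 + (Real.sqrt n)⁻¹ * k n 1)
                  ((Real.sqrt n)⁻¹ * k n 2) (Θ i ω)
                / bcvmDensity κ1 κ2 0 (Θ i ω)))
          - ((∑ j : Fin 3, k n j * centralSeq μ Θ n ω j)
              - (1 / 2) * ∑ j : Fin 3, ∑ l : Fin 3, k n j * GammaLAN μ (Θ 0) j l * k n l))
      atTop (fun _ => (0 : ℝ)) := by
  obtain ⟨M, hMb⟩ := hkbdd
  have hM0 : 0 ≤ M := le_trans (abs_nonneg _) (hMb 0 0)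
  set M1 : ℝ := ∫ ω', Real.cos (Θ 0 ω').1 ∂μ with hM1def
  set M2 : ℝ := ∫ ω', Real.cos (Θ 0 ω').2 ∂μ with hM2def
  -- the deterministic sequence
  set an : ℕ → ℝ := fun n =>
    (n : ℝ) * (Real.log (vmZ κ1 κ2 0)
        - Real.log (vmZ (κ1 + (Real.sqrt n)⁻¹ * k n 0) (κ2 + (Real.sqrt n)⁻¹ * k n 1)
            ((Real.sqrt n)⁻¹ * k n 2)))
      + Real.sqrt n * (k n 0 * M1 + k n 1 * M2 + k n 2 * (M1 * M2))
      + (1 / 2) * ∑ j : Fin 3, ∑ l : Fin 3, k n j * GammaLAN μ (Θ 0) j l * k n l with handef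
  -- pointwise identity: the random variable is the constant `an n`
  have hwinv : ∀ n : ℕ, (Real.sqrt n)⁻¹ * (n : ℝ) = Real.sqrt n := by
    intro n
    rcases Nat.eq_zero_or_pos n with h | h
    · simp [h]
    · have hn0 : (0:ℝ) < n := by exact_mod_cast h
      have hs : (0:ℝ) < Real.sqrt n := Real.sqrt_pos.mpr hn0
      have h2 : Real.sqrt n * Real.sqrt n = (n:ℝ) := Real.mul_self_sqrt hn0.le
      rw [inv_mul_eq_div, div_eq_iff hs.ne']
      exact h2.symm
  have hpt : ∀ n ω,
      (∑ i ∈ Finset.range n,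
          Real.log
            (bcvmDensity (κ1 + (Real.sqrt n)⁻¹ * k n 0) (κ2 + (Real.sqrt n)⁻¹ * k n 1)
                ((Real.sqrt n)⁻¹ * k n 2) (Θ i ω)
              / bcvmDensity κ1 κ2 0 (Θ i ω)))
        - ((∑ j : Fin 3, k n j * centralSeq μ Θ n ω j)
            - (1 / 2) * ∑ j : Fin 3, ∑ l : Fin 3, k n j * GammaLAN μ (Θ 0) j l * k n l)
      = an n := by
    intro n ω
    set w : ℝ := (Real.sqrt n)⁻¹ with hwdef
    set Zb : ℝ := vmZ κ1 κ2 0 with hZb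
    set Zn : ℝ := vmZ (κ1 + w * k n 0) (κ2 + w * k n 1) (w * k n 2) with hZn
    have hsummand : ∀ i,
        Real.log (bcvmDensity (κ1 + w * k n 0) (κ2 + w * k n 1) (w * k n 2) (Θ i ω)
            / bcvmDensity κ1 κ2 0 (Θ i ω))
        = (Real.log Zb - Real.log Zn)
          + ((w * k n 0) * Real.cos (Θ i ω).1 + (w * k n 1) * Real.cos (Θ i ω).2
            + (w * k n 2) * Real.cos ((Θ i ω).1 - (Θ i ω).2)) := by
      intro i
      have hd1 : bcvmDensity (κ1 + w * k n 0) (κ2 + w * k n 1) (w * k n 2) (Θ i ω) ≠ 0 :=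
        (bcvmDensity_pos _ _ _ _).ne'
      have hd2 : bcvmDensity κ1 κ2 0 (Θ i ω) ≠ 0 := (bcvmDensity_pos _ _ _ _).ne'
      rw [Real.log_div hd1 hd2]
      simp only [bcvmDensity_eq, vmE]
      rw [Real.log_mul (inv_ne_zero (vmZ_ne _ _ _)) (Real.exp_ne_zero _),
        Real.log_mul (inv_ne_zero (vmZ_ne _ _ _)) (Real.exp_ne_zero _),
        Real.log_inv, Real.log_inv, Real.log_exp, Real.log_exp]
      rw [← hZb, ← hZn]
      ring
    rw [Finset.sum_congr rfl (fun i _ => hsummand i)]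
    rw [Finset.sum_add_distrib, Finset.sum_const, Finset.card_range, nsmul_eq_mul]
    have hsplit : ∑ i ∈ Finset.range n,
        ((w * k n 0) * Real.cos (Θ i ω).1 + (w * k n 1) * Real.cos (Θ i ω).2
          + (w * k n 2) * Real.cos ((Θ i ω).1 - (Θ i ω).2))
        = (w * k n 0) * (∑ i ∈ Finset.range n, Real.cos (Θ i ω).1)
          + (w * k n 1) * (∑ i ∈ Finset.range n, Real.cos (Θ i ω).2)
          + (w * k n 2) * (∑ i ∈ Finset.range n, Real.cos ((Θ i ω).1 - (Θ i ω).2)) := by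
      rw [Finset.sum_add_distrib, Finset.sum_add_distrib, Finset.mul_sum, Finset.mul_sum,
        Finset.mul_sum]
    rw [hsplit]
    have hcs : ∑ j : Fin 3, k n j * centralSeq μ Θ n ω j
        = k n 0 * (w * ((∑ i ∈ Finset.range n, Real.cos (Θ i ω).1) - n * M1))
          + k n 1 * (w * ((∑ i ∈ Finset.range n, Real.cos (Θ i ω).2) - n * M2))
          + k n 2 * (w * ((∑ i ∈ Finset.range n, Real.cos ((Θ i ω).1 - (Θ i ω).2))
              - n * (M1 * M2))) := by
      rw [Fin.sum_univ_three]
      simp only [centralSeq, Matrix.cons_val_zero, Matrix.cons_val_one, Matrix.head_cons,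
        Matrix.cons_val_two, Matrix.tail_cons]
      rw [Finset.sum_sub_distrib, Finset.sum_sub_distrib, Finset.sum_sub_distrib,
        Finset.sum_const, Finset.card_range, nsmul_eq_mul, ← hM1def,
        Finset.sum_const, Finset.card_range, nsmul_eq_mul, ← hM2def,
        Finset.sum_const, Finset.card_range, nsmul_eq_mul, ← hwdef]
    rw [hcs]
    simp only [handef]
    have hw : w * (n : ℝ) = Real.sqrt n := hwinv n
    rw [← hwdef, ← hZn]
    linear_combination (k n 0 * M1 + k n 1 * M2 + k n 2 * (M1 * M2)) * hw
  -- the deterministic sequence tends to 0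
  have han : Tendsto an atTop (𝓝 0) := by
    rw [Metric.tendsto_atTop]
    intro ε hε
    set C : ℝ := 60 * (3 * M) ^ 3 with hCdef
    have hC0 : 0 ≤ C := by positivity
    refine ⟨max 1 (⌈(18 * M) ^ 2⌉₊ + ⌈(C / ε) ^ 2⌉₊ + 1), fun n hn => ?_⟩
    have hn1 : 1 ≤ n := le_trans (le_max_left _ _) hn
    have hn2 : (⌈(18 * M) ^ 2⌉₊ + ⌈(C / ε) ^ 2⌉₊ + 1 : ℕ) ≤ n := le_trans (le_max_right _ _) hn
    have hnR1 : ((18 * M) ^ 2 : ℝ) ≤ n := by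
      calc ((18 * M) ^ 2 : ℝ) ≤ (⌈(18 * M) ^ 2⌉₊ : ℕ) := Nat.le_ceil _
        _ ≤ (n : ℝ) := by exact_mod_cast le_trans (by omega) hn2
    have hnR2 : ((C / ε) ^ 2 : ℝ) < n := by
      calc ((C / ε) ^ 2 : ℝ) ≤ (⌈(C / ε) ^ 2⌉₊ : ℕ) := Nat.le_ceil _
        _ < (n : ℝ) := by exact_mod_cast lt_of_lt_of_le (by omega) hn2
    have hσ : |k n 0| + |k n 1| + |k n 2| ≤ Real.sqrt n * (1 / 6) := by
      have h18 : 18 * M ≤ Real.sqrt n := by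
        have := Real.sqrt_le_sqrt hnR1
        rwa [Real.sqrt_sq (by positivity)] at this
      calc |k n 0| + |k n 1| + |k n 2| ≤ M + M + M :=
          add_le_add (add_le_add (hMb n 0) (hMb n 1)) (hMb n 2)
        _ = (18 * M) * (1 / 6) + 0 := by ring
        _ ≤ Real.sqrt n * (1 / 6) + 0 := by
            have : (0:ℝ) ≤ 1/6 := by norm_num
            gcongr
        _ = Real.sqrt n * (1 / 6) := by ring
    have hcb := core_bound (μ := μ) (a := κ1) (b := κ2) (Θ0 := Θ 0) (hΘmeas 0) (hlaw 0)
      (k n) hn1 hσ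
    have hsq0 : (0:ℝ) < Real.sqrt n := Real.sqrt_pos.mpr (by exact_mod_cast hn1)
    have hσM : (|k n 0| + |k n 1| + |k n 2|) ^ 3 ≤ (3 * M) ^ 3 := by
      apply pow_le_pow_left₀ (by positivity)
      calc |k n 0| + |k n 1| + |k n 2| ≤ M + M + M :=
          add_le_add (add_le_add (hMb n 0) (hMb n 1)) (hMb n 2)
        _ = 3 * M := by ring
    have hb2 : |an n| ≤ C / Real.sqrt n := by
      rw [handef]
      refine le_trans hcb ?_
      rw [hCdef]
      apply div_le_div_of_nonneg_right ?_ hsq0.le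
      · nlinarith [hσM]
    have hCε : C / ε < Real.sqrt n := by
      have h4 := Real.sqrt_lt_sqrt (by positivity : (0:ℝ) ≤ (C / ε) ^ 2) hnR2
      rwa [Real.sqrt_sq (by positivity : (0:ℝ) ≤ C / ε)] at h4
    have hfin : C / Real.sqrt n < ε := by
      rw [div_lt_iff₀ hsq0]
      calc C = (C / ε) * ε := by field_simp
        _ < Real.sqrt n * ε := mul_lt_mul_of_pos_right hCε hε
        _ = ε * Real.sqrt n := by ring
    rw [Real.dist_eq, sub_zero]
    exact lt_of_le_of_lt hb2 hfin
  -- conclude convergence in measure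
  intro ε hε
  have hev : ∀ᶠ n in atTop,
      μ {ω | ε ≤ edist ((∑ i ∈ Finset.range n,
          Real.log
            (bcvmDensity (κ1 + (Real.sqrt n)⁻¹ * k n 0) (κ2 + (Real.sqrt n)⁻¹ * k n 1)
                ((Real.sqrt n)⁻¹ * k n 2) (Θ i ω)
              / bcvmDensity κ1 κ2 0 (Θ i ω)))
        - ((∑ j : Fin 3, k n j * centralSeq μ Θ n ω j)
            - (1 / 2) * ∑ j : Fin 3, ∑ l : Fin 3, k n j * GammaLAN μ (Θ 0) j l * k n l)) 0} = 0 := by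
    have hev2 := EMetric.tendsto_nhds.mp han ε hε
    filter_upwards [hev2] with n hn2
    have : {ω | ε ≤ edist ((∑ i ∈ Finset.range n,
          Real.log
            (bcvmDensity (κ1 + (Real.sqrt n)⁻¹ * k n 0) (κ2 + (Real.sqrt n)⁻¹ * k n 1)
                ((Real.sqrt n)⁻¹ * k n 2) (Θ i ω)
              / bcvmDensity κ1 κ2 0 (Θ i ω)))
        - ((∑ j : Fin 3, k n j * centralSeq μ Θ n ω j)
            - (1 / 2) * ∑ j : Fin 3, ∑ l : Fin 3, k n j * GammaLAN μ (Θ 0) j l * k n l)) 0} = ∅ := by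
      rw [Set.eq_empty_iff_forall_notMem]
      intro ω hω
      rw [Set.mem_setOf_eq, hpt n ω] at hω
      exact absurd hω (not_le.mpr hn2)
    rw [this, measure_empty]
  refine Tendsto.congr' ?_ tendsto_const_nhds
  filter_upwards [hev] with n hn2
  exact hn2.symm
end

section
/- Fix (r₁, r₂) ∈ ℝ² and locations μ¹, μ² ∈ ℝ. Suppose θ¹ and θ² are independent, and let μ̂ⁿ¹, μ̂ⁿ² be sequences of random variables (estimators computed from the sample) such that √n(μ̂ⁿ¹ − μ¹) and √n(μ̂ⁿ² − μ²) are O_P(1). Denote by D̂_c^{(n)}(r₁,r₂) the cosine statistic computed from the estimator-centred sample (θ¹ᵢ − μ̂ⁿ¹, θ²ᵢ − μ̂ⁿ²), i = 1,…,n, and by D_c^{(n)}(r₁,r₂) the cosine statistic computed from the sample (θ¹ᵢ − μ¹, θ²ᵢ − μ²), i = 1,…,n. Then √n (D̂_c^{(n)}(r₁,r₂) − D_c^{(n)}(r₁,r₂)) converges to 0 in probability as n → ∞. -/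
open MeasureTheory ProbabilityTheory Filter Real
open scoped NNReal BigOperators Topology

/-- A sequence of random variables is bounded in probability (`O_P(1)`). -/
def BoundedInProbability {Ω : Type*} [MeasurableSpace Ω] (μ : Measure Ω)
    (X : ℕ → Ω → ℝ) : Prop :=
  ∀ ε : ℝ, 0 < ε → ∃ M : ℝ, 0 < M ∧ ∀ n : ℕ, μ {ω | M < |X n ω|} < ENNReal.ofReal ε

/-- The complex version of the cosine statistic: `Dc` is its real part. -/
noncomputable def Zc (r1 r2 : ℝ) (n : ℕ) (a b : ℕ → ℝ) : ℂ :=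
  (n : ℂ)⁻¹ * ∑ i ∈ Finset.range n, Complex.exp (((r1 * a i + r2 * b i : ℝ)) * Complex.I)
    - ((n : ℂ)⁻¹ * ∑ i ∈ Finset.range n, Complex.exp (((r1 * a i : ℝ)) * Complex.I))
        * ((n : ℂ)⁻¹ * ∑ i ∈ Finset.range n, Complex.exp (((r2 * b i : ℝ)) * Complex.I))

lemma Zc_eq (r1 r2 : ℝ) (n : ℕ) (a b : ℕ → ℝ) :
    Zc r1 r2 n a b =
      (((n : ℝ)⁻¹ * ∑ i ∈ Finset.range n, Real.cos (r1 * a i + r2 * b i) : ℝ)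
        + ((n : ℝ)⁻¹ * ∑ i ∈ Finset.range n, Real.sin (r1 * a i + r2 * b i) : ℝ) * Complex.I)
      - ((((n : ℝ)⁻¹ * ∑ i ∈ Finset.range n, Real.cos (r1 * a i) : ℝ)
          + ((n : ℝ)⁻¹ * ∑ i ∈ Finset.range n, Real.sin (r1 * a i) : ℝ) * Complex.I))
        * ((((n : ℝ)⁻¹ * ∑ i ∈ Finset.range n, Real.cos (r2 * b i) : ℝ)
          + ((n : ℝ)⁻¹ * ∑ i ∈ Finset.range n, Real.sin (r2 * b i) : ℝ) * Complex.I)) := by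
  have h : ∀ x : ℝ, Complex.exp ((x : ℂ) * Complex.I)
      = (Real.cos x : ℂ) + (Real.sin x : ℂ) * Complex.I := by
    intro x
    rw [Complex.exp_mul_I, ← Complex.ofReal_cos, ← Complex.ofReal_sin]
  have hsum : ∀ f : ℕ → ℝ, ∑ i ∈ Finset.range n, ((Real.cos (f i) : ℂ) + (Real.sin (f i) : ℂ) * Complex.I)
      = ((∑ i ∈ Finset.range n, Real.cos (f i) : ℝ) : ℂ)
        + ((∑ i ∈ Finset.range n, Real.sin (f i) : ℝ) : ℂ) * Complex.I := by
    intro f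
    rw [Finset.sum_add_distrib, ← Finset.sum_mul]
    push_cast
    ring
  unfold Zc
  simp only [h, hsum]
  simp only [Complex.ofReal_mul, Complex.ofReal_inv, Complex.ofReal_natCast]
  ring

lemma Zc_re (r1 r2 : ℝ) (n : ℕ) (a b : ℕ → ℝ) : (Zc r1 r2 n a b).re = Dc r1 r2 n a b := by
  rw [Zc_eq]
  simp only [Dc, Complex.add_re, Complex.sub_re, Complex.mul_re, Complex.mul_im,
    Complex.add_im, Complex.sub_im, Complex.ofReal_re, Complex.ofReal_im,
    Complex.I_re, Complex.I_im]
  ring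

lemma Zc_shift (r1 r2 c d : ℝ) (n : ℕ) (a b : ℕ → ℝ) :
    Zc r1 r2 n (fun i => a i - c) (fun i => b i - d)
      = Complex.exp ((-(r1 * c + r2 * d) : ℝ) * Complex.I) * Zc r1 r2 n a b := by
  have key : ∀ (x y : ℝ), Complex.exp (((x - y : ℝ)) * Complex.I)
      = Complex.exp ((-y : ℝ) * Complex.I) * Complex.exp ((x : ℝ) * Complex.I) := by
    intro x y
    rw [← Complex.exp_add]
    push_cast
    ring_nf
  unfold Zc
  have e1 : ∀ i, r1 * (a i - c) + r2 * (b i - d) = (r1 * a i + r2 * b i) - (r1 * c + r2 * d) := by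
    intro i; ring
  have e2 : ∀ i, r1 * (a i - c) = r1 * a i - r1 * c := by intro i; ring
  have e3 : ∀ i, r2 * (b i - d) = r2 * b i - r2 * d := by intro i; ring
  simp only [e1]
  simp only [e2, e3]
  simp only [key, ← Finset.mul_sum]
  have hexp : Complex.exp ((-(r1 * c) : ℝ) * Complex.I) * Complex.exp ((-(r2 * d) : ℝ) * Complex.I)
      = Complex.exp ((-(r1 * c + r2 * d) : ℝ) * Complex.I) := by
    rw [← Complex.exp_add]; push_cast; ring_nf
  rw [← hexp]
  ring

lemma abs_exp_I_sub_one (x : ℝ) :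
    ‖Complex.exp ((x : ℝ) * Complex.I) - 1‖ ≤ |x| := by
  have h1 : Complex.exp ((x : ℝ) * Complex.I) - 1
      = ((Real.cos x - 1 : ℝ) : ℂ) + ((Real.sin x : ℝ) : ℂ) * Complex.I := by
    rw [Complex.exp_mul_I, ← Complex.ofReal_cos, ← Complex.ofReal_sin]
    push_cast; ring
  rw [h1]
  have h2 : ‖((Real.cos x - 1 : ℝ) : ℂ) + ((Real.sin x : ℝ) : ℂ) * Complex.I‖
      = Real.sqrt ((Real.cos x - 1) ^ 2 + (Real.sin x) ^ 2) := by
    rw [Complex.norm_add_mul_I]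
  rw [h2]
  have h3 : (Real.cos x - 1) ^ 2 + (Real.sin x) ^ 2 = 2 - 2 * Real.cos x := by
    have := Real.sin_sq_add_cos_sq x
    nlinarith
  have h4 : 2 - 2 * Real.cos x = 4 * Real.sin (x / 2) ^ 2 := by
    have hx : Real.cos x = 2 * Real.cos (x/2) ^ 2 - 1 := by
      have h := Real.cos_two_mul (x/2)
      have : 2 * (x/2) = x := by ring
      rw [this] at h
      linarith
    have h5 : Real.sin (x/2) ^ 2 + Real.cos (x/2) ^ 2 = 1 := Real.sin_sq_add_cos_sq _
    nlinarith
  rw [h3, h4]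
  have h6 : 4 * Real.sin (x / 2) ^ 2 ≤ x ^ 2 := by
    have := Real.abs_sin_le_abs (x := x / 2)
    nlinarith [abs_nonneg (Real.sin (x/2)), abs_nonneg (x/2), sq_abs (Real.sin (x/2)), sq_abs (x/2),
      mul_self_le_mul_self (abs_nonneg (Real.sin (x/2))) this]
  calc Real.sqrt (4 * Real.sin (x / 2) ^ 2) ≤ Real.sqrt (x ^ 2) := Real.sqrt_le_sqrt h6
    _ = |x| := Real.sqrt_sq_eq_abs x

/-- Key deterministic bound: shifting the sample changes `Dc` by at most
`|r₁ c + r₂ d|` times the modulus of the complex statistic. -/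
lemma Dc_shift_bound (r1 r2 c d : ℝ) (n : ℕ) (a b : ℕ → ℝ) :
    |Dc r1 r2 n (fun i => a i - c) (fun i => b i - d) - Dc r1 r2 n a b|
      ≤ |r1 * c + r2 * d| * ‖Zc r1 r2 n a b‖ := by
  rw [← Zc_re, ← Zc_re, Zc_shift]
  set α := Complex.exp ((-(r1 * c + r2 * d) : ℝ) * Complex.I) with hα
  set z := Zc r1 r2 n a b with hz
  have h1 : (α * z).re - z.re = ((α - 1) * z).re := by
    rw [sub_one_mul, Complex.sub_re]
  rw [h1]
  calc |((α - 1) * z).re| ≤ ‖(α - 1) * z‖ := Complex.abs_re_le_norm _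
    _ = ‖α - 1‖ * ‖z‖ := norm_mul _ _
    _ ≤ |(-(r1 * c + r2 * d))| * ‖z‖ := by
        apply mul_le_mul_of_nonneg_right _ (norm_nonneg z)
        exact abs_exp_I_sub_one _
    _ = |r1 * c + r2 * d| * ‖z‖ := by rw [abs_neg]

/-- SLLN for bounded functionals of an iid sequence. -/
lemma avg_tendsto {Ω : Type*} [MeasurableSpace Ω] (μ : Measure Ω) [IsProbabilityMeasure μ]
    (Θ : ℕ → Ω → ℝ × ℝ) (hΘmeas : ∀ i, Measurable (Θ i))
    (hiid : iIndepFun Θ μ)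
    (θ1 θ2 : Ω → ℝ)
    (hident : ∀ i, IdentDistrib (Θ i) (fun ω => (θ1 ω, θ2 ω)) μ μ)
    (g : ℝ × ℝ → ℝ) (hg : Measurable g) (hgb : ∀ p, |g p| ≤ 1) :
    ∀ᵐ ω ∂μ, Tendsto (fun n : ℕ => (n:ℝ)⁻¹ * ∑ i ∈ Finset.range n, g (Θ i ω)) atTop
      (𝓝 (∫ ω, g (θ1 ω, θ2 ω) ∂μ)) := by
  have hint : Integrable (fun ω => g (Θ 0 ω)) μ := by
    apply Integrable.mono' (integrable_const (1:ℝ)) ((hg.comp (hΘmeas 0)).aestronglyMeasurable)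
    exact ae_of_all _ fun ω => by simpa using hgb (Θ 0 ω)
  have hpind : Pairwise (Function.onFun (IndepFun · · μ) (fun i ω => g (Θ i ω))) := by
    intro i j hij
    exact (hiid.indepFun hij).comp hg hg
  have hid : ∀ i, IdentDistrib (fun ω => g (Θ i ω)) (fun ω => g (Θ 0 ω)) μ μ :=
    fun i => ((hident i).trans (hident 0).symm).comp hg
  have hlln := strong_law_ae_real (fun i ω => g (Θ i ω)) hint hpind hid
  have hE : (∫ ω, g (Θ 0 ω) ∂μ) = ∫ ω, g (θ1 ω, θ2 ω) ∂μ := ((hident 0).comp hg).integral_eq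
  filter_upwards [hlln] with ω hω
  rw [← hE]
  simpa [div_eq_inv_mul] using hω

/-- Boundedness/integrability helper. -/
lemma int_of_bdd {Ω : Type*} [MeasurableSpace Ω] (μ : Measure Ω) [IsProbabilityMeasure μ]
    (f : Ω → ℝ) (hf : Measurable f) (hb : ∀ ω, |f ω| ≤ 1) : Integrable f μ := by
  apply Integrable.mono' (integrable_const (1:ℝ)) hf.aestronglyMeasurable
  exact ae_of_all _ fun ω => by simpa using hb ω

/-- Proposition 3: estimated centring has no asymptotic effect on the cosine statistic,
`√n (D̂_c^{(n)}(r₁,r₂) − D_c^{(n)}(r₁,r₂)) = o_P(1)`. -/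
theorem Dc_centring_invariance
    {Ω : Type*} [MeasurableSpace Ω] (μ : Measure Ω) [IsProbabilityMeasure μ]
    (θ1 θ2 : Ω → ℝ) (hθ1 : Measurable θ1) (hθ2 : Measurable θ2)
    (hindep : IndepFun θ1 θ2 μ)
    (Θ : ℕ → Ω → ℝ × ℝ) (hΘmeas : ∀ i, Measurable (Θ i))
    (hiid : iIndepFun Θ μ)
    (hident : ∀ i, IdentDistrib (Θ i) (fun ω => (θ1 ω, θ2 ω)) μ μ)
    (r1 r2 : ℝ) (μ1 μ2 : ℝ)
    (μhat1 μhat2 : ℕ → Ω → ℝ)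
    (hμhat1meas : ∀ n, Measurable (μhat1 n)) (hμhat2meas : ∀ n, Measurable (μhat2 n))
    (hμhat1 : BoundedInProbability μ (fun n ω => Real.sqrt n * (μhat1 n ω - μ1)))
    (hμhat2 : BoundedInProbability μ (fun n ω => Real.sqrt n * (μhat2 n ω - μ2))) :
    TendstoInMeasure μ
      (fun (n : ℕ) ω =>
        Real.sqrt n *
          (Dc r1 r2 n (fun i => (Θ i ω).1 - μhat1 n ω) (fun i => (Θ i ω).2 - μhat2 n ω)
            - Dc r1 r2 n (fun i => (Θ i ω).1 - μ1) (fun i => (Θ i ω).2 - μ2)))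
      atTop (fun _ => (0 : ℝ)) := by
  -- notation
  set f : ℕ → Ω → ℝ := fun n ω =>
    Real.sqrt n *
      (Dc r1 r2 n (fun i => (Θ i ω).1 - μhat1 n ω) (fun i => (Θ i ω).2 - μhat2 n ω)
        - Dc r1 r2 n (fun i => (Θ i ω).1 - μ1) (fun i => (Θ i ω).2 - μ2)) with hf
  set B : ℕ → Ω → ℝ := fun n ω =>
    ‖Zc r1 r2 n (fun i => (Θ i ω).1 - μ1) (fun i => (Θ i ω).2 - μ2)‖ with hB
  set G : ℕ → Ω → ℝ := fun n ω =>
    |r1 * (Real.sqrt n * (μhat1 n ω - μ1))| + |r2 * (Real.sqrt n * (μhat2 n ω - μ2))| with hG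
  -- Step 1: pointwise bound |f n ω| ≤ G n ω * B n ω
  have hbound : ∀ n ω, |f n ω| ≤ G n ω * B n ω := by
    intro n ω
    have e1 : (fun i => (Θ i ω).1 - μhat1 n ω)
        = (fun i => ((Θ i ω).1 - μ1) - (μhat1 n ω - μ1)) := by funext i; ring
    have e2 : (fun i => (Θ i ω).2 - μhat2 n ω)
        = (fun i => ((Θ i ω).2 - μ2) - (μhat2 n ω - μ2)) := by funext i; ring
    have hd := Dc_shift_bound r1 r2 (μhat1 n ω - μ1) (μhat2 n ω - μ2) n
      (fun i => (Θ i ω).1 - μ1) (fun i => (Θ i ω).2 - μ2)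
    rw [← e1, ← e2] at hd
    have hs : (0:ℝ) ≤ Real.sqrt n := Real.sqrt_nonneg _
    have h1 : |f n ω| = Real.sqrt n * |Dc r1 r2 n (fun i => (Θ i ω).1 - μhat1 n ω)
        (fun i => (Θ i ω).2 - μhat2 n ω)
        - Dc r1 r2 n (fun i => (Θ i ω).1 - μ1) (fun i => (Θ i ω).2 - μ2)| := by
      rw [hf, abs_mul, abs_of_nonneg hs]
    rw [h1]
    have h2 : Real.sqrt n * |Dc r1 r2 n (fun i => (Θ i ω).1 - μhat1 n ω)
        (fun i => (Θ i ω).2 - μhat2 n ω)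
        - Dc r1 r2 n (fun i => (Θ i ω).1 - μ1) (fun i => (Θ i ω).2 - μ2)|
        ≤ Real.sqrt n * (|r1 * (μhat1 n ω - μ1) + r2 * (μhat2 n ω - μ2)| * B n ω) :=
      mul_le_mul_of_nonneg_left hd hs
    refine h2.trans ?_
    have h3 : Real.sqrt n * (|r1 * (μhat1 n ω - μ1) + r2 * (μhat2 n ω - μ2)| * B n ω)
        = (Real.sqrt n * |r1 * (μhat1 n ω - μ1) + r2 * (μhat2 n ω - μ2)|) * B n ω := by ring
    rw [h3]
    apply mul_le_mul_of_nonneg_right _ (norm_nonneg _)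
    have h4 : Real.sqrt n * |r1 * (μhat1 n ω - μ1) + r2 * (μhat2 n ω - μ2)|
        = |r1 * (Real.sqrt n * (μhat1 n ω - μ1)) + r2 * (Real.sqrt n * (μhat2 n ω - μ2))| := by
      rw [← abs_of_nonneg hs, ← abs_mul]
      congr 1
      · rw [abs_of_nonneg hs]
        ring
    rw [h4, hG]
    exact abs_add_le _ _
  -- Step 2: measurability of Z and B
  have hZmeas : ∀ n, Measurable (fun ω =>
      Zc r1 r2 n (fun i => (Θ i ω).1 - μ1) (fun i => (Θ i ω).2 - μ2)) := by
    intro n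
    unfold Zc
    have hexpm : ∀ (u : Ω → ℝ), Measurable u →
        Measurable (fun ω => Complex.exp ((u ω : ℂ) * Complex.I)) := by
      intro u hu
      exact Complex.measurable_exp.comp ((Complex.measurable_ofReal.comp hu).mul_const _)
    have hm1 : ∀ i, Measurable (fun ω => (Θ i ω).1 - μ1) :=
      fun i => (measurable_fst.comp (hΘmeas i)).sub measurable_const
    have hm2 : ∀ i, Measurable (fun ω => (Θ i ω).2 - μ2) :=
      fun i => (measurable_snd.comp (hΘmeas i)).sub measurable_const
    apply Measurable.sub
    · apply Measurable.const_mul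
      apply Finset.measurable_sum
      intro i _
      exact hexpm _ (((hm1 i).const_mul r1).add ((hm2 i).const_mul r2))
    · apply Measurable.mul
      · apply Measurable.const_mul
        apply Finset.measurable_sum
        intro i _
        exact hexpm _ ((hm1 i).const_mul r1)
      · apply Measurable.const_mul
        apply Finset.measurable_sum
        intro i _
        exact hexpm _ ((hm2 i).const_mul r2)
  have hBmeas : ∀ n, Measurable (B n) := fun n =>
    continuous_norm.measurable.comp (hZmeas n)
  -- Step 3: B → 0 almost everywhere
  have hae : ∀ᵐ ω ∂μ, Tendsto (fun n => B n ω) atTop (𝓝 0) := by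
    -- the six bounded functionals
    set gcs : ℝ × ℝ → ℝ := fun p => Real.cos (r1 * (p.1 - μ1) + r2 * (p.2 - μ2)) with hgcs
    set gss : ℝ × ℝ → ℝ := fun p => Real.sin (r1 * (p.1 - μ1) + r2 * (p.2 - μ2)) with hgss
    set gc1 : ℝ × ℝ → ℝ := fun p => Real.cos (r1 * (p.1 - μ1)) with hgc1
    set gs1 : ℝ × ℝ → ℝ := fun p => Real.sin (r1 * (p.1 - μ1)) with hgs1
    set gc2 : ℝ × ℝ → ℝ := fun p => Real.cos (r2 * (p.2 - μ2)) with hgc2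
    set gs2 : ℝ × ℝ → ℝ := fun p => Real.sin (r2 * (p.2 - μ2)) with hgs2
    have hm1 : Measurable (fun p : ℝ × ℝ => r1 * (p.1 - μ1)) :=
      (measurable_fst.sub measurable_const).const_mul r1
    have hm2 : Measurable (fun p : ℝ × ℝ => r2 * (p.2 - μ2)) :=
      (measurable_snd.sub measurable_const).const_mul r2
    have hmcs : Measurable gcs := Real.measurable_cos.comp (hm1.add hm2)
    have hmss : Measurable gss := Real.measurable_sin.comp (hm1.add hm2)
    have hmc1 : Measurable gc1 := Real.measurable_cos.comp hm1
    have hms1 : Measurable gs1 := Real.measurable_sin.comp hm1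
    have hmc2 : Measurable gc2 := Real.measurable_cos.comp hm2
    have hms2 : Measurable gs2 := Real.measurable_sin.comp hm2
    have hbcs : ∀ p, |gcs p| ≤ 1 := fun p => Real.abs_cos_le_one _
    have hbss : ∀ p, |gss p| ≤ 1 := fun p => Real.abs_sin_le_one _
    have hbc1 : ∀ p, |gc1 p| ≤ 1 := fun p => Real.abs_cos_le_one _
    have hbs1 : ∀ p, |gs1 p| ≤ 1 := fun p => Real.abs_sin_le_one _
    have hbc2 : ∀ p, |gc2 p| ≤ 1 := fun p => Real.abs_cos_le_one _
    have hbs2 : ∀ p, |gs2 p| ≤ 1 := fun p => Real.abs_sin_le_one _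
    -- the limits
    set Ecs := ∫ ω, gcs (θ1 ω, θ2 ω) ∂μ with hEcs
    set Ess := ∫ ω, gss (θ1 ω, θ2 ω) ∂μ with hEss
    set Ec1 := ∫ ω, gc1 (θ1 ω, θ2 ω) ∂μ with hEc1
    set Es1 := ∫ ω, gs1 (θ1 ω, θ2 ω) ∂μ with hEs1
    set Ec2 := ∫ ω, gc2 (θ1 ω, θ2 ω) ∂μ with hEc2
    set Es2 := ∫ ω, gs2 (θ1 ω, θ2 ω) ∂μ with hEs2
    -- the independence factorizations
    have hindC : IndepFun (fun ω => Real.cos (r1 * (θ1 ω - μ1)))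
        (fun ω => Real.cos (r2 * (θ2 ω - μ2))) μ :=
      hindep.comp (Real.measurable_cos.comp ((measurable_id.sub measurable_const).const_mul r1))
        (Real.measurable_cos.comp ((measurable_id.sub measurable_const).const_mul r2))
    have hindCS : IndepFun (fun ω => Real.cos (r1 * (θ1 ω - μ1)))
        (fun ω => Real.sin (r2 * (θ2 ω - μ2))) μ :=
      hindep.comp (Real.measurable_cos.comp ((measurable_id.sub measurable_const).const_mul r1))
        (Real.measurable_sin.comp ((measurable_id.sub measurable_const).const_mul r2))
    have hindSC : IndepFun (fun ω => Real.sin (r1 * (θ1 ω - μ1)))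
        (fun ω => Real.cos (r2 * (θ2 ω - μ2))) μ :=
      hindep.comp (Real.measurable_sin.comp ((measurable_id.sub measurable_const).const_mul r1))
        (Real.measurable_cos.comp ((measurable_id.sub measurable_const).const_mul r2))
    have hindS : IndepFun (fun ω => Real.sin (r1 * (θ1 ω - μ1)))
        (fun ω => Real.sin (r2 * (θ2 ω - μ2))) μ :=
      hindep.comp (Real.measurable_sin.comp ((measurable_id.sub measurable_const).const_mul r1))
        (Real.measurable_sin.comp ((measurable_id.sub measurable_const).const_mul r2))
    -- integrability of the component functions
    have ic1 : Integrable (fun ω => Real.cos (r1 * (θ1 ω - μ1))) μ :=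
      int_of_bdd μ _ (Real.measurable_cos.comp ((hθ1.sub measurable_const).const_mul r1))
        (fun ω => Real.abs_cos_le_one _)
    have is1 : Integrable (fun ω => Real.sin (r1 * (θ1 ω - μ1))) μ :=
      int_of_bdd μ _ (Real.measurable_sin.comp ((hθ1.sub measurable_const).const_mul r1))
        (fun ω => Real.abs_sin_le_one _)
    have ic2 : Integrable (fun ω => Real.cos (r2 * (θ2 ω - μ2))) μ :=
      int_of_bdd μ _ (Real.measurable_cos.comp ((hθ2.sub measurable_const).const_mul r2))
        (fun ω => Real.abs_cos_le_one _)
    have is2 : Integrable (fun ω => Real.sin (r2 * (θ2 ω - μ2))) μ :=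
      int_of_bdd μ _ (Real.measurable_sin.comp ((hθ2.sub measurable_const).const_mul r2))
        (fun ω => Real.abs_sin_le_one _)
    have icc : Integrable (fun ω => Real.cos (r1 * (θ1 ω - μ1)) * Real.cos (r2 * (θ2 ω - μ2))) μ := by
      apply int_of_bdd μ _
        ((Real.measurable_cos.comp ((hθ1.sub measurable_const).const_mul r1)).mul
          (Real.measurable_cos.comp ((hθ2.sub measurable_const).const_mul r2)))
      intro ω
      rw [Pi.mul_apply, abs_mul]
      exact mul_le_one₀ (Real.abs_cos_le_one _) (abs_nonneg _) (Real.abs_cos_le_one _)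
    have iss : Integrable (fun ω => Real.sin (r1 * (θ1 ω - μ1)) * Real.sin (r2 * (θ2 ω - μ2))) μ := by
      apply int_of_bdd μ _
        ((Real.measurable_sin.comp ((hθ1.sub measurable_const).const_mul r1)).mul
          (Real.measurable_sin.comp ((hθ2.sub measurable_const).const_mul r2)))
      intro ω
      rw [Pi.mul_apply, abs_mul]
      exact mul_le_one₀ (Real.abs_sin_le_one _) (abs_nonneg _) (Real.abs_sin_le_one _)
    have isc : Integrable (fun ω => Real.sin (r1 * (θ1 ω - μ1)) * Real.cos (r2 * (θ2 ω - μ2))) μ := by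
      apply int_of_bdd μ _
        ((Real.measurable_sin.comp ((hθ1.sub measurable_const).const_mul r1)).mul
          (Real.measurable_cos.comp ((hθ2.sub measurable_const).const_mul r2)))
      intro ω
      rw [Pi.mul_apply, abs_mul]
      exact mul_le_one₀ (Real.abs_sin_le_one _) (abs_nonneg _) (Real.abs_cos_le_one _)
    have ics : Integrable (fun ω => Real.cos (r1 * (θ1 ω - μ1)) * Real.sin (r2 * (θ2 ω - μ2))) μ := by
      apply int_of_bdd μ _
        ((Real.measurable_cos.comp ((hθ1.sub measurable_const).const_mul r1)).mul
          (Real.measurable_sin.comp ((hθ2.sub measurable_const).const_mul r2)))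
      intro ω
      rw [Pi.mul_apply, abs_mul]
      exact mul_le_one₀ (Real.abs_cos_le_one _) (abs_nonneg _) (Real.abs_sin_le_one _)
    -- cos of sum identity in expectation
    have hEcs_eq : Ecs = Ec1 * Ec2 - Es1 * Es2 := by
      have hpt : (fun ω => gcs (θ1 ω, θ2 ω))
          = fun ω => Real.cos (r1 * (θ1 ω - μ1)) * Real.cos (r2 * (θ2 ω - μ2))
            - Real.sin (r1 * (θ1 ω - μ1)) * Real.sin (r2 * (θ2 ω - μ2)) := by
        funext ω
        exact Real.cos_add _ _
      rw [hEcs, hpt, integral_sub icc iss]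
      have hCC : (∫ a, Real.cos (r1 * (θ1 a - μ1)) * Real.cos (r2 * (θ2 a - μ2)) ∂μ)
          = (∫ a, Real.cos (r1 * (θ1 a - μ1)) ∂μ) * (∫ a, Real.cos (r2 * (θ2 a - μ2)) ∂μ) :=
        hindC.integral_mul_eq_mul_integral ic1.aestronglyMeasurable ic2.aestronglyMeasurable
      have hSS : (∫ a, Real.sin (r1 * (θ1 a - μ1)) * Real.sin (r2 * (θ2 a - μ2)) ∂μ)
          = (∫ a, Real.sin (r1 * (θ1 a - μ1)) ∂μ) * (∫ a, Real.sin (r2 * (θ2 a - μ2)) ∂μ) :=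
        hindS.integral_mul_eq_mul_integral is1.aestronglyMeasurable is2.aestronglyMeasurable
      rw [hCC, hSS]
    have hEss_eq : Ess = Es1 * Ec2 + Ec1 * Es2 := by
      have hpt : (fun ω => gss (θ1 ω, θ2 ω))
          = fun ω => Real.sin (r1 * (θ1 ω - μ1)) * Real.cos (r2 * (θ2 ω - μ2))
            + Real.cos (r1 * (θ1 ω - μ1)) * Real.sin (r2 * (θ2 ω - μ2)) := by
        funext ω
        exact Real.sin_add _ _
      rw [hEss, hpt, integral_add isc ics]
      have hSC : (∫ a, Real.sin (r1 * (θ1 a - μ1)) * Real.cos (r2 * (θ2 a - μ2)) ∂μ)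
          = (∫ a, Real.sin (r1 * (θ1 a - μ1)) ∂μ) * (∫ a, Real.cos (r2 * (θ2 a - μ2)) ∂μ) :=
        hindSC.integral_mul_eq_mul_integral is1.aestronglyMeasurable ic2.aestronglyMeasurable
      have hCS : (∫ a, Real.cos (r1 * (θ1 a - μ1)) * Real.sin (r2 * (θ2 a - μ2)) ∂μ)
          = (∫ a, Real.cos (r1 * (θ1 a - μ1)) ∂μ) * (∫ a, Real.sin (r2 * (θ2 a - μ2)) ∂μ) :=
        hindCS.integral_mul_eq_mul_integral ic1.aestronglyMeasurable is2.aestronglyMeasurable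
      rw [hSC, hCS]
    -- apply the SLLN six times
    have Tcs := avg_tendsto μ Θ hΘmeas hiid θ1 θ2 hident gcs hmcs hbcs
    have Tss := avg_tendsto μ Θ hΘmeas hiid θ1 θ2 hident gss hmss hbss
    have Tc1 := avg_tendsto μ Θ hΘmeas hiid θ1 θ2 hident gc1 hmc1 hbc1
    have Ts1 := avg_tendsto μ Θ hΘmeas hiid θ1 θ2 hident gs1 hms1 hbs1
    have Tc2 := avg_tendsto μ Θ hΘmeas hiid θ1 θ2 hident gc2 hmc2 hbc2
    have Ts2 := avg_tendsto μ Θ hΘmeas hiid θ1 θ2 hident gs2 hms2 hbs2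
    filter_upwards [Tcs, Tss, Tc1, Ts1, Tc2, Ts2] with ω hcs hss hc1 hs1 hc2 hs2
    -- convergence of the complex statistic to 0
    have hZconv : Tendsto (fun n =>
        Zc r1 r2 n (fun i => (Θ i ω).1 - μ1) (fun i => (Θ i ω).2 - μ2)) atTop (𝓝 0) := by
      have hzeq : ∀ n : ℕ, Zc r1 r2 n (fun i => (Θ i ω).1 - μ1) (fun i => (Θ i ω).2 - μ2)
          = ((((n : ℝ)⁻¹ * ∑ i ∈ Finset.range n, gcs (Θ i ω) : ℝ) : ℂ)
              + (((n : ℝ)⁻¹ * ∑ i ∈ Finset.range n, gss (Θ i ω) : ℝ) : ℂ) * Complex.I)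
            - ((((n : ℝ)⁻¹ * ∑ i ∈ Finset.range n, gc1 (Θ i ω) : ℝ) : ℂ)
                + (((n : ℝ)⁻¹ * ∑ i ∈ Finset.range n, gs1 (Θ i ω) : ℝ) : ℂ) * Complex.I)
              * ((((n : ℝ)⁻¹ * ∑ i ∈ Finset.range n, gc2 (Θ i ω) : ℝ) : ℂ)
                + (((n : ℝ)⁻¹ * ∑ i ∈ Finset.range n, gs2 (Θ i ω) : ℝ) : ℂ) * Complex.I) := by
        intro n
        exact Zc_eq r1 r2 n _ _
      have hlim : (0 : ℂ) = (((Ecs : ℝ) : ℂ) + ((Ess : ℝ) : ℂ) * Complex.I)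
          - (((Ec1 : ℝ) : ℂ) + ((Es1 : ℝ) : ℂ) * Complex.I)
            * (((Ec2 : ℝ) : ℂ) + ((Es2 : ℝ) : ℂ) * Complex.I) := by
        rw [hEcs_eq, hEss_eq]
        push_cast
        ring_nf
        rw [Complex.I_sq]
        ring
      rw [hlim]
      simp only [hzeq]
      have o : ∀ {u : ℕ → ℝ} {l : ℝ}, Tendsto u atTop (𝓝 l) →
          Tendsto (fun n => ((u n : ℝ) : ℂ)) atTop (𝓝 ((l : ℝ) : ℂ)) :=
        fun h => (Complex.continuous_ofReal.tendsto _).comp h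
      exact (((o hcs).add ((o hss).mul_const _)).sub
        (((o hc1).add ((o hs1).mul_const _)).mul ((o hc2).add ((o hs2).mul_const _))))
    have := (continuous_norm.tendsto 0).comp hZconv
    simpa [hB, Function.comp_def] using this
  -- Step 3': B → 0 in measure
  have hBprob : TendstoInMeasure μ B atTop (fun _ => (0:ℝ)) :=
    tendstoInMeasure_of_tendsto_ae (fun n => (hBmeas n).aestronglyMeasurable) hae
  -- Step 4: G is bounded in probability
  have hGop : ∀ δ : ℝ, 0 < δ → ∃ M : ℝ, 0 < M ∧ ∀ n,
      μ {ω | M < G n ω} < ENNReal.ofReal δ := by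
    intro δ hδ
    obtain ⟨M1, hM1pos, hM1⟩ := hμhat1 (δ/2) (by linarith)
    obtain ⟨M2, hM2pos, hM2⟩ := hμhat2 (δ/2) (by linarith)
    refine ⟨|r1| * M1 + |r2| * M2 + 1, by positivity, fun n => ?_⟩
    have hsub : {ω | |r1| * M1 + |r2| * M2 + 1 < G n ω}
        ⊆ {ω | M1 < |Real.sqrt n * (μhat1 n ω - μ1)|}
          ∪ {ω | M2 < |Real.sqrt n * (μhat2 n ω - μ2)|} := by
      intro ω hω
      simp only [Set.mem_setOf_eq, hG] at hω
      by_contra hcon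
      simp only [Set.mem_union, Set.mem_setOf_eq, not_or, not_lt] at hcon
      obtain ⟨h1, h2⟩ := hcon
      have b1 : |r1 * (Real.sqrt n * (μhat1 n ω - μ1))| ≤ |r1| * M1 := by
        rw [abs_mul]
        exact mul_le_mul_of_nonneg_left h1 (abs_nonneg r1)
      have b2 : |r2 * (Real.sqrt n * (μhat2 n ω - μ2))| ≤ |r2| * M2 := by
        rw [abs_mul]
        exact mul_le_mul_of_nonneg_left h2 (abs_nonneg r2)
      linarith
    calc μ {ω | |r1| * M1 + |r2| * M2 + 1 < G n ω}
        ≤ μ ({ω | M1 < |Real.sqrt n * (μhat1 n ω - μ1)|}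
            ∪ {ω | M2 < |Real.sqrt n * (μhat2 n ω - μ2)|}) := measure_mono hsub
      _ ≤ μ {ω | M1 < |Real.sqrt n * (μhat1 n ω - μ1)|}
            + μ {ω | M2 < |Real.sqrt n * (μhat2 n ω - μ2)|} := measure_union_le _ _
      _ < ENNReal.ofReal (δ/2) + ENNReal.ofReal (δ/2) :=
          ENNReal.add_lt_add (hM1 n) (hM2 n)
      _ = ENNReal.ofReal δ := by
          rw [← ENNReal.ofReal_add (by linarith) (by linarith)]
          norm_num
  -- Step 5: conclude
  rw [tendstoInMeasure_iff_dist]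
  intro ε hε
  rw [ENNReal.tendsto_nhds_zero]
  intro η hη
  -- choose a finite positive δ with ofReal δ ≤ η / 2
  set η' := min η 1 with hη'
  have hη'pos : 0 < η' := lt_min hη one_pos
  have hη'ne : η' ≠ ⊤ := by
    simp [hη']
  set δ := (η' / 2).toReal with hδdef
  have hδpos : 0 < δ := by
    rw [hδdef]
    apply ENNReal.toReal_pos
    · simp [ENNReal.div_eq_top, hη'ne]
      exact fun h => absurd h hη'pos.ne'
    · exact (ENNReal.div_lt_top hη'ne (by norm_num)).ne
  have hδle : ENNReal.ofReal δ ≤ η / 2 := by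
    rw [hδdef, ENNReal.ofReal_toReal (by
      exact (ENNReal.div_lt_top hη'ne (by norm_num)).ne)]
    exact ENNReal.div_le_div_right (min_le_left _ _) 2
  obtain ⟨M, hMpos, hM⟩ := hGop δ hδpos
  have hε2 : (0:ℝ) < ε / (2 * M) := by positivity
  have hBev : ∀ᶠ n in atTop, μ {ω | ε / (2 * M) ≤ dist (B n ω) 0} ≤ η / 2 := by
    have := tendstoInMeasure_iff_dist.mp hBprob (ε / (2 * M)) hε2
    exact (ENNReal.tendsto_nhds_zero.mp this) (η / 2)
      (ENNReal.div_pos hη.ne' (by norm_num))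
  filter_upwards [hBev] with n hn
  have hsub : {ω | ε ≤ dist (f n ω) 0}
      ⊆ {ω | M < G n ω} ∪ {ω | ε / (2 * M) ≤ dist (B n ω) 0} := by
    intro ω hω
    simp only [Set.mem_setOf_eq] at hω
    rw [Real.dist_eq, sub_zero] at hω
    by_contra hcon
    simp only [Set.mem_union, Set.mem_setOf_eq, not_or, not_le, not_lt] at hcon
    obtain ⟨h1, h2⟩ := hcon
    rw [Real.dist_eq, sub_zero] at h2
    have hBnn : 0 ≤ B n ω := norm_nonneg _
    have hBlt : B n ω < ε / (2 * M) := by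
      rwa [abs_of_nonneg hBnn] at h2
    have : |f n ω| ≤ G n ω * B n ω := hbound n ω
    have hGnn : 0 ≤ G n ω := by
      rw [hG]
      positivity
    have : |f n ω| < ε := by
      calc |f n ω| ≤ G n ω * B n ω := hbound n ω
        _ ≤ M * B n ω := mul_le_mul_of_nonneg_right h1 hBnn
        _ < M * (ε / (2 * M)) := by
            exact mul_lt_mul_of_pos_left hBlt hMpos
        _ = ε / 2 := by field_simp
        _ < ε := by linarith
    exact absurd hω (not_le.mpr this)
  calc μ {ω | ε ≤ dist (f n ω) 0}
      ≤ μ ({ω | M < G n ω} ∪ {ω | ε / (2 * M) ≤ dist (B n ω) 0}) := measure_mono hsub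
    _ ≤ μ {ω | M < G n ω} + μ {ω | ε / (2 * M) ≤ dist (B n ω) 0} := measure_union_le _ _
    _ ≤ η / 2 + η / 2 := add_le_add ((hM n).le.trans hδle) hn
    _ = η := ENNReal.add_halves η
end

section
/- Fix (r₁, r₂) ∈ ℝ² and locations μ¹, μ² ∈ ℝ, suppose θ¹ and θ² are independent, and let μ̂ⁿ¹, μ̂ⁿ² be sequences of random variables such that √n(μ̂ⁿ¹ − μ¹) and √n(μ̂ⁿ² − μ²) are O_P(1). Define the centred population moments J_{jc}(r) := E[cos(r(θ^{(j)} − μ^{(j)}))] and J_{js}(r) := E[sin(r(θ^{(j)} − μ^{(j)}))] for j = 1,2. Then, as n → ∞, n^{−1/2} Σ_{i=1}^{n} { cos(r₁(θ¹ᵢ − μ̂ⁿ¹) + r₂(θ²ᵢ − μ̂ⁿ²)) − cos(r₁(θ¹ᵢ − μ¹) + r₂(θ²ᵢ − μ²)) } = ( r₁ √n(μ̂ⁿ¹ − μ¹) + r₂ √n(μ̂ⁿ² − μ²) ) ( J_{1s}(r₁)J_{2c}(r₂) + J_{1c}(r₁)J_{2s}(r₂) ) + o_P(1). -/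
open MeasureTheory ProbabilityTheory Filter Real
open scoped NNReal BigOperators Topology

private lemma exists_ofReal_le {η : ENNReal} (h : 0 < η) :
    ∃ δ : ℝ, 0 < δ ∧ ENNReal.ofReal δ ≤ η := by
  rcases eq_or_ne η ⊤ with rfl | hη
  · exact ⟨1, one_pos, le_top⟩
  · have ht : 0 < η.toReal := ENNReal.toReal_pos h.ne' hη
    exact ⟨η.toReal, ht, le_of_eq (ENNReal.ofReal_toReal hη)⟩

private lemma bip_linear {Ω : Type*} [MeasurableSpace Ω] {μ : Measure Ω}
    {X1 X2 : ℕ → Ω → ℝ} (h1 : BoundedInProbability μ X1)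
    (h2 : BoundedInProbability μ X2) (r1 r2 : ℝ) :
    BoundedInProbability μ (fun n ω => r1 * X1 n ω + r2 * X2 n ω) := by
  intro ε hε
  obtain ⟨M1, hM1, hb1⟩ := h1 (ε / 2) (by positivity)
  obtain ⟨M2, hM2, hb2⟩ := h2 (ε / 2) (by positivity)
  refine ⟨|r1| * M1 + |r2| * M2 + 1, by positivity, fun n => ?_⟩
  have hsub : {ω | |r1| * M1 + |r2| * M2 + 1 < |r1 * X1 n ω + r2 * X2 n ω|} ⊆
      {ω | M1 < |X1 n ω|} ∪ {ω | M2 < |X2 n ω|} := by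
    intro ω hω
    simp only [Set.mem_setOf_eq] at hω
    by_contra hc
    simp only [Set.mem_union, Set.mem_setOf_eq, not_or, not_lt] at hc
    have hle : |r1 * X1 n ω + r2 * X2 n ω| ≤ |r1| * M1 + |r2| * M2 := by
      calc |r1 * X1 n ω + r2 * X2 n ω| ≤ |r1 * X1 n ω| + |r2 * X2 n ω| := abs_add_le _ _
        _ = |r1| * |X1 n ω| + |r2| * |X2 n ω| := by rw [abs_mul, abs_mul]
        _ ≤ |r1| * M1 + |r2| * M2 :=
            add_le_add (mul_le_mul_of_nonneg_left hc.1 (abs_nonneg _))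
              (mul_le_mul_of_nonneg_left hc.2 (abs_nonneg _))
    linarith
  calc μ {ω | |r1| * M1 + |r2| * M2 + 1 < |r1 * X1 n ω + r2 * X2 n ω|}
      ≤ μ ({ω | M1 < |X1 n ω|} ∪ {ω | M2 < |X2 n ω|}) := measure_mono hsub
    _ ≤ μ {ω | M1 < |X1 n ω|} + μ {ω | M2 < |X2 n ω|} := measure_union_le _ _
    _ < ENNReal.ofReal (ε / 2) + ENNReal.ofReal (ε / 2) := ENNReal.add_lt_add (hb1 n) (hb2 n)
    _ = ENNReal.ofReal ε := by
        rw [← ENNReal.ofReal_add (by positivity) (by positivity)]; norm_num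

private lemma tendsto_measure_zero_of_bip {Ω : Type*} [MeasurableSpace Ω] {μ : Measure Ω}
    {Z : ℕ → Ω → ℝ} (hZ : BoundedInProbability μ Z) (s : ℕ → Set Ω)
    (h : ∀ M : ℝ, 0 < M → ∀ᶠ n in atTop, s n ⊆ {ω | M < |Z n ω|}) :
    Tendsto (fun n => μ (s n)) atTop (𝓝 0) := by
  rw [ENNReal.tendsto_nhds_zero]
  intro η hη
  obtain ⟨δ, hδ, hδη⟩ := exists_ofReal_le hη
  obtain ⟨M, hM, hMb⟩ := hZ δ hδ
  filter_upwards [h M hM] with n hn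
  exact le_trans (measure_mono hn) (le_trans (hMb n).le hδη)

private lemma tendstoInMeasure_add_zero {Ω : Type*} [MeasurableSpace Ω] {μ : Measure Ω}
    {f g : ℕ → Ω → ℝ} (hf : TendstoInMeasure μ f atTop (fun _ => (0 : ℝ)))
    (hg : TendstoInMeasure μ g atTop (fun _ => (0 : ℝ))) :
    TendstoInMeasure μ (fun n ω => f n ω + g n ω) atTop (fun _ => (0 : ℝ)) := by
  rw [tendstoInMeasure_iff_dist] at hf hg ⊢
  intro ε hε
  have h1 := hf (ε / 2) (by positivity)
  have h2 := hg (ε / 2) (by positivity)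
  have hle : ∀ n, μ {x | ε ≤ dist (f n x + g n x) ((fun _ => (0:ℝ)) x)} ≤
      μ {x | ε / 2 ≤ dist (f n x) ((fun _ => (0:ℝ)) x)}
        + μ {x | ε / 2 ≤ dist (g n x) ((fun _ => (0:ℝ)) x)} := by
    intro n
    refine le_trans (measure_mono ?_) (measure_union_le _ _)
    intro x hx
    simp only [Set.mem_setOf_eq, dist_zero_right, Real.norm_eq_abs] at hx
    by_contra hc
    simp only [Set.mem_union, Set.mem_setOf_eq, dist_zero_right, Real.norm_eq_abs,
      not_or, not_le] at hc
    have := abs_add_le (f n x) (g n x)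
    linarith
  have hlim : Tendsto (fun n => μ {x | ε / 2 ≤ dist (f n x) ((fun _ => (0:ℝ)) x)}
      + μ {x | ε / 2 ≤ dist (g n x) ((fun _ => (0:ℝ)) x)}) atTop (𝓝 0) := by
    simpa using h1.add h2
  exact tendsto_of_tendsto_of_tendsto_of_le_of_le tendsto_const_nhds hlim
    (fun n => zero_le) hle

private lemma bip_mul_tendstoInMeasure {Ω : Type*} [MeasurableSpace Ω] {μ : Measure Ω}
    {Z W : ℕ → Ω → ℝ} (hZ : BoundedInProbability μ Z)
    (hW : TendstoInMeasure μ W atTop (fun _ => (0 : ℝ))) :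
    TendstoInMeasure μ (fun n ω => Z n ω * W n ω) atTop (fun _ => (0 : ℝ)) := by
  rw [tendstoInMeasure_iff_dist] at hW ⊢
  intro ε hε
  rw [ENNReal.tendsto_nhds_zero]
  intro η hη
  obtain ⟨δ, hδ, hδη⟩ := exists_ofReal_le (ENNReal.half_pos hη.ne')
  obtain ⟨M, hM, hMb⟩ := hZ δ hδ
  have h2 : ∀ᶠ n in atTop, μ {x | ε / M ≤ dist (W n x) ((fun _ => (0:ℝ)) x)} ≤ η / 2 :=
    (ENNReal.tendsto_nhds_zero.1 (hW (ε / M) (by positivity))) (η / 2)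
      (ENNReal.half_pos hη.ne')
  filter_upwards [h2] with n hn
  have hsub : {x | ε ≤ dist (Z n x * W n x) ((fun _ => (0:ℝ)) x)} ⊆
      {ω | M < |Z n ω|} ∪ {x | ε / M ≤ dist (W n x) ((fun _ => (0:ℝ)) x)} := by
    intro x hx
    simp only [Set.mem_setOf_eq, dist_zero_right, Real.norm_eq_abs] at hx
    by_contra hc
    simp only [Set.mem_union, Set.mem_setOf_eq, dist_zero_right, Real.norm_eq_abs,
      not_or, not_lt, not_le] at hc
    have hb : |Z n x * W n x| ≤ M * |W n x| := by
      rw [abs_mul]; exact mul_le_mul_of_nonneg_right hc.1 (abs_nonneg _)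
    have hb2 : M * |W n x| < M * (ε / M) := by
      exact (mul_lt_mul_iff_right₀ hM).2 hc.2
    rw [mul_div_cancel₀ _ hM.ne'] at hb2
    linarith
  calc μ {x | ε ≤ dist (Z n x * W n x) ((fun _ => (0:ℝ)) x)}
      ≤ μ {ω | M < |Z n ω|} + μ {x | ε / M ≤ dist (W n x) ((fun _ => (0:ℝ)) x)} :=
        le_trans (measure_mono hsub) (measure_union_le _ _)
    _ ≤ η / 2 + η / 2 := add_le_add (le_trans (hMb n).le hδη) hn
    _ = η := ENNReal.add_halves η

private lemma trig_cos_bound {x : ℝ} (hx : |x| ≤ 1) : |Real.cos x - 1| ≤ x ^ 2 := by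
  have hb := Real.cos_bound hx
  have hd2 : x ^ 2 ≤ 1 := by nlinarith [abs_nonneg x, abs_mul_abs_self x]
  have h44 : |x| ^ 4 = (x ^ 2) ^ 2 := by rw [show (4:ℕ) = 2 * 2 from rfl, pow_mul, sq_abs]
  have h4 : |x| ^ 4 ≤ x ^ 2 := by rw [h44]; nlinarith [sq_nonneg x]
  calc |Real.cos x - 1|
      = |(Real.cos x - (1 - x ^ 2 / 2)) + (-(x ^ 2 / 2))| := by congr 1; ring
    _ ≤ |Real.cos x - (1 - x ^ 2 / 2)| + |(-(x ^ 2 / 2))| := abs_add_le _ _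
    _ ≤ |x| ^ 4 * (5 / 96) + x ^ 2 / 2 := by
        rw [abs_neg, abs_of_nonneg (by positivity : (0:ℝ) ≤ x ^ 2 / 2)]
        exact add_le_add hb le_rfl
    _ ≤ x ^ 2 := by linarith [sq_nonneg x]

private lemma trig_sin_bound {x : ℝ} (hx : |x| ≤ 1) : |Real.sin x - x| ≤ x ^ 2 := by
  have hb := Real.sin_bound hx
  have hd2 : x ^ 2 ≤ 1 := by nlinarith [abs_nonneg x, abs_mul_abs_self x]
  have h44 : |x| ^ 4 = (x ^ 2) ^ 2 := by rw [show (4:ℕ) = 2 * 2 from rfl, pow_mul, sq_abs]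
  have h4 : |x| ^ 4 ≤ x ^ 2 := by rw [h44]; nlinarith [sq_nonneg x]
  have h33 : |x| ^ 3 = x ^ 2 * |x| := by rw [show (3:ℕ) = 2 + 1 from rfl, pow_succ, sq_abs]
  have h3 : |x| ^ 3 ≤ x ^ 2 := by
    rw [h33]; nlinarith [sq_nonneg x, abs_nonneg x]
  have habs3 : |(-(x ^ 3 / 6))| = |x| ^ 3 / 6 := by
    rw [abs_neg, abs_div, abs_pow]; norm_num
  calc |Real.sin x - x|
      = |(Real.sin x - (x - x ^ 3 / 6)) + (-(x ^ 3 / 6))| := by congr 1; ring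
    _ ≤ |Real.sin x - (x - x ^ 3 / 6)| + |(-(x ^ 3 / 6))| := abs_add_le _ _
    _ ≤ |x| ^ 4 * (5 / 96) + |x| ^ 3 / 6 := by rw [habs3]; exact add_le_add (hb.trans (by nlinarith [pow_le_pow_of_le_one (abs_nonneg x) hx (show 4 ≤ 5 by norm_num), pow_nonneg (abs_nonneg x) 4])) le_rfl
    _ ≤ x ^ 2 := by linarith [sq_nonneg x]

/-- Lemma 3: asymptotic expansion of the normalized sum of differences of cosines of the
estimator-centred sample around the `μ`-centred sample, under independence. -/
theorem centred_empirical_joint_cosine_expansion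
    {Ω : Type*} [MeasurableSpace Ω] (μ : Measure Ω) [IsProbabilityMeasure μ]
    (θ1 θ2 : Ω → ℝ) (hθ1 : Measurable θ1) (hθ2 : Measurable θ2)
    (hindep : IndepFun θ1 θ2 μ)
    (Θ : ℕ → Ω → ℝ × ℝ) (hΘmeas : ∀ i, Measurable (Θ i))
    (hiid : iIndepFun Θ μ)
    (hident : ∀ i, IdentDistrib (Θ i) (fun ω => (θ1 ω, θ2 ω)) μ μ)
    (r1 r2 : ℝ) (μ1 μ2 : ℝ)
    (μhat1 μhat2 : ℕ → Ω → ℝ)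
    (hμhat1meas : ∀ n, Measurable (μhat1 n)) (hμhat2meas : ∀ n, Measurable (μhat2 n))
    (hμhat1 : BoundedInProbability μ (fun n ω => Real.sqrt n * (μhat1 n ω - μ1)))
    (hμhat2 : BoundedInProbability μ (fun n ω => Real.sqrt n * (μhat2 n ω - μ2))) :
    TendstoInMeasure μ
      (fun (n : ℕ) ω =>
        (Real.sqrt n)⁻¹ * ∑ i ∈ Finset.range n,
            (Real.cos (r1 * ((Θ i ω).1 - μhat1 n ω) + r2 * ((Θ i ω).2 - μhat2 n ω))
              - Real.cos (r1 * ((Θ i ω).1 - μ1) + r2 * ((Θ i ω).2 - μ2)))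
          - (r1 * (Real.sqrt n * (μhat1 n ω - μ1))
                + r2 * (Real.sqrt n * (μhat2 n ω - μ2)))
              * ((∫ ω', Real.sin (r1 * (θ1 ω' - μ1)) ∂μ)
                    * (∫ ω', Real.cos (r2 * (θ2 ω' - μ2)) ∂μ)
                  + (∫ ω', Real.cos (r1 * (θ1 ω' - μ1)) ∂μ)
                    * (∫ ω', Real.sin (r2 * (θ2 ω' - μ2)) ∂μ)))
      atTop (fun _ => (0 : ℝ)) := by
  set S : ℝ := (∫ ω', Real.sin (r1 * (θ1 ω' - μ1)) ∂μ)
      * (∫ ω', Real.cos (r2 * (θ2 ω' - μ2)) ∂μ)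
      + (∫ ω', Real.cos (r1 * (θ1 ω' - μ1)) ∂μ)
      * (∫ ω', Real.sin (r2 * (θ2 ω' - μ2)) ∂μ) with hS
  set g : ℝ × ℝ → ℝ := fun p => Real.sin (r1 * (p.1 - μ1) + r2 * (p.2 - μ2)) with hgdef
  have hg : Measurable g := by
    apply Real.measurable_sin.comp
    exact ((measurable_fst.sub measurable_const).const_mul r1).add
      ((measurable_snd.sub measurable_const).const_mul r2)
  set X : ℕ → Ω → ℝ := fun i => g ∘ Θ i with hXdef
  have hXmeas : ∀ i, Measurable (X i) := fun i => hg.comp (hΘmeas i)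
  set d : ℕ → Ω → ℝ := fun n ω => r1 * (μhat1 n ω - μ1) + r2 * (μhat2 n ω - μ2) with hddef
  set Z : ℕ → Ω → ℝ := fun n ω => r1 * (Real.sqrt n * (μhat1 n ω - μ1))
      + r2 * (Real.sqrt n * (μhat2 n ω - μ2)) with hZdef
  have hZ : BoundedInProbability μ Z := bip_linear hμhat1 hμhat2 r1 r2
  -- strong law of large numbers for `X`
  have hXint : Integrable (X 0) μ := by
    refine (integrable_const (1 : ℝ)).mono' (hXmeas 0).aestronglyMeasurable ?_
    refine Filter.Eventually.of_forall fun ω => ?_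
    simp only [Real.norm_eq_abs, hXdef, hgdef, Function.comp_apply]
    exact Real.abs_sin_le_one _
  have hXindep : Pairwise (Function.onFun (IndepFun · · μ) X) := fun i j hij =>
    (hiid.comp (fun _ => g) (fun _ => hg)).indepFun hij
  have hXident : ∀ i, IdentDistrib (X i) (X 0) μ μ := fun i =>
    ((hident i).trans (hident 0).symm).comp hg
  have hslln := strong_law_ae_real X hXint hXindep hXident
  -- the mean is `S`
  have hES : (∫ ω, X 0 ω ∂μ) = S := by
    have h0 : (∫ ω, X 0 ω ∂μ) = ∫ ω, g (θ1 ω, θ2 ω) ∂μ := by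
      exact ((hident 0).comp hg).integral_eq
    rw [h0]
    have hA : Measurable fun ω => Real.sin (r1 * (θ1 ω - μ1)) :=
      Real.measurable_sin.comp ((hθ1.sub measurable_const).const_mul r1)
    have hB : Measurable fun ω => Real.cos (r2 * (θ2 ω - μ2)) :=
      Real.measurable_cos.comp ((hθ2.sub measurable_const).const_mul r2)
    have hC : Measurable fun ω => Real.cos (r1 * (θ1 ω - μ1)) :=
      Real.measurable_cos.comp ((hθ1.sub measurable_const).const_mul r1)
    have hD : Measurable fun ω => Real.sin (r2 * (θ2 ω - μ2)) :=
      Real.measurable_sin.comp ((hθ2.sub measurable_const).const_mul r2)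
    have key : ∀ ω, g (θ1 ω, θ2 ω)
        = Real.sin (r1 * (θ1 ω - μ1)) * Real.cos (r2 * (θ2 ω - μ2))
          + Real.cos (r1 * (θ1 ω - μ1)) * Real.sin (r2 * (θ2 ω - μ2)) := fun ω =>
      Real.sin_add _ _
    have hint1 : Integrable (fun ω => Real.sin (r1 * (θ1 ω - μ1))
        * Real.cos (r2 * (θ2 ω - μ2))) μ := by
      refine (integrable_const (1 : ℝ)).mono' (hA.mul hB).aestronglyMeasurable ?_
      refine Filter.Eventually.of_forall fun ω => ?_
      simp only [Real.norm_eq_abs, abs_mul]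
      calc |Real.sin (r1 * (θ1 ω - μ1))| * |Real.cos (r2 * (θ2 ω - μ2))| ≤ 1 * 1 :=
            mul_le_mul (Real.abs_sin_le_one _) (Real.abs_cos_le_one _) (abs_nonneg _) zero_le_one
        _ = 1 := mul_one 1
    have hint2 : Integrable (fun ω => Real.cos (r1 * (θ1 ω - μ1))
        * Real.sin (r2 * (θ2 ω - μ2))) μ := by
      refine (integrable_const (1 : ℝ)).mono' (hC.mul hD).aestronglyMeasurable ?_
      refine Filter.Eventually.of_forall fun ω => ?_
      simp only [Real.norm_eq_abs, abs_mul]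
      calc |Real.cos (r1 * (θ1 ω - μ1))| * |Real.sin (r2 * (θ2 ω - μ2))| ≤ 1 * 1 :=
            mul_le_mul (Real.abs_cos_le_one _) (Real.abs_sin_le_one _) (abs_nonneg _) zero_le_one
        _ = 1 := mul_one 1
    have hAB : IndepFun (fun ω => Real.sin (r1 * (θ1 ω - μ1)))
        (fun ω => Real.cos (r2 * (θ2 ω - μ2))) μ :=
      hindep.comp (Real.measurable_sin.comp ((measurable_id.sub measurable_const).const_mul r1))
        (Real.measurable_cos.comp ((measurable_id.sub measurable_const).const_mul r2))
    have hCD : IndepFun (fun ω => Real.cos (r1 * (θ1 ω - μ1)))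
        (fun ω => Real.sin (r2 * (θ2 ω - μ2))) μ :=
      hindep.comp (Real.measurable_cos.comp ((measurable_id.sub measurable_const).const_mul r1))
        (Real.measurable_sin.comp ((measurable_id.sub measurable_const).const_mul r2))
    calc (∫ ω, g (θ1 ω, θ2 ω) ∂μ)
        = ∫ ω, (Real.sin (r1 * (θ1 ω - μ1)) * Real.cos (r2 * (θ2 ω - μ2))
          + Real.cos (r1 * (θ1 ω - μ1)) * Real.sin (r2 * (θ2 ω - μ2))) ∂μ :=
          integral_congr_ae (Filter.Eventually.of_forall key)
      _ = (∫ ω, Real.sin (r1 * (θ1 ω - μ1)) * Real.cos (r2 * (θ2 ω - μ2)) ∂μ)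
          + ∫ ω, Real.cos (r1 * (θ1 ω - μ1)) * Real.sin (r2 * (θ2 ω - μ2)) ∂μ :=
          integral_add hint1 hint2
      _ = S := by
          rw [hAB.integral_fun_mul_eq_mul_integral hA.aestronglyMeasurable hB.aestronglyMeasurable,
            hCD.integral_fun_mul_eq_mul_integral hC.aestronglyMeasurable hD.aestronglyMeasurable, hS]
  -- convergence in measure of the averaged sum
  set W : ℕ → Ω → ℝ := fun n ω => (∑ i ∈ Finset.range n, X i ω) / n - S with hWdef
  have hW : TendstoInMeasure μ W atTop (fun _ => (0 : ℝ)) := by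
    refine tendstoInMeasure_of_tendsto_ae (fun n => ?_) ?_
    · exact (((Finset.measurable_sum _ fun i _ => hXmeas i).div_const _).sub
        measurable_const).aestronglyMeasurable
    · filter_upwards [hslln] with ω hω
      have h' := hω.sub_const S
      rw [hES, sub_self] at h'
      exact h'
  have hT3 : TendstoInMeasure μ (fun n ω => Z n ω * W n ω) atTop (fun _ => (0 : ℝ)) :=
    bip_mul_tendstoInMeasure hZ hW
  -- the remainder term
  set U : ℕ → Ω → ℝ := fun n ω =>
      (Real.cos (d n ω) - 1) * ((Real.sqrt n)⁻¹
          * ∑ i ∈ Finset.range n, Real.cos (r1 * ((Θ i ω).1 - μ1) + r2 * ((Θ i ω).2 - μ2)))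
        + (Real.sin (d n ω) - d n ω) * ((Real.sqrt n)⁻¹
          * ∑ i ∈ Finset.range n, Real.sin (r1 * ((Θ i ω).1 - μ1) + r2 * ((Θ i ω).2 - μ2)))
      with hUdef
  have hU : TendstoInMeasure μ U atTop (fun _ => (0 : ℝ)) := by
    rw [tendstoInMeasure_iff_dist]
    intro ε hε
    refine tendsto_measure_zero_of_bip hZ _ fun M hM => ?_
    set K : ℝ := max M (2 * M ^ 2 / ε) with hK
    have hKM : M ≤ K := le_max_left _ _
    have hKe : 2 * M ^ 2 / ε ≤ K := le_max_right _ _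
    have hKpos : 0 < K := lt_of_lt_of_le hM hKM
    have hev : ∀ᶠ n : ℕ in atTop, K < Real.sqrt n := by
      rw [Filter.eventually_atTop]
      refine ⟨⌈K ^ 2⌉₊ + 1, fun n hn => ?_⟩
      refine Real.lt_sqrt_of_sq_lt ?_
      calc K ^ 2 ≤ (⌈K ^ 2⌉₊ : ℝ) := Nat.le_ceil _
        _ < n := by exact_mod_cast Nat.lt_of_lt_of_le (Nat.lt_succ_self _) hn
    filter_upwards [hev] with n hn
    intro ω hω
    simp only [Set.mem_setOf_eq, dist_zero_right, Real.norm_eq_abs] at hω ⊢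
    by_contra hc
    push_neg at hc
    set s : ℝ := Real.sqrt n with hs
    have hspos : 0 < s := lt_trans hKpos hn
    have hss : s * s = (n : ℝ) := Real.mul_self_sqrt (Nat.cast_nonneg n)
    have hZsd : Z n ω = s * d n ω := by simp only [hZdef, hddef]; ring
    have hds : |d n ω| * s ≤ M := by
      have habs : |Z n ω| = s * |d n ω| := by
        rw [hZsd, abs_mul, abs_of_pos hspos]
      rw [habs] at hc; linarith
    have hMs : M < s := lt_of_le_of_lt hKM hn
    have hd1 : |d n ω| ≤ 1 := by
      have hlt : |d n ω| * s < 1 * s := by linarith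
      exact le_of_lt ((mul_lt_mul_iff_left₀ hspos).1 hlt)
    have hcos : |Real.cos (d n ω) - 1| ≤ (d n ω) ^ 2 := trig_cos_bound hd1
    have hsin : |Real.sin (d n ω) - d n ω| ≤ (d n ω) ^ 2 := trig_sin_bound hd1
    have hsumbound : ∀ F : ℝ → ℝ, (∀ x, |F x| ≤ 1) →
        |(Real.sqrt n)⁻¹ * ∑ i ∈ Finset.range n,
          F (r1 * ((Θ i ω).1 - μ1) + r2 * ((Θ i ω).2 - μ2))| ≤ s := by
      intro F hF
      have h1 : |∑ i ∈ Finset.range n,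
          F (r1 * ((Θ i ω).1 - μ1) + r2 * ((Θ i ω).2 - μ2))| ≤ (n : ℝ) := by
        calc |∑ i ∈ Finset.range n, F (r1 * ((Θ i ω).1 - μ1) + r2 * ((Θ i ω).2 - μ2))|
            ≤ ∑ i ∈ Finset.range n, |F (r1 * ((Θ i ω).1 - μ1) + r2 * ((Θ i ω).2 - μ2))| :=
              Finset.abs_sum_le_sum_abs _ _
          _ ≤ ∑ _i ∈ Finset.range n, (1 : ℝ) := Finset.sum_le_sum fun i _ => hF _
          _ = (n : ℝ) := by simp
      rw [abs_mul, abs_inv, ← hs, abs_of_pos hspos]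
      calc s⁻¹ * |∑ i ∈ Finset.range n, F (r1 * ((Θ i ω).1 - μ1) + r2 * ((Θ i ω).2 - μ2))|
          ≤ s⁻¹ * (n : ℝ) := by gcongr
        _ = s := by rw [← hss]; field_simp
    have hU2 : |U n ω| ≤ 2 * (d n ω) ^ 2 * s := by
      have b1 := hsumbound Real.cos Real.abs_cos_le_one
      have b2 := hsumbound Real.sin Real.abs_sin_le_one
      calc |U n ω| ≤ |Real.cos (d n ω) - 1| * |(Real.sqrt n)⁻¹ * ∑ i ∈ Finset.range n,
            Real.cos (r1 * ((Θ i ω).1 - μ1) + r2 * ((Θ i ω).2 - μ2))|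
          + |Real.sin (d n ω) - d n ω| * |(Real.sqrt n)⁻¹ * ∑ i ∈ Finset.range n,
            Real.sin (r1 * ((Θ i ω).1 - μ1) + r2 * ((Θ i ω).2 - μ2))| := by
            simp only [hUdef]
            exact (abs_add_le _ _).trans (le_of_eq (by rw [abs_mul (Real.cos (d n ω) - 1), abs_mul (Real.sin (d n ω) - d n ω)]))
        _ ≤ (d n ω) ^ 2 * s + (d n ω) ^ 2 * s :=
            add_le_add (mul_le_mul hcos b1 (abs_nonneg _) (sq_nonneg _))
              (mul_le_mul hsin b2 (abs_nonneg _) (sq_nonneg _))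
        _ = 2 * (d n ω) ^ 2 * s := by ring
    have hdd : (d n ω) ^ 2 * s ^ 2 ≤ M ^ 2 := by
      have h1 : (|d n ω| * s) ^ 2 ≤ M ^ 2 :=
        pow_le_pow_left₀ (mul_nonneg (abs_nonneg _) hspos.le) hds 2
      calc (d n ω) ^ 2 * s ^ 2 = (|d n ω| * s) ^ 2 := by rw [mul_pow, sq_abs]
        _ ≤ M ^ 2 := h1
    have h2 : 2 * M ^ 2 ≤ ε * K := by
      rw [div_le_iff₀ hε] at hKe; linarith
    have h4 : ε * K < ε * s := (mul_lt_mul_iff_right₀ hε).2 hn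
    have hfinal : 2 * (d n ω) ^ 2 * s < ε := by
      have h5 : 2 * (d n ω) ^ 2 * s * s < ε * s := by nlinarith
      exact (mul_lt_mul_iff_left₀ hspos).1 h5
    linarith
  -- assemble
  have hsum := tendstoInMeasure_add_zero hU hT3
  have heq : (fun (n : ℕ) ω =>
        (Real.sqrt n)⁻¹ * ∑ i ∈ Finset.range n,
            (Real.cos (r1 * ((Θ i ω).1 - μhat1 n ω) + r2 * ((Θ i ω).2 - μhat2 n ω))
              - Real.cos (r1 * ((Θ i ω).1 - μ1) + r2 * ((Θ i ω).2 - μ2)))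
          - (r1 * (Real.sqrt n * (μhat1 n ω - μ1))
                + r2 * (Real.sqrt n * (μhat2 n ω - μ2))) * S)
      = fun n ω => U n ω + Z n ω * W n ω := by
    funext n ω
    have hss : Real.sqrt n * Real.sqrt n = (n : ℝ) := Real.mul_self_sqrt (Nat.cast_nonneg n)
    have hinv : (Real.sqrt n)⁻¹ = Real.sqrt n / n := by
      have haux : ∀ t : ℝ, t * t = (n : ℝ) → t⁻¹ = t / n := by
        intro t ht
        rcases eq_or_ne t 0 with rfl | h
        · rw [← ht]; simp
        · rw [← ht, div_mul_cancel_left₀ h]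
      exact haux _ hss
    have hterm : ∀ i ∈ Finset.range n,
        Real.cos (r1 * ((Θ i ω).1 - μhat1 n ω) + r2 * ((Θ i ω).2 - μhat2 n ω))
          - Real.cos (r1 * ((Θ i ω).1 - μ1) + r2 * ((Θ i ω).2 - μ2))
        = (Real.cos (d n ω) - 1) * Real.cos (r1 * ((Θ i ω).1 - μ1) + r2 * ((Θ i ω).2 - μ2))
          + Real.sin (d n ω) * Real.sin (r1 * ((Θ i ω).1 - μ1) + r2 * ((Θ i ω).2 - μ2)) := by
      intro i _
      have harg : r1 * ((Θ i ω).1 - μhat1 n ω) + r2 * ((Θ i ω).2 - μhat2 n ω)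
          = (r1 * ((Θ i ω).1 - μ1) + r2 * ((Θ i ω).2 - μ2)) - d n ω := by
        simp only [hddef]; ring
      rw [harg, Real.cos_sub]; ring
    rw [Finset.sum_congr rfl hterm, Finset.sum_add_distrib, ← Finset.mul_sum, ← Finset.mul_sum]
    have hXval : ∀ i, X i ω = Real.sin (r1 * ((Θ i ω).1 - μ1) + r2 * ((Θ i ω).2 - μ2)) := by
      intro i; simp only [hXdef, hgdef, Function.comp_apply]
    simp only [hUdef, hWdef, hZdef, hXval]
    rw [hinv]
    ring
  rw [heq]
  exact hsum
end

section
/- Let w : ℤ² → [0,∞) satisfy Σ_{(r₁,r₂)∈ℤ²} w(r₁,r₂) < ∞. Then, for any pair of real-valued random variables (θ¹, θ²) and an i.i.d. sample (θ¹ᵢ, θ²ᵢ), i = 1,…,n, from it, T_{n,w}/n converges almost surely, as n → ∞, to 𝒯_w := Σ_{(r₁,r₂)∈ℤ²} |φ(r₁,r₂) − φ₁(r₁)φ₂(r₂)|² w(r₁,r₂). -/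
open MeasureTheory ProbabilityTheory Filter Real
open scoped BigOperators Topology

/-- The empirical characteristic function difference
`D^{(n)}(r₁,r₂) = φ̂(r₁,r₂) − φ̂₁(r₁)φ̂₂(r₂)` computed from the sample `(a j, b j)`, `j < n`. -/
noncomputable def ecfD (n : ℕ) (a b : ℕ → ℝ) (r : ℤ × ℤ) : ℂ :=
  (n : ℂ)⁻¹ * ∑ j ∈ Finset.range n, Complex.exp (Complex.I * (((r.1 : ℝ) * a j + (r.2 : ℝ) * b j : ℝ) : ℂ))
    - ((n : ℂ)⁻¹ * ∑ j ∈ Finset.range n, Complex.exp (Complex.I * (((r.1 : ℝ) * a j : ℝ) : ℂ)))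
        * ((n : ℂ)⁻¹ * ∑ j ∈ Finset.range n, Complex.exp (Complex.I * (((r.2 : ℝ) * b j : ℝ) : ℂ)))

lemma avg_norm_le (n : ℕ) (c : ℕ → ℂ) (hc : ∀ j, ‖c j‖ ≤ 1) :
    ‖(n : ℂ)⁻¹ * ∑ j ∈ Finset.range n, c j‖ ≤ 1 := by
  rcases Nat.eq_zero_or_pos n with h | h
  · simp [h]
  rw [norm_mul, norm_inv]
  have h1 : ‖∑ j ∈ Finset.range n, c j‖ ≤ (n : ℝ) := by
    calc ‖∑ j ∈ Finset.range n, c j‖ ≤ ∑ j ∈ Finset.range n, ‖c j‖ := norm_sum_le _ _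
      _ ≤ ∑ _j ∈ Finset.range n, (1 : ℝ) := Finset.sum_le_sum fun j _ => hc j
      _ = (n : ℝ) := by simp
  have h2 : ‖(n : ℂ)‖ = (n : ℝ) := by simp
  rw [h2]
  calc ((n : ℝ))⁻¹ * ‖∑ j ∈ Finset.range n, c j‖ ≤ ((n : ℝ))⁻¹ * (n : ℝ) := by
        gcongr
    _ = 1 := by
        rw [inv_mul_cancel₀]
        exact_mod_cast h.ne'

lemma norm_exp_I_mul_real (x : ℝ) : ‖Complex.exp (Complex.I * (x : ℂ))‖ = 1 := by
  rw [Complex.norm_exp]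
  simp [Complex.mul_re]

lemma ecfD_norm_le (n : ℕ) (a b : ℕ → ℝ) (r : ℤ × ℤ) : ‖ecfD n a b r‖ ≤ 2 := by
  have h1 := avg_norm_le n (fun j => Complex.exp (Complex.I * (((r.1 : ℝ) * a j + (r.2 : ℝ) * b j : ℝ) : ℂ)))
    (fun j => le_of_eq (norm_exp_I_mul_real _))
  have h2 := avg_norm_le n (fun j => Complex.exp (Complex.I * (((r.1 : ℝ) * a j : ℝ) : ℂ)))
    (fun j => le_of_eq (norm_exp_I_mul_real _))
  have h3 := avg_norm_le n (fun j => Complex.exp (Complex.I * (((r.2 : ℝ) * b j : ℝ) : ℂ)))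
    (fun j => le_of_eq (norm_exp_I_mul_real _))
  calc ‖ecfD n a b r‖ ≤ ‖(n : ℂ)⁻¹ * ∑ j ∈ Finset.range n, Complex.exp (Complex.I * (((r.1 : ℝ) * a j + (r.2 : ℝ) * b j : ℝ) : ℂ))‖
        + ‖((n : ℂ)⁻¹ * ∑ j ∈ Finset.range n, Complex.exp (Complex.I * (((r.1 : ℝ) * a j : ℝ) : ℂ)))
          * ((n : ℂ)⁻¹ * ∑ j ∈ Finset.range n, Complex.exp (Complex.I * (((r.2 : ℝ) * b j : ℝ) : ℂ)))‖ :=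
        norm_sub_le _ _
    _ ≤ 1 + 1 * 1 := by
        refine add_le_add h1 ?_
        rw [norm_mul]
        exact mul_le_mul h2 h3 (norm_nonneg _) zero_le_one
    _ = 2 := by norm_num

lemma avg_tendsto_ae {Ω : Type*} [MeasurableSpace Ω] (μ : Measure Ω) [IsProbabilityMeasure μ]
    (θ1 θ2 : Ω → ℝ)
    (Θ : ℕ → Ω → ℝ × ℝ) (hΘmeas : ∀ i, Measurable (Θ i))
    (hiid : iIndepFun Θ μ)
    (hident : ∀ i, IdentDistrib (Θ i) (fun ω => (θ1 ω, θ2 ω)) μ μ)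
    (φ : ℝ × ℝ → ℂ) (hφ : Measurable φ) (hb : ∀ p, ‖φ p‖ ≤ 1) :
    ∀ᵐ ω ∂μ, Tendsto (fun n : ℕ => (n : ℂ)⁻¹ * ∑ j ∈ Finset.range n, φ (Θ j ω)) atTop
      (𝓝 (∫ ω', φ (θ1 ω', θ2 ω') ∂μ)) := by
  set X : ℕ → Ω → ℂ := fun i ω => φ (Θ i ω) with hX
  have hXm : ∀ i, Measurable (X i) := fun i => hφ.comp (hΘmeas i)
  have hident' : ∀ i, IdentDistrib (X i) (X 0) μ μ := fun i =>
    ((hident i).trans (hident 0).symm).comp hφ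
  have hint : Integrable (X 0) μ := by
    refine (integrable_const (1 : ℝ)).mono' (hXm 0).aestronglyMeasurable ?_
    exact ae_of_all _ fun ω => by simpa using hb _
  have hindep : Pairwise (Function.onFun (IndepFun · · μ) X) := fun i j hij =>
    (hiid.indepFun hij).comp hφ hφ
  have hsl := strong_law_ae X hint hindep hident'
  have heq : (μ[X 0]) = ∫ ω', φ (θ1 ω', θ2 ω') ∂μ := ((hident 0).comp hφ).integral_eq
  filter_upwards [hsl] with ω hω
  rw [heq] at hω
  convert hω using 2 with n
  rw [← Complex.ofReal_natCast, ← Complex.ofReal_inv, Complex.real_smul]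

/-- Proposition 4 (first part): almost sure convergence of `T_{n,w}/n` to
`𝒯_w = Σ_{(r₁,r₂)∈ℤ²} |φ(r₁,r₂) − φ₁(r₁)φ₂(r₂)|² w(r₁,r₂)`. -/
theorem Tnw_div_n_tendsto_ae
    {Ω : Type*} [MeasurableSpace Ω] (μ : Measure Ω) [IsProbabilityMeasure μ]
    (θ1 θ2 : Ω → ℝ) (hθ1 : Measurable θ1) (hθ2 : Measurable θ2)
    (Θ : ℕ → Ω → ℝ × ℝ) (hΘmeas : ∀ i, Measurable (Θ i))
    (hiid : iIndepFun Θ μ)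
    (hident : ∀ i, IdentDistrib (Θ i) (fun ω => (θ1 ω, θ2 ω)) μ μ)
    (w : ℤ × ℤ → ℝ) (hw : ∀ r, 0 ≤ w r) (hsum : Summable w) :
    ∀ᵐ ω ∂μ, Tendsto
      (fun n : ℕ =>
        ((n : ℝ) * ∑' r : ℤ × ℤ,
            ‖ecfD n (fun i => (Θ i ω).1) (fun i => (Θ i ω).2) r‖ ^ 2 * w r) / (n : ℝ))
      atTop
      (𝓝 (∑' r : ℤ × ℤ,
        ‖(∫ ω', Complex.exp (Complex.I * (((r.1 : ℝ) * θ1 ω' + (r.2 : ℝ) * θ2 ω' : ℝ) : ℂ)) ∂μ)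
          - (∫ ω', Complex.exp (Complex.I * (((r.1 : ℝ) * θ1 ω' : ℝ) : ℂ)) ∂μ)
            * (∫ ω', Complex.exp (Complex.I * (((r.2 : ℝ) * θ2 ω' : ℝ) : ℂ)) ∂μ)‖ ^ 2 * w r)) := by
  -- the three families of test functions
  have hmJ : ∀ r : ℤ × ℤ, Measurable (fun p : ℝ × ℝ =>
      Complex.exp (Complex.I * (((r.1 : ℝ) * p.1 + (r.2 : ℝ) * p.2 : ℝ) : ℂ))) := fun r =>
    Complex.measurable_exp.comp (measurable_const.mul (Complex.measurable_ofReal.comp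
      ((measurable_const.mul measurable_fst).add (measurable_const.mul measurable_snd))))
  have hm1 : ∀ r : ℤ × ℤ, Measurable (fun p : ℝ × ℝ =>
      Complex.exp (Complex.I * (((r.1 : ℝ) * p.1 : ℝ) : ℂ))) := fun r =>
    Complex.measurable_exp.comp (measurable_const.mul (Complex.measurable_ofReal.comp
      (measurable_const.mul measurable_fst)))
  have hm2 : ∀ r : ℤ × ℤ, Measurable (fun p : ℝ × ℝ =>
      Complex.exp (Complex.I * (((r.2 : ℝ) * p.2 : ℝ) : ℂ))) := fun r =>
    Complex.measurable_exp.comp (measurable_const.mul (Complex.measurable_ofReal.comp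
      (measurable_const.mul measurable_snd)))
  have hkey : ∀ᵐ ω ∂μ, ∀ r : ℤ × ℤ,
      (Tendsto (fun n : ℕ => (n : ℂ)⁻¹ * ∑ j ∈ Finset.range n,
          Complex.exp (Complex.I * (((r.1 : ℝ) * (Θ j ω).1 + (r.2 : ℝ) * (Θ j ω).2 : ℝ) : ℂ))) atTop
        (𝓝 (∫ ω', Complex.exp (Complex.I * (((r.1 : ℝ) * θ1 ω' + (r.2 : ℝ) * θ2 ω' : ℝ) : ℂ)) ∂μ)))
      ∧ (Tendsto (fun n : ℕ => (n : ℂ)⁻¹ * ∑ j ∈ Finset.range n,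
          Complex.exp (Complex.I * (((r.1 : ℝ) * (Θ j ω).1 : ℝ) : ℂ))) atTop
        (𝓝 (∫ ω', Complex.exp (Complex.I * (((r.1 : ℝ) * θ1 ω' : ℝ) : ℂ)) ∂μ)))
      ∧ (Tendsto (fun n : ℕ => (n : ℂ)⁻¹ * ∑ j ∈ Finset.range n,
          Complex.exp (Complex.I * (((r.2 : ℝ) * (Θ j ω).2 : ℝ) : ℂ))) atTop
        (𝓝 (∫ ω', Complex.exp (Complex.I * (((r.2 : ℝ) * θ2 ω' : ℝ) : ℂ)) ∂μ))) := by
    rw [ae_all_iff]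
    intro r
    have hJ := avg_tendsto_ae μ θ1 θ2 Θ hΘmeas hiid hident _ (hmJ r)
      (fun p => le_of_eq (norm_exp_I_mul_real _))
    have h1 := avg_tendsto_ae μ θ1 θ2 Θ hΘmeas hiid hident _ (hm1 r)
      (fun p => le_of_eq (norm_exp_I_mul_real _))
    have h2 := avg_tendsto_ae μ θ1 θ2 Θ hΘmeas hiid hident _ (hm2 r)
      (fun p => le_of_eq (norm_exp_I_mul_real _))
    filter_upwards [hJ, h1, h2] with ω hωJ hω1 hω2
    exact ⟨hωJ, hω1, hω2⟩
  filter_upwards [hkey] with ω hω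
  set a : ℕ → ℝ := fun i => (Θ i ω).1
  set b : ℕ → ℝ := fun i => (Θ i ω).2
  -- convergence of the tsum
  have hmain : Tendsto (fun n : ℕ => ∑' r : ℤ × ℤ, ‖ecfD n a b r‖ ^ 2 * w r) atTop
      (𝓝 (∑' r : ℤ × ℤ,
        ‖(∫ ω', Complex.exp (Complex.I * (((r.1 : ℝ) * θ1 ω' + (r.2 : ℝ) * θ2 ω' : ℝ) : ℂ)) ∂μ)
          - (∫ ω', Complex.exp (Complex.I * (((r.1 : ℝ) * θ1 ω' : ℝ) : ℂ)) ∂μ)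
            * (∫ ω', Complex.exp (Complex.I * (((r.2 : ℝ) * θ2 ω' : ℝ) : ℂ)) ∂μ)‖ ^ 2 * w r)) := by
    refine tendsto_tsum_of_dominated_convergence (bound := fun r => 4 * w r)
      (hsum.mul_left 4) ?_ ?_
    · intro r
      obtain ⟨hJ, h1, h2⟩ := hω r
      have hD : Tendsto (fun n : ℕ => ecfD n a b r) atTop
          (𝓝 ((∫ ω', Complex.exp (Complex.I * (((r.1 : ℝ) * θ1 ω' + (r.2 : ℝ) * θ2 ω' : ℝ) : ℂ)) ∂μ)
            - (∫ ω', Complex.exp (Complex.I * (((r.1 : ℝ) * θ1 ω' : ℝ) : ℂ)) ∂μ)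
              * (∫ ω', Complex.exp (Complex.I * (((r.2 : ℝ) * θ2 ω' : ℝ) : ℂ)) ∂μ))) :=
        hJ.sub (h1.mul h2)
      exact ((hD.norm.pow 2).mul_const (w r))
    · filter_upwards with n r
      have h2 : ‖ecfD n a b r‖ ≤ 2 := ecfD_norm_le n a b r
      have hnn : (0 : ℝ) ≤ ‖ecfD n a b r‖ ^ 2 * w r :=
        mul_nonneg (by positivity) (hw r)
      rw [Real.norm_of_nonneg hnn]
      have : ‖ecfD n a b r‖ ^ 2 ≤ 4 := by nlinarith [norm_nonneg (ecfD n a b r)]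
      exact mul_le_mul_of_nonneg_right this (hw r)
  -- rewrite `(n * S n) / n` as `S n` eventually
  refine hmain.congr' ?_
  filter_upwards [eventually_ge_atTop 1] with n hn
  have hn0 : (n : ℝ) ≠ 0 := by positivity
  rw [mul_div_cancel_left₀ _ hn0]
end
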